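/- arXiv:2012.13655 — 4 statements merged into one kernel-verified Lean document; each statement's English description precedes it below -/
import Mathlib

section
/- Let H ≤ F(a,b) be a subgroup of finite index p ≥ 1, and let k, l be the smallest positive integers such that a^k ∈ H and b^l ∈ H. Then there exists a free basis Y of H containing both a^k and b^l. -/
noncomputable section

abbrev F2 := FreeGroup (Fin 2)

def a : F2 := FreeGroup.of 0
def b : F2 := FreeGroup.of 1

/-- An element of a group is primitive if it belongs to some free basis of the group. -/
def Primitive {G : Type*} [Group G] (g : G) : Prop :=
  ∃ (ι : Type) (bas : FreeGroupBasis ι G) (i : ι), bas i = g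

/-- An element of a group is simple if it lies in a proper free factor, i.e. there is a
free product decomposition `G = A ∗ B` with `A`, `B` nontrivial and `g ∈ A`. -/
def SimpleElem {G : Type*} [Group G] (g : G) : Prop :=
  ∃ A B : Subgroup G, A ≠ ⊥ ∧ B ≠ ⊥ ∧ g ∈ A ∧
    Function.Bijective (Monoid.Coprod.lift A.subtype B.subtype)

/-- The primitivity index: the smallest (finite) index of a subgroup `H ≤ F₂` containing `g`
in which `g` is primitive. -/
def dPrim (g : F2) : ℕ :=
  sInf {n : ℕ | 0 < n ∧ ∃ H : Subgroup F2, H.index = n ∧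
    ∃ hg : g ∈ H, Primitive (⟨g, hg⟩ : H)}

/-- The simplicity index: the smallest (finite) index of a subgroup `H ≤ F₂` containing `g`
in which `g` is simple. -/
def dSimp (g : F2) : ℕ :=
  sInf {n : ℕ | 0 < n ∧ ∃ H : Subgroup F2, H.index = n ∧
    ∃ hg : g ∈ H, SimpleElem (⟨g, hg⟩ : H)}

/-- `smallestNonDivisor n` is the smallest integer `d ≥ 2` with `d ∤ n`. -/
def smallestNonDivisor (n : ℕ) : ℕ := sInf {d : ℕ | 2 ≤ d ∧ ¬ d ∣ n}

namespace NSB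

open FreeGroup

variable (H : Subgroup F2)

abbrev C := F2 ⧸ H

def base : C H := QuotientGroup.mk 1

lemma smul_base (g : F2) : g • base H = QuotientGroup.mk g := by
  show g • (QuotientGroup.mk 1 : C H) = _
  rw [MulAction.Quotient.smul_mk]
  simp

lemma smul_base_eq_iff (g : F2) : g • base H = base H ↔ g ∈ H := by
  rw [smul_base]
  show (QuotientGroup.mk g : C H) = QuotientGroup.mk 1 ↔ _
  rw [QuotientGroup.eq]
  simp

def reach (c : C H) : Set ℕ :=
  {m | ∃ L : List (Fin 2 × Bool), FreeGroup.mk L • base H = c ∧ L.length = m}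

lemma reach_nonempty (c : C H) : (reach H c).Nonempty := by
  obtain ⟨g, rfl⟩ := QuotientGroup.mk_surjective c
  exact ⟨g.toWord.length, g.toWord, by rw [mk_toWord, smul_base], rfl⟩

def nn (c : C H) : ℕ := sInf (reach H c)

lemma nn_mem (c : C H) : nn H c ∈ reach H c := Nat.sInf_mem (reach_nonempty H c)

def pick (c : C H) : List (Fin 2 × Bool) := (nn_mem H c).choose

lemma pick_spec (c : C H) :
    FreeGroup.mk (pick H c) • base H = c ∧ (pick H c).length = nn H c :=
  (nn_mem H c).choose_spec

lemma pick_ne_nil {c : C H} (hc : c ≠ base H) : pick H c ≠ [] := by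
  intro h
  apply hc
  have h1 := (pick_spec H c).1
  rw [h, ← one_eq_mk, one_smul] at h1
  exact h1.symm

def lett (c : C H) : F2 := FreeGroup.mk [(pick H c).headI]

lemma nn_lt {c : C H} (hc : c ≠ base H) : nn H ((lett H c)⁻¹ • c) < nn H c := by
  have hs := pick_spec H c
  have hne := pick_ne_nil H hc
  rcases hL : pick H c with _ | ⟨x, t⟩
  · exact absurd hL hne
  rw [hL] at hs
  have hlett : lett H c = FreeGroup.mk [x] := by rw [lett, hL, List.headI_cons]
  have hmem : t.length ∈ reach H ((lett H c)⁻¹ • c) := by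
    refine ⟨t, ?_, rfl⟩
    rw [hlett, ← hs.1, show (x :: t) = [x] ++ t from rfl, ← mul_mk, mul_smul, inv_smul_smul]
  have hle : nn H ((lett H c)⁻¹ • c) ≤ t.length := Nat.sInf_le hmem
  have : t.length < (x :: t).length := by simp
  omega

open Classical in
def wrd (c : C H) : F2 :=
  if h : c = base H then 1
  else lett H c * wrd ((lett H c)⁻¹ • c)
termination_by nn H c
decreasing_by exact nn_lt H h

lemma wrd_base : wrd H (base H) = 1 := by rw [wrd]; simp

lemma wrd_smul (c : C H) : wrd H c • base H = c := by
  suffices h : ∀ m, ∀ c : C H, nn H c < m → wrd H c • base H = c from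
    h (nn H c + 1) c (Nat.lt_succ_self _)
  intro m
  induction m with
  | zero => intro c hc; omega
  | succ m ih =>
    intro c hc
    rw [wrd]
    split_ifs with hb
    · rw [hb, one_smul]
    · rw [mul_smul, ih _ (by have := nn_lt H hb; omega), smul_inv_smul]



def Tr (i : Fin 2) (c : C H) : Prop :=
  wrd H c = FreeGroup.of i * wrd H ((FreeGroup.of i)⁻¹ • c)

def E := {e : Fin 2 × C H // ¬ Tr H e.1 e.2}

abbrev FE := FreeGroup (E H)

open Classical in
def fgen (i : Fin 2) : C H → FE H := fun c =>
  if h : Tr H i c then 1 else FreeGroup.of ⟨(i, c), h⟩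

def permHom : Equiv.Perm (C H) →* MulAut (C H → FE H) where
  toFun σ := MulEquiv.arrowCongr σ (MulEquiv.refl (FE H))
  map_one' := by ext f c; rfl
  map_mul' σ τ := by ext f c; rfl

def act : F2 →* MulAut (C H → FE H) := (permHom H).comp (MulAction.toPermHom F2 (C H))

def Φ : F2 →* (C H → FE H) ⋊[act H] F2 :=
  FreeGroup.lift fun i => ⟨fgen H i, FreeGroup.of i⟩

def Fc (g : F2) : C H → FE H := (Φ H g).left

lemma Φ_right (g : F2) : (Φ H g).right = g := by
  have h : (SemidirectProduct.rightHom.comp (Φ H)) = MonoidHom.id F2 := by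
    apply FreeGroup.ext_hom
    intro i
    simp [Φ, SemidirectProduct.rightHom]
  exact DFunLike.congr_fun h g

lemma Fc_one (c : C H) : Fc H 1 c = 1 := by
  rw [Fc, MonoidHom.map_one]; rfl

lemma Fc_mul (g h : F2) (c : C H) : Fc H (g * h) c = Fc H g c * Fc H h (g⁻¹ • c) := by
  rw [Fc, MonoidHom.map_mul, SemidirectProduct.mul_left, Φ_right]
  rfl

lemma Fc_inv (g : F2) (c : C H) : Fc H g⁻¹ c = (Fc H g (g • c))⁻¹ := by
  have h := Fc_mul H g g⁻¹ (g • c)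
  rw [mul_inv_cancel, Fc_one, inv_smul_smul] at h
  exact (inv_eq_of_mul_eq_one_right h.symm).symm

lemma Fc_of (i : Fin 2) (c : C H) : Fc H (FreeGroup.of i) c = fgen H i c := by
  rw [Fc, Φ, FreeGroup.lift_apply_of]

lemma wrd_Fc (c : C H) : Fc H (wrd H c) c = 1 := by
  suffices h : ∀ m, ∀ c : C H, nn H c < m → Fc H (wrd H c) c = 1 from
    h (nn H c + 1) c (Nat.lt_succ_self _)
  intro m
  induction m with
  | zero => intro c hc; omega
  | succ m ih =>
    intro c hc
    rw [wrd]
    split_ifs with hb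
    · exact Fc_one H c
    · have hrec : wrd H c = lett H c * wrd H ((lett H c)⁻¹ • c) := by
        rw [wrd]; rw [dif_neg hb]
      have hih := ih ((lett H c)⁻¹ • c) (by have := nn_lt H hb; omega)
      rw [Fc_mul, hih, mul_one]
      rcases hx : (pick H c).headI with ⟨i, bb⟩
      have hlett : lett H c = FreeGroup.mk [(i, bb)] := by rw [lett, hx]
      cases bb
      · -- lett = (of i)⁻¹
        have hil : lett H c = (FreeGroup.of i)⁻¹ := by
          rw [hlett, FreeGroup.of, FreeGroup.inv_mk]
          congr 1
        rw [hil, Fc_inv, Fc_of]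
        have htr : Tr H i (FreeGroup.of i • c) := by
          rw [Tr, inv_smul_smul]
          rw [hil, eq_inv_mul_iff_mul_eq, inv_inv] at hrec
          exact hrec.symm
        rw [fgen, dif_pos htr, inv_one]
      · -- lett = of i
        have hil : lett H c = FreeGroup.of i := by rw [hlett]; rfl
        rw [hil, Fc_of]
        have htr : Tr H i c := by
          rw [Tr, ← hil, ← hrec]
        rw [fgen, dif_pos htr]

def phiVal (e : E H) : F2 :=
  (wrd H e.1.2)⁻¹ * (FreeGroup.of e.1.1 * wrd H ((FreeGroup.of e.1.1)⁻¹ • e.1.2))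

lemma phiVal_mem (e : E H) : phiVal H e ∈ H := by
  rw [← smul_base_eq_iff, phiVal, mul_smul, mul_smul, wrd_smul, smul_inv_smul, inv_smul_eq_iff,
    wrd_smul]

def phiF : FE H →* F2 := FreeGroup.lift fun e => phiVal H e

def phiH : FE H →* H := FreeGroup.lift fun e => (⟨phiVal H e, phiVal_mem H e⟩ : H)

lemma phiH_coe (z : FE H) : (phiH H z : F2) = phiF H z := by
  have h : H.subtype.comp (phiH H) = phiF H := by
    apply FreeGroup.ext_hom
    intro e
    simp [phiH, phiF]
  exact DFunLike.congr_fun h z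

def sigH : H →* FE H where
  toFun h := Fc H h (base H)
  map_one' := by
    show Fc H ((1 : H) : F2) (base H) = 1
    rw [OneMemClass.coe_one, Fc_one]
  map_mul' h h' := by
    show Fc H ((h * h' : H) : F2) (base H) = Fc H (h : F2) (base H) * Fc H (h' : F2) (base H)
    rw [Subgroup.coe_mul, Fc_mul]
    have hb : (h : F2)⁻¹ • base H = base H := by
      rw [smul_base_eq_iff]; exact inv_mem h.2
    rw [hb]

lemma sig_phi (e : E H) : sigH H (phiH H (FreeGroup.of e)) = FreeGroup.of e := by
  have h1 : phiH H (FreeGroup.of e) = ⟨phiVal H e, phiVal_mem H e⟩ := by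
    rw [phiH, FreeGroup.lift_apply_of]
  rw [h1]
  show Fc H (phiVal H e) (base H) = _
  obtain ⟨⟨i, c⟩, he⟩ := e
  unfold phiVal
  rw [Fc_mul, Fc_inv]
  have h2 : wrd H c • base H = c := wrd_smul H c
  rw [h2, wrd_Fc, inv_one, one_mul, inv_inv, h2, Fc_mul, Fc_of, wrd_Fc, mul_one, fgen,
    dif_neg he]

lemma phi_Fc (g : F2) : ∀ c : C H, phiF H (Fc H g c) = (wrd H c)⁻¹ * (g * wrd H (g⁻¹ • c)) := by
  induction g using FreeGroup.induction_on with
  | C1 =>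
    intro c
    rw [Fc_one, _root_.map_one, inv_one, one_smul, one_mul, inv_mul_cancel]
  | of i =>
    intro c
    rw [Fc_of, fgen]
    split_ifs with h
    · rw [(phiF H).map_one]
      rw [Tr] at h
      rw [← h, inv_mul_cancel]
    · rw [phiF]
      erw [FreeGroup.lift_apply_of]
      rfl
  | inv_of i ih =>
    intro c
    rw [Fc_inv, _root_.map_inv, ih (FreeGroup.of i • c), inv_smul_smul, inv_inv]
    group
  | mul x y ihx ihy =>
    intro c
    rw [Fc_mul, _root_.map_mul, ihx c, ihy (x⁻¹ • c), mul_inv_rev, mul_smul]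
    group

lemma phi_sig (h : H) : phiH H (sigH H h) = h := by
  apply Subtype.ext
  rw [phiH_coe]
  show phiF H (Fc H (h : F2) (base H)) = (h : F2)
  rw [phi_Fc]
  have h1 : (h : F2)⁻¹ • base H = base H := by
    rw [smul_base_eq_iff]; exact inv_mem h.2
  rw [h1, wrd_base, inv_one, one_mul, mul_one]

lemma sig_phi_id : (sigH H).comp (phiH H) = MonoidHom.id (FE H) := by
  apply FreeGroup.ext_hom
  intro e
  simpa using sig_phi H e

lemma phi_sig_id : (phiH H).comp (sigH H) = MonoidHom.id H := by
  ext h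
  simpa using congrArg Subtype.val (phi_sig H h)

def iso : FE H ≃* H := MonoidHom.toMulEquiv (phiH H) (sigH H) (sig_phi_id H) (phi_sig_id H)

lemma pow_base_ne (i : Fin 2) (k : ℕ) (hmin : ∀ m, 0 < m → (FreeGroup.of i) ^ m ∈ H → k ≤ m)
    {m m' : ℕ} (h1 : 1 ≤ m) (h2 : m < m') (h3 : m' ≤ k) :
    (FreeGroup.of i) ^ m • base H ≠ (FreeGroup.of i) ^ m' • base H := by
  intro hEq
  have h4 : (FreeGroup.of i) ^ (m' - m) • base H = base H := by
    have h5 : (FreeGroup.of i) ^ m' = (FreeGroup.of i) ^ m * (FreeGroup.of i) ^ (m' - m) := by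
      rw [← pow_add]
      congr 1
      omega
    rw [h5, mul_smul] at hEq
    have := congrArg (fun z => ((FreeGroup.of i) ^ m)⁻¹ • z) hEq
    simpa using this.symm
  rw [smul_base_eq_iff] at h4
  have := hmin (m' - m) (by omega) h4
  omega

lemma of_pow_ne_one (i : Fin 2) (k : ℕ) (hk : 0 < k) : (FreeGroup.of i) ^ k ≠ 1 := by
  intro hEq
  have h : (Multiplicative.ofAdd (1 : ℤ)) ^ k = 1 := by
    have h1 := congrArg (FreeGroup.lift fun _ : Fin 2 => Multiplicative.ofAdd (1 : ℤ)) hEq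
    rwa [_root_.map_pow, FreeGroup.lift_apply_of, (FreeGroup.lift _).map_one] at h1
  have h2 : (k : ℤ) = 0 := by
    have h3 := congrArg Multiplicative.toAdd h
    simpa using h3
  omega

lemma letter_main (i : Fin 2) (k : ℕ) (hk0 : 0 < k) (hik : (FreeGroup.of i) ^ k ∈ H)
    (hmin : ∀ m, 0 < m → (FreeGroup.of i) ^ m ∈ H → k ≤ m) :
    ∃ (e : E H) (Q : FE H), e.1.1 = i ∧
      sigH H ⟨(FreeGroup.of i) ^ k, hik⟩ = FreeGroup.of e * Q ∧
      ∀ (ψ : FE H →* FE H),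
        (∀ e' : E H, e'.1.1 = i → e' ≠ e → ψ (FreeGroup.of e') = FreeGroup.of e') →
          ψ Q = Q := by
  classical
  set x := FreeGroup.of i with hx
  set cst : ℕ → C H := fun m => x ^ m • base H with hcst
  set g : ℕ → FE H := fun m => Fc H x (cst m) with hg
  set S : ℕ → FE H := fun j => Fc H (x ^ j) (cst j) with hS
  have S0 : S 0 = 1 := by
    rw [hS]
    simp only [pow_zero]
    rw [Fc_one]
  have Ssucc : ∀ j : ℕ, S (j + 1) = g (j + 1) * S j := by
    intro j
    show Fc H (x ^ (j + 1)) (cst (j + 1)) = Fc H x (cst (j + 1)) * Fc H (x ^ j) (cst j)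
    rw [pow_succ']
    rw [Fc_mul]
    congr 2
    show x⁻¹ • (x ^ (j + 1) • base H) = x ^ j • base H
    rw [pow_succ', mul_smul, inv_smul_smul]
  have Sk : sigH H ⟨x ^ k, hik⟩ = S k := by
    show Fc H (x ^ k) (base H) = Fc H (x ^ k) (cst k)
    congr 1
    show base H = x ^ k • base H
    rw [smul_base_eq_iff _ _ |>.mpr hik]
  have gform : ∀ m : ℕ, g m = 1 ∨
      ∃ h : ¬ Tr H i (cst m), g m = FreeGroup.of ⟨(i, cst m), h⟩ := by
    intro m
    rw [hg]
    simp only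
    rw [Fc_of, fgen]
    split_ifs with h
    · exact Or.inl rfl
    · exact Or.inr ⟨h, rfl⟩
  have Sne : ∃ m, 1 ≤ m ∧ m ≤ k ∧ g m ≠ 1 := by
    by_contra hcon
    push_neg at hcon
    have hall : ∀ j, j ≤ k → S j = 1 := by
      intro j
      induction j with
      | zero => intro _; exact S0
      | succ j ih =>
        intro hj
        rw [Ssucc, hcon (j + 1) (by omega) (by omega), ih (by omega), one_mul]
    have h1 : sigH H ⟨x ^ k, hik⟩ = 1 := by rw [Sk, hall k le_rfl]
    have h2 : (⟨x ^ k, hik⟩ : H) = 1 := by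
      rw [← phi_sig H ⟨x ^ k, hik⟩, h1, _root_.map_one]
    have h3 : x ^ k = 1 := congrArg Subtype.val h2
    exact of_pow_ne_one i k hk0 h3
  obtain ⟨m0, hm01, hm0k, hm0⟩ := Sne
  set M := Nat.findGreatest (fun m => g m ≠ 1) k with hM
  have hgM : g M ≠ 1 := Nat.findGreatest_spec (P := fun m => g m ≠ 1) hm0k hm0
  have hM1 : 1 ≤ M := le_trans hm01 (Nat.le_findGreatest (P := fun m => g m ≠ 1) hm0k hm0)
  have hMk : M ≤ k := Nat.findGreatest_le k
  have habove : ∀ m, M < m → m ≤ k → g m = 1 := by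
    intro m hMm hmk
    by_contra hcon
    exact absurd (Nat.le_findGreatest (P := fun m => g m ≠ 1) hmk hcon) (not_le.mpr hMm)
  have Sstable : ∀ d : ℕ, M + d ≤ k → S (M + d) = S M := by
    intro d
    induction d with
    | zero => intro _; rfl
    | succ d ih =>
      intro hd
      have : M + (d + 1) = (M + d) + 1 := by omega
      rw [this, Ssucc, habove (M + d + 1) (by omega) (by omega), one_mul, ih (by omega)]
  have SkM : S k = S M := by
    have h1 := Sstable (k - M) (by omega)
    rw [show M + (k - M) = k by omega] at h1
    exact h1
  have SM : S M = g M * S (M - 1) := by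
    have h1 := Ssucc (M - 1)
    rw [show M - 1 + 1 = M by omega] at h1
    exact h1
  obtain ⟨he, hgMe⟩ := (gform M).resolve_left hgM
  refine ⟨⟨(i, cst M), he⟩, S (M - 1), rfl, ?_, ?_⟩
  · rw [Sk, SkM, SM, hgMe]
  · intro ψ hψ
    have fix : ∀ j, j ≤ M - 1 → ψ (S j) = S j := by
      intro j
      induction j with
      | zero => intro _; rw [S0, _root_.map_one]
      | succ j ih =>
        intro hj
        rw [Ssucc, _root_.map_mul, ih (by omega)]
        congr 1
        rcases gform (j + 1) with h1 | ⟨h2, h3⟩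
        · rw [h1, _root_.map_one]
        · rw [h3]
          apply hψ _ rfl
          intro heq
          have hceq : cst (j + 1) = cst M := by
            have := congrArg (fun (z : E H) => z.1.2) heq
            simpa using this
          exact pow_base_ne H i k hmin (by omega) (by omega) (by omega) hceq
    exact fix (M - 1) le_rfl

end NSB

theorem basis_containing_powers (H : Subgroup F2) (p : ℕ) (hp : 1 ≤ p) (hip : H.index = p)
    (k l : ℕ) (hk0 : 0 < k) (hl0 : 0 < l)
    (hak : a ^ k ∈ H) (hbl : b ^ l ∈ H)
    (hkmin : ∀ k' : ℕ, 0 < k' → a ^ k' ∈ H → k ≤ k')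
    (hlmin : ∀ l' : ℕ, 0 < l' → b ^ l' ∈ H → l ≤ l') :
    ∃ (ι : Type) (bas : FreeGroupBasis ι ↥H) (i j : ι),
      (bas i : F2) = a ^ k ∧ (bas j : F2) = b ^ l := by
  classical
  have hak' : (FreeGroup.of (0 : Fin 2)) ^ k ∈ H := hak
  have hbl' : (FreeGroup.of (1 : Fin 2)) ^ l ∈ H := hbl
  obtain ⟨eA, QA, hA1, hA2, hA3⟩ :=
    NSB.letter_main H 0 k hk0 hak' (fun m hm hmem => hkmin m hm hmem)
  obtain ⟨eB, QB, hB1, hB2, hB3⟩ :=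
    NSB.letter_main H 1 l hl0 hbl' (fun m hm hmem => hlmin m hm hmem)
  have hAB : eA ≠ eB := by
    intro h
    rw [h, hB1] at hA1
    exact absurd hA1 (by decide)
  let fα : NSB.E H → NSB.FE H := fun e =>
    if e = eA then FreeGroup.of eA * QA else if e = eB then FreeGroup.of eB * QB
    else FreeGroup.of e
  let fβ : NSB.E H → NSB.FE H := fun e =>
    if e = eA then FreeGroup.of eA * QA⁻¹ else if e = eB then FreeGroup.of eB * QB⁻¹
    else FreeGroup.of e
  let α : NSB.FE H →* NSB.FE H := FreeGroup.lift fα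
  let β : NSB.FE H →* NSB.FE H := FreeGroup.lift fβ
  have hαA : α (FreeGroup.of eA) = FreeGroup.of eA * QA := by
    show FreeGroup.lift fα (FreeGroup.of eA) = _
    rw [FreeGroup.lift_apply_of]
    show (if eA = eA then _ else _) = _
    rw [if_pos rfl]
  have hαB : α (FreeGroup.of eB) = FreeGroup.of eB * QB := by
    show FreeGroup.lift fα (FreeGroup.of eB) = _
    rw [FreeGroup.lift_apply_of]
    show (if eB = eA then _ else _) = _
    rw [if_neg hAB.symm, if_pos rfl]
  have hβA : β (FreeGroup.of eA) = FreeGroup.of eA * QA⁻¹ := by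
    show FreeGroup.lift fβ (FreeGroup.of eA) = _
    rw [FreeGroup.lift_apply_of]
    show (if eA = eA then _ else _) = _
    rw [if_pos rfl]
  have hβB : β (FreeGroup.of eB) = FreeGroup.of eB * QB⁻¹ := by
    show FreeGroup.lift fβ (FreeGroup.of eB) = _
    rw [FreeGroup.lift_apply_of]
    show (if eB = eA then _ else _) = _
    rw [if_neg hAB.symm, if_pos rfl]
  have hαfix : ∀ e' : NSB.E H, e' ≠ eA → e' ≠ eB →
      α (FreeGroup.of e') = FreeGroup.of e' := by
    intro e' h1 h2
    show FreeGroup.lift fα (FreeGroup.of e') = _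
    rw [FreeGroup.lift_apply_of]
    show (if e' = eA then _ else _) = _
    rw [if_neg h1, if_neg h2]
  have hβfix : ∀ e' : NSB.E H, e' ≠ eA → e' ≠ eB →
      β (FreeGroup.of e') = FreeGroup.of e' := by
    intro e' h1 h2
    show FreeGroup.lift fβ (FreeGroup.of e') = _
    rw [FreeGroup.lift_apply_of]
    show (if e' = eA then _ else _) = _
    rw [if_neg h1, if_neg h2]
  have hne0 : ∀ e' : NSB.E H, e'.1.1 = 0 → e' ≠ eB := by
    intro e' h0 h
    rw [h, hB1] at h0
    exact absurd h0 (by decide)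
  have hne1 : ∀ e' : NSB.E H, e'.1.1 = 1 → e' ≠ eA := by
    intro e' h0 h
    rw [h, hA1] at h0
    exact absurd h0 (by decide)
  have hαQA : α QA = QA := hA3 α (fun e' h0 hne => hαfix e' hne (hne0 e' h0))
  have hαQB : α QB = QB := hB3 α (fun e' h0 hne => hαfix e' (hne1 e' h0) hne)
  have hβQA : β QA = QA := hA3 β (fun e' h0 hne => hβfix e' hne (hne0 e' h0))
  have hβQB : β QB = QB := hB3 β (fun e' h0 hne => hβfix e' (hne1 e' h0) hne)
  have hβα : β.comp α = MonoidHom.id (NSB.FE H) := by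
    apply FreeGroup.ext_hom
    intro e
    rw [MonoidHom.comp_apply, MonoidHom.id_apply]
    by_cases h1 : e = eA
    · subst h1
      rw [hαA, _root_.map_mul, hβQA, hβA, mul_assoc, inv_mul_cancel, mul_one]
    · by_cases h2 : e = eB
      · subst h2
        rw [hαB, _root_.map_mul, hβQB, hβB, mul_assoc, inv_mul_cancel, mul_one]
      · rw [hαfix e h1 h2, hβfix e h1 h2]
  have hαβ : α.comp β = MonoidHom.id (NSB.FE H) := by
    apply FreeGroup.ext_hom
    intro e
    rw [MonoidHom.comp_apply, MonoidHom.id_apply]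
    by_cases h1 : e = eA
    · subst h1
      rw [hβA, _root_.map_mul, map_inv, hαQA, hαA, mul_assoc, mul_inv_cancel, mul_one]
    · by_cases h2 : e = eB
      · subst h2
        rw [hβB, _root_.map_mul, map_inv, hαQB, hαB, mul_assoc, mul_inv_cancel, mul_one]
      · rw [hβfix e h1 h2, hαfix e h1 h2]
  let autE : NSB.FE H ≃* NSB.FE H := MonoidHom.toMulEquiv α β hβα hαβ
  let ε : NSB.FE H ≃* ↥H := autE.trans (NSB.iso H)
  refine ⟨NSB.E H, FreeGroupBasis.ofRepr ε.symm, eA, eB, ?_, ?_⟩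
  · have h1 : (FreeGroupBasis.ofRepr ε.symm) eA = ε (FreeGroup.of eA) := by
      show ε.symm.symm (FreeGroup.of eA) = _
      rw [MulEquiv.symm_symm]
    rw [h1]
    have h2 : ε (FreeGroup.of eA) = NSB.phiH H (α (FreeGroup.of eA)) := rfl
    rw [h2, hαA, ← hA2, NSB.phi_sig]
    rfl
  · have h1 : (FreeGroupBasis.ofRepr ε.symm) eB = ε (FreeGroup.of eB) := by
      show ε.symm.symm (FreeGroup.of eB) = _
      rw [MulEquiv.symm_symm]
    rw [h1]
    have h2 : ε (FreeGroup.of eB) = NSB.phiH H (α (FreeGroup.of eB)) := rfl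
    rw [h2, hαB, ← hB2, NSB.phi_sig]
    rfl
end
end

section
/- Let i ≥ 3, n_i = lcm(1, 2, …, i), and let H ≤ F(a,b) be a subgroup of finite index m with m < d(n_i), where d(n_i) is the smallest integer ≥ 2 not dividing n_i. If a^{n_i} b^{n_i} ∈ H, then a^{n_i} b^{n_i} is not primitive in H. -/
noncomputable section

namespace NP

open scoped Classical

/-- the permutation action on functions -/
def permAut (S : Type) (G : Type) [Group G] : Equiv.Perm S →* MulAut (S → G) where
  toFun σ :=
    { toFun := fun f => f ∘ σ.symm
      invFun := fun f => f ∘ σ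
      left_inv := fun f => by ext s; simp
      right_inv := fun f => by ext s; simp
      map_mul' := fun f g => rfl }
  map_one' := by ext f s; rfl
  map_mul' := fun σ τ => by ext f s; rfl

variable (H : Subgroup F2) (G : Type) [Group G]

abbrev S := F2 ⧸ H

/-- base point -/
def pt : S H := ((1 : F2) : F2 ⧸ H)

abbrev W := SemidirectProduct (S H → G) (Equiv.Perm (S H)) (permAut (S H) G)

def act : F2 →* Equiv.Perm (S H) := MulAction.toPermHom F2 (S H)

/-- lift datum -/
abbrev D := Fin 2 → S H → G

variable {H G}

def Phi (d : D H G) : F2 →* W H G :=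
  FreeGroup.lift (fun i => ⟨d i, act H (FreeGroup.of i)⟩)

lemma Phi_right (d : D H G) (x : F2) : (Phi d x).right = act H x := by
  have : (SemidirectProduct.rightHom.comp (Phi d)) = act H := by
    apply FreeGroup.ext_hom
    intro i
    simp [Phi, SemidirectProduct.rightHom]
  exact DFunLike.congr_fun this x

lemma act_smul (x : F2) (s : S H) : act H x s = x • s := rfl

lemma act_inv_smul (x : F2) (s : S H) : ((act H x)⁻¹ : Equiv.Perm (S H)) s = x⁻¹ • s := by
  rw [← map_inv]; rfl

/-- component function -/
def Fc (d : D H G) (x : F2) (s : S H) : G := (Phi d x).left s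

lemma Fc_mul (d : D H G) (x y : F2) (s : S H) :
    Fc d (x * y) s = Fc d x s * Fc d y (x⁻¹ • s) := by
  unfold Fc
  rw [map_mul, SemidirectProduct.mul_left]
  have : (permAut (S H) G) (Phi d x).right (Phi d y).left s
      = (Phi d y).left (x⁻¹ • s) := by
    rw [Phi_right]
    rfl
  simp [this]

lemma Fc_gen (d : D H G) (i : Fin 2) (s : S H) : Fc d (FreeGroup.of i) s = d i s := by
  unfold Fc Phi
  rw [FreeGroup.lift_apply_of]

lemma Fc_one (d : D H G) (s : S H) : Fc d 1 s = 1 := by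
  unfold Fc
  rw [map_one]
  rfl

/-- ordered product over a range -/
def cyc (u : ℕ → G) (K : ℕ) : G := ((List.range K).map u).prod

lemma cyc_zero (u : ℕ → G) : cyc u 0 = 1 := rfl

lemma cyc_succ_left (u : ℕ → G) (K : ℕ) :
    cyc u (K + 1) = u 0 * cyc (fun r => u (r + 1)) K := by
  unfold cyc
  rw [List.range_succ_eq_map, List.map_cons, List.prod_cons, List.map_map]
  rfl

lemma Fc_pow (d : D H G) (x : F2) (j : ℕ) (s : S H) :
    Fc d (x ^ j) s = cyc (fun r => Fc d x ((x⁻¹) ^ r • s)) j := by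
  induction j generalizing s with
  | zero => rw [pow_zero, Fc_one, cyc_zero]
  | succ j ih =>
    rw [pow_succ', Fc_mul, ih, cyc_succ_left]
    congr 1
    · rw [pow_zero, one_smul]
    · unfold cyc
      congr 1
      apply List.map_congr_left
      intro r _
      congr 1
      rw [pow_succ, mul_smul]

lemma cyc_congr {u v : ℕ → G} (K : ℕ) (h : ∀ r < K, u r = v r) : cyc u K = cyc v K := by
  unfold cyc
  congr 1
  apply List.map_congr_left
  intro r hr
  exact h r (List.mem_range.mp hr)

lemma cyc_add (u : ℕ → G) (K L : ℕ) :
    cyc u (K + L) = cyc u K * cyc (fun r => u (K + r)) L := by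
  unfold cyc
  rw [List.range_add, List.map_append, List.prod_append, List.map_map]
  rfl

lemma cyc_periodic (u : ℕ → G) (K c : ℕ) (hper : ∀ r, u (r + K) = u r) :
    cyc u (K * c) = (cyc u K) ^ c := by
  induction c with
  | zero => simp [cyc_zero]
  | succ c ih =>
    have h1 : K * (c + 1) = K * c + K := by ring
    rw [h1, cyc_add, ih, pow_succ]
    congr 1
    -- cyc (fun r => u (K * c + r)) K = cyc u K
    have haux : ∀ c' r, u (r + K * c') = u r := by
      intro c'
      induction c' with
      | zero => intro r; simp
      | succ c' ih2 =>
        intro r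
        have : r + K * (c' + 1) = (r + K * c') + K := by ring
        rw [this, hper, ih2]
    apply cyc_congr
    intro r _
    rw [Nat.add_comm (K * c) r, haux c r]



lemma smul_pt (x : F2) : x • pt H = ((x : F2) : S H) := by
  unfold pt
  rw [MulAction.Quotient.smul_mk]
  simp [smul_eq_mul]

lemma smul_pt_eq_pt_iff (x : F2) : x • pt H = pt H ↔ x⁻¹ ∈ H := by
  rw [smul_pt]
  unfold pt
  rw [QuotientGroup.eq]
  simp

lemma inv_smul_pt_mem (x : F2) (hx : x ∈ H) : x⁻¹ • pt H = pt H := by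
  rw [smul_pt_eq_pt_iff]
  simpa using hx

/-- restriction homomorphism -/
def Rhom (d : D H G) : H →* G where
  toFun h := Fc d (h : F2) (pt H)
  map_one' := by simp only [OneMemClass.coe_one]; rw [Fc_one]
  map_mul' h h' := by
    show Fc d ((h : F2) * (h' : F2)) (pt H) = _
    rw [Fc_mul]
    congr 2
    exact inv_smul_pt_mem (h : F2) h.2

/-- conjugation action on lift data -/
def cAct (c : S H → G) (d : D H G) : D H G :=
  fun i s => c s * d i s * (c ((FreeGroup.of i)⁻¹ • s))⁻¹

lemma left_conj (c : S H → G) (X : W H G) (s : S H) :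
    ((SemidirectProduct.inl c) * X * (SemidirectProduct.inl c)⁻¹).left s
      = c s * X.left s * (c ((X.right)⁻¹ s))⁻¹ := by
  rw [SemidirectProduct.mul_left, SemidirectProduct.mul_left]
  simp only [SemidirectProduct.left_inl, SemidirectProduct.right_inl, SemidirectProduct.inv_left,
    SemidirectProduct.inv_right, SemidirectProduct.left_inl, SemidirectProduct.right_inl]
  simp only [map_one]
  rfl

lemma right_conj (c : S H → G) (X : W H G) :
    ((SemidirectProduct.inl c) * X * (SemidirectProduct.inl c)⁻¹).right = X.right := by
  simp

lemma Phi_cAct (c : S H → G) (d : D H G) (x : F2) :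
    Phi (cAct c d) x = (SemidirectProduct.inl c) * Phi d x * (SemidirectProduct.inl c)⁻¹ := by
  have : Phi (cAct c d) = ((MulAut.conj (SemidirectProduct.inl c)).toMonoidHom.comp (Phi d)) := by
    apply FreeGroup.ext_hom
    intro i
    apply SemidirectProduct.ext
    · show (Phi (cAct c d) (FreeGroup.of i)).left = _
      funext s
      have h1 : Fc (cAct c d) (FreeGroup.of i) s = cAct c d i s := Fc_gen _ _ _
      have h2 : (MulAut.conj (SemidirectProduct.inl c) (Phi d (FreeGroup.of i))).left s
          = c s * Fc d (FreeGroup.of i) s * (c ((FreeGroup.of i)⁻¹ • s))⁻¹ := by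
        rw [MulAut.conj_apply, left_conj, Phi_right]
        rfl
      rw [show (Phi (cAct c d) (FreeGroup.of i)).left s = Fc (cAct c d) (FreeGroup.of i) s from rfl] at *
      rw [h1]
      show cAct c d i s = (MulAut.conj (SemidirectProduct.inl c) (Phi d (FreeGroup.of i))).left s
      rw [h2, Fc_gen]
      rfl
    · show (Phi (cAct c d) (FreeGroup.of i)).right = _
      rw [Phi_right]
      show _ = (MulAut.conj (SemidirectProduct.inl c) (Phi d (FreeGroup.of i))).right
      rw [MulAut.conj_apply, right_conj, Phi_right]
  rw [this]
  rfl

lemma Fc_cAct (c : S H → G) (d : D H G) (x : F2) (s : S H) :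
    Fc (cAct c d) x s = c s * Fc d x s * (c (x⁻¹ • s))⁻¹ := by
  unfold Fc
  rw [Phi_cAct, left_conj, Phi_right]
  rfl

lemma Rhom_cAct (c : S H → G) (d : D H G) (hc : c (pt H) = 1) :
    Rhom (cAct c d) = Rhom d := by
  ext h
  show Fc (cAct c d) (h : F2) (pt H) = Fc d (h : F2) (pt H)
  rw [Fc_cAct, inv_smul_pt_mem (h : F2) h.2, hc]
  group

lemma cAct_one (d : D H G) : cAct (1 : S H → G) d = d := by
  funext i s
  simp [cAct]

lemma cAct_mul (c c' : S H → G) (d : D H G) :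
    cAct (c * c') d = cAct c (cAct c' d) := by
  funext i s
  simp only [cAct, Pi.mul_apply, mul_inv_rev]
  group

lemma cAct_free (c : S H → G) (d : D H G) (heq : cAct c d = d) (hc : c (pt H) = 1) :
    c = 1 := by
  have key : ∀ x : F2, ∀ s : S H, c s * Fc d x s * (c (x⁻¹ • s))⁻¹ = Fc d x s := by
    intro x s
    rw [← Fc_cAct, heq]
  funext s
  obtain ⟨y, rfl⟩ := QuotientGroup.mk_surjective s
  have h1 := key y⁻¹ (pt H)
  rw [hc] at h1
  have h2 : (y⁻¹)⁻¹ • pt H = ((y : F2) : S H) := by rw [inv_inv, smul_pt]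
  rw [h2] at h1
  rw [one_mul] at h1
  show c ((y : F2) : S H) = 1
  have h3 : (c ((y : F2) : S H))⁻¹ = 1 :=
    mul_left_cancel (a := Fc d y⁻¹ (pt H)) (by rw [h1, mul_one])
  rw [← inv_inv (c _), h3, inv_one]

/-- transversal -/
def tv (s : S H) : F2 := if s = pt H then 1 else Quotient.out s

lemma tv_spec (s : S H) : ((tv (H := H) s : F2) : S H) = s := by
  unfold tv
  split
  · rename_i h; rw [h]; rfl
  · exact QuotientGroup.out_eq' s

lemma tv_pt : tv (H := H) (pt H) = 1 := by simp [tv]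

lemma eH_mem (x : F2) (s : S H) : (tv s)⁻¹ * x * tv (x⁻¹ • s) ∈ H := by
  have h1 : ((x * tv (x⁻¹ • s) : F2) : S H) = s := by
    have : ((x * tv (x⁻¹ • s) : F2) : S H) = x • ((tv (x⁻¹ • s) : F2) : S H) := by
      rw [MulAction.Quotient.smul_mk]; rfl
    rw [this, tv_spec, smul_inv_smul]
  have := QuotientGroup.eq.mp ((tv_spec (H := H) s).trans h1.symm)
  rwa [← mul_assoc] at this

/-- the H-valued cocycle of the transversal -/
def eH (x : F2) (s : S H) : H := ⟨(tv s)⁻¹ * x * tv (x⁻¹ • s), eH_mem x s⟩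

lemma eH_mul (x y : F2) (s : S H) : eH (H := H) (x * y) s = eH x s * eH y (x⁻¹ • s) := by
  apply Subtype.ext
  show (tv s)⁻¹ * (x * y) * tv ((x*y)⁻¹ • s)
      = ((tv s)⁻¹ * x * tv (x⁻¹ • s)) * ((tv (x⁻¹ • s))⁻¹ * y * tv (y⁻¹ • x⁻¹ • s))
  have : (x * y)⁻¹ • s = y⁻¹ • x⁻¹ • s := by rw [mul_inv_rev, mul_smul]
  rw [this]
  group

lemma eH_one (s : S H) : eH (H := H) 1 s = 1 := by
  apply Subtype.ext
  show (tv s)⁻¹ * 1 * tv ((1 : F2)⁻¹ • s) = 1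
  rw [inv_one, one_smul, mul_one]
  group

variable (G) in
/-- induced lift of a homomorphism -/
def PsiW (ψ : H →* G) : F2 →* W H G where
  toFun x := ⟨fun s => ψ (eH x s), act H x⟩
  map_one' := by
    apply SemidirectProduct.ext
    · funext s
      show ψ (eH 1 s) = 1
      rw [eH_one, map_one]
    · show act H (1 : F2) = 1
      rw [map_one]
  map_mul' x y := by
    apply SemidirectProduct.ext
    · show (fun s => ψ (eH (x * y) s)) = _
      funext s
      show ψ (eH (x*y) s) = ((fun s => ψ (eH x s)) * (permAut (S H) G (act H x) (fun s => ψ (eH y s)))) s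
      have : (permAut (S H) G (act H x) (fun s => ψ (eH y s))) s = ψ (eH y (x⁻¹ • s)) := rfl
      rw [Pi.mul_apply, this, eH_mul, map_mul]
    · show act H (x * y) = act H x * act H y
      rw [map_mul]

def dOf (ψ : H →* G) : D H G := fun i s => ψ (eH (FreeGroup.of i) s)

lemma Phi_dOf (ψ : H →* G) : Phi (dOf ψ) = PsiW G ψ := by
  apply FreeGroup.ext_hom
  intro i
  apply SemidirectProduct.ext
  · show (Phi (dOf ψ) (FreeGroup.of i)).left = fun s => ψ (eH (FreeGroup.of i) s)
    funext s
    exact Fc_gen (dOf ψ) i s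
  · show (Phi (dOf ψ) (FreeGroup.of i)).right = act H (FreeGroup.of i)
    exact Phi_right _ _

lemma Fc_dOf (ψ : H →* G) (x : F2) (s : S H) : Fc (dOf ψ) x s = ψ (eH x s) := by
  unfold Fc
  rw [Phi_dOf]
  rfl

lemma eH_of_mem (h : F2) (hh : h ∈ H) : eH (H := H) h (pt H) = ⟨h, hh⟩ := by
  apply Subtype.ext
  show (tv (pt H))⁻¹ * h * tv (h⁻¹ • pt H) = h
  rw [inv_smul_pt_mem h hh, tv_pt]
  group

lemma Rhom_dOf (ψ : H →* G) : Rhom (dOf ψ) = ψ := by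
  ext h
  show Fc (dOf ψ) (h : F2) (pt H) = ψ h
  rw [Fc_dOf]
  congr 1
  exact eH_of_mem (h : F2) h.2

/-- A-function for comparison -/
def Af (d : D H G) (s : S H) : G := Fc d (tv s) s

lemma Af_pt (d : D H G) : Af d (pt H) = 1 := by
  unfold Af
  rw [tv_pt, Fc_one]

lemma key_identity (d : D H G) (x : F2) (s : S H) :
    Fc d x s * Af d (x⁻¹ • s) = Af d s * Rhom d (eH x s) := by
  unfold Af
  have h1 : Fc d x s * Fc d (tv (x⁻¹ • s)) (x⁻¹ • s) = Fc d (x * tv (x⁻¹ • s)) s := by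
    rw [Fc_mul]
  have h2 : x * tv (x⁻¹ • s) = tv s * ((eH (H := H) x s : F2)) := by
    show x * tv (x⁻¹ • s) = tv s * ((tv s)⁻¹ * x * tv (x⁻¹ • s))
    group
  have h3 : Fc d (x * tv (x⁻¹ • s)) s = Fc d (tv s) s * Fc d (eH x s : F2) ((tv s)⁻¹ • s) := by
    rw [h2, Fc_mul]
  have h4 : ((tv s)⁻¹ : F2) • s = pt H := by
    have h5 : ∀ y : F2, y⁻¹ • ((y : F2) : S H) = pt H := by
      intro y
      rw [MulAction.Quotient.smul_mk]
      unfold pt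
      congr 1
      simp [smul_eq_mul]
    have := h5 (tv s)
    rwa [tv_spec] at this
  rw [h1, h3, h4]
  rfl

/-- comparison cocycle between two lifts with the same restriction -/
def cc (d d' : D H G) (s : S H) : G := Af d' s * (Af d s)⁻¹

lemma cc_pt (d d' : D H G) : cc d d' (pt H) = 1 := by
  unfold cc
  rw [Af_pt, Af_pt]
  group

lemma cAct_cc (d d' : D H G) (hR : Rhom d = Rhom d') : cAct (cc d d') d = d' := by
  funext i s
  unfold cAct cc
  have h1 := key_identity d (FreeGroup.of i) s
  have h2 := key_identity d' (FreeGroup.of i) s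
  rw [Fc_gen] at h1 h2
  rw [hR] at h1
  -- d i s * Af d (x⁻¹ s) = Af d s * ψ; d' i s * Af d' (x⁻¹ s) = Af d' s * ψ
  have h3 : d i s = Af d s * Rhom d' (eH (FreeGroup.of i) s) * (Af d ((FreeGroup.of i)⁻¹ • s))⁻¹ := by
    rw [← h1]; group
  have h4 : d' i s = Af d' s * Rhom d' (eH (FreeGroup.of i) s) * (Af d' ((FreeGroup.of i)⁻¹ • s))⁻¹ := by
    rw [← h2]; group
  rw [h3, h4]
  group

variable (H G) in
def C0 := {c : S H → G // c (pt H) = 1}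

variable (G) in
def Lft (wH : H) (g : G) := {d : D H G // Rhom d wH = g}

variable (G) in
def Fib (wH : H) (g : G) := {ψ : H →* G // ψ wH = g}

def liftEquiv (wH : H) (g : G) : Lft G wH g ≃ (Fib G wH g × C0 H G) where
  toFun d := (⟨Rhom d.1, d.2⟩, ⟨cc (dOf (Rhom d.1)) d.1, cc_pt _ _⟩)
  invFun p := ⟨cAct p.2.1 (dOf p.1.1), by
    rw [show Rhom (cAct p.2.1 (dOf p.1.1)) = Rhom (dOf p.1.1) from Rhom_cAct _ _ p.2.2,
      Rhom_dOf]
    exact p.1.2⟩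
  left_inv d := by
    apply Subtype.ext
    show cAct (cc (dOf (Rhom d.1)) d.1) (dOf (Rhom d.1)) = d.1
    exact cAct_cc _ _ (by rw [Rhom_dOf])
  right_inv p := by
    obtain ⟨⟨ψ, hψ⟩, ⟨c, hc⟩⟩ := p
    have hR : Rhom (cAct c (dOf ψ)) = ψ := by rw [Rhom_cAct _ _ hc, Rhom_dOf]
    have hcc : cc (dOf (Rhom (cAct c (dOf ψ)))) (cAct c (dOf ψ)) = c := by
      rw [hR]
      set c' := cc (dOf ψ) (cAct c (dOf ψ)) with hc'
      have h1 : cAct c' (dOf ψ) = cAct c (dOf ψ) :=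
        cAct_cc _ _ (by rw [Rhom_dOf, Rhom_cAct _ _ hc, Rhom_dOf])
      have h2 : cAct (c⁻¹ * c') (dOf ψ) = dOf ψ := by
        rw [cAct_mul, h1, ← cAct_mul, inv_mul_cancel, cAct_one]
      have h3 : (c⁻¹ * c') (pt H) = 1 := by
        have : c' (pt H) = 1 := cc_pt _ _
        simp [Pi.mul_apply, hc, this]
      have h4 : c⁻¹ * c' = 1 := cAct_free _ _ h2 h3
      exact (inv_mul_eq_one.mp h4).symm
    exact Prod.ext (Subtype.ext hR) (Subtype.ext hcc)

section powers

lemma pow_smul_pt_periodic (x : F2) (K : ℕ) (hK : x ^ K ∈ H) (r : ℕ) :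
    x⁻¹ ^ (r + K) • pt H = x⁻¹ ^ r • pt H := by
  rw [pow_add, mul_smul]
  congr 1
  rw [inv_pow]
  exact inv_smul_pt_mem _ hK

lemma Fc_gen_pow (d : D H G) (i : Fin 2) (K n : ℕ)
    (hx : ((FreeGroup.of i : F2)) ^ K ∈ H) (hKn : K ∣ n) :
    Fc d ((FreeGroup.of i) ^ n) (pt H)
      = (cyc (fun r => d i ((FreeGroup.of i : F2)⁻¹ ^ r • pt H)) K) ^ (n / K) := by
  rw [Fc_pow]
  have h1 : cyc (fun r => Fc d (FreeGroup.of i) ((FreeGroup.of i : F2)⁻¹ ^ r • pt H)) n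
      = cyc (fun r => d i ((FreeGroup.of i : F2)⁻¹ ^ r • pt H)) n :=
    cyc_congr _ (fun r _ => Fc_gen _ _ _)
  rw [h1]
  have h2 : n = K * (n / K) := (Nat.mul_div_cancel' hKn).symm
  conv_lhs => rw [h2]
  apply cyc_periodic
  intro r
  congr 1
  exact pow_smul_pt_periodic _ _ hx r

end powers

section split

variable (H) in
def Tne := {s : S H // s ≠ pt H}

def tailProd (x : F2) (K : ℕ) (ρ : Tne H → G) : G :=
  cyc (fun r => if h : (x⁻¹ ^ (r + 1) • pt H) = pt H then 1 else ρ ⟨_, h⟩) (K - 1)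

def cycHead (x : F2) (K : ℕ) (f : S H → G) : G := cyc (fun r => f (x⁻¹ ^ r • pt H)) K

lemma cycHead_eq (x : F2) (K : ℕ) (hK : 0 < K)
    (hne : ∀ r, 0 < r → r < K → x⁻¹ ^ r • pt H ≠ pt H) (f : S H → G) :
    cycHead x K f = f (pt H) * tailProd x K (fun t => f t.1) := by
  obtain ⟨K', rfl⟩ : ∃ K', K = K' + 1 := ⟨K - 1, (Nat.succ_pred_eq_of_pos hK).symm⟩
  unfold cycHead
  rw [cyc_succ_left]
  refine congrArg₂ (· * ·) ?_ ?_
  · show f (x⁻¹ ^ 0 • pt H) = f (pt H)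
    rw [pow_zero, one_smul]
  · unfold tailProd
    simp only [Nat.add_sub_cancel]
    apply cyc_congr
    intro r hr
    have hneq : x⁻¹ ^ (r + 1) • pt H ≠ pt H := hne (r + 1) (Nat.succ_pos r) (by omega)
    rw [dif_neg hneq]

def splitEquiv (x : F2) (K : ℕ) (hK : 0 < K)
    (hne : ∀ r, 0 < r → r < K → x⁻¹ ^ r • pt H ≠ pt H) :
    (S H → G) ≃ G × (Tne H → G) where
  toFun f := (cycHead x K f, fun t => f t.1)
  invFun p := fun s => if h : s = pt H then p.1 * (tailProd x K p.2)⁻¹ else p.2 ⟨s, h⟩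
  left_inv f := by
    funext s
    dsimp only
    by_cases h : s = pt H
    · rw [dif_pos h, cycHead_eq x K hK hne f, h]
      group
    · rw [dif_neg h]
  right_inv p := by
    obtain ⟨u, ρ⟩ := p
    have hres : (fun t : Tne H => (fun s => if h : s = pt H then u * (tailProd x K ρ)⁻¹
        else ρ ⟨s, h⟩) t.1) = ρ := by
      funext t
      dsimp only
      rw [dif_neg t.2]
      rfl
    apply Prod.ext
    · show cycHead x K (fun s => if h : s = pt H then u * (tailProd x K ρ)⁻¹ else ρ ⟨s, h⟩) = u
      rw [cycHead_eq x K hK hne, hres, dif_pos rfl]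
      group
    · exact hres

end split


section fib

lemma basis_lift_apply {Γ K : Type*} [Group Γ] [Group K] {ι : Type}
    (bas : FreeGroupBasis ι Γ) (v : ι → K) (i : ι) :
    bas.lift v (bas i) = v i := by
  show (FreeGroup.lift v).comp bas.repr.toMonoidHom (bas i) = v i
  rw [MonoidHom.comp_apply]
  show FreeGroup.lift v (bas.repr (bas i)) = v i
  rw [FreeGroupBasis.repr_apply_coe, FreeGroup.lift_apply_of]

def updEquiv {ι : Type} [DecidableEq ι] (i₀ : ι) (g g' : G) :
    {v : ι → G // v i₀ = g} ≃ {v : ι → G // v i₀ = g'} where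
  toFun v := ⟨Function.update v.1 i₀ g', Function.update_self _ _ _⟩
  invFun v := ⟨Function.update v.1 i₀ g, Function.update_self _ _ _⟩
  left_inv v := by
    obtain ⟨f, hf⟩ := v
    apply Subtype.ext
    show Function.update (Function.update f i₀ g') i₀ g = f
    rw [Function.update_idem, ← hf, Function.update_eq_self]
  right_inv v := by
    obtain ⟨f, hf⟩ := v
    apply Subtype.ext
    show Function.update (Function.update f i₀ g) i₀ g' = f
    rw [Function.update_idem, ← hf, Function.update_eq_self]

def fibEquiv (wH : H) (hprim : Primitive wH) (g g' : G) :
    Fib G wH g ≃ Fib G wH g' := by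
  classical
  choose ι bas i₀ hbas using hprim
  have key : ∀ (ψ : H →* G) (gg : G), ψ wH = gg ↔ (bas.lift.symm ψ) i₀ = gg := by
    intro ψ gg
    have h1 : bas.lift (bas.lift.symm ψ) (bas i₀) = (bas.lift.symm ψ) i₀ :=
      basis_lift_apply bas _ i₀
    rw [Equiv.apply_symm_apply] at h1
    rw [← h1, hbas]
  exact ((Equiv.subtypeEquiv bas.lift.symm (fun ψ => key ψ g)).trans
    (updEquiv i₀ g g')).trans (Equiv.subtypeEquiv bas.lift.symm (fun ψ => key ψ g')).symm

end fib

section assemble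

variable (G) in
abbrev Nset (p q : ℕ) (g : G) := {uv : G × G // uv.1 ^ p * uv.2 ^ q = g}

def shuffleEquiv (p q : ℕ) (g : G) :
    {z : (G × (Tne H → G)) × (G × (Tne H → G)) // z.1.1 ^ p * z.2.1 ^ q = g}
      ≃ Nset G p q g × ((Tne H → G) × (Tne H → G)) where
  toFun z := (⟨(z.1.1.1, z.1.2.1), z.2⟩, (z.1.1.2, z.1.2.2))
  invFun w := ⟨((w.1.1.1, w.2.1), (w.1.1.2, w.2.2)), w.1.2⟩
  left_inv z := rfl
  right_inv w := rfl

theorem criterion (m : ℕ) (hm : H.index = m) (hm0 : 0 < m) (n k l : ℕ)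
    (hk0 : 0 < k) (hl0 : 0 < l)
    (ha : ∀ j : ℕ, a ^ j ∈ H ↔ k ∣ j) (hb : ∀ j : ℕ, b ^ j ∈ H ↔ l ∣ j)
    (hkn : k ∣ n) (hln : l ∣ n)
    (hg : a ^ n * b ^ n ∈ H) (hprim : Primitive (⟨a ^ n * b ^ n, hg⟩ : H))
    [Finite G] (g₁ g₂ : G) :
    Nat.card (Nset G (n / k) (n / l) g₁) = Nat.card (Nset G (n / k) (n / l) g₂) := by
  classical
  have hfinS : Finite (S H) := by
    apply Nat.finite_of_card_ne_zero
    rw [← Subgroup.index_eq_card, hm]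
    omega
  set wH : H := ⟨a ^ n * b ^ n, hg⟩ with hwH
  -- the w-component computation
  have hane : ∀ r, 0 < r → r < k → a⁻¹ ^ r • pt H ≠ pt H := by
    intro r hr hrk hcon
    rw [smul_pt_eq_pt_iff] at hcon
    rw [inv_pow, inv_inv] at hcon
    have := (ha r).mp hcon
    have := Nat.le_of_dvd hr this
    omega
  have hbne : ∀ r, 0 < r → r < l → b⁻¹ ^ r • pt H ≠ pt H := by
    intro r hr hrl hcon
    rw [smul_pt_eq_pt_iff] at hcon
    rw [inv_pow, inv_inv] at hcon
    have := (hb r).mp hcon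
    have := Nat.le_of_dvd hr this
    omega
  have hFcw : ∀ d : D H G, Rhom d wH
      = (cycHead a k (d 0)) ^ (n / k) * (cycHead b l (d 1)) ^ (n / l) := by
    intro d
    show Fc d (a ^ n * b ^ n) (pt H) = _
    rw [Fc_mul]
    have h1 : (a ^ n)⁻¹ • pt H = pt H := inv_smul_pt_mem _ ((ha n).mpr hkn)
    rw [h1]
    have h2 : Fc d (a ^ n) (pt H) = (cycHead a k (d 0)) ^ (n / k) := by
      have := Fc_gen_pow d 0 k n ((ha k).mpr dvd_rfl) hkn
      exact this
    have h3 : Fc d (b ^ n) (pt H) = (cycHead b l (d 1)) ^ (n / l) := by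
      have := Fc_gen_pow d 1 l n ((hb l).mpr dvd_rfl) hln
      exact this
    rw [h2, h3]
  -- the lift-side equiv
  have eD : ∀ g : G, Lft G wH g ≃ Nset G (n / k) (n / l) g × ((Tne H → G) × (Tne H → G)) := by
    intro g
    let e1 : D H G ≃ (G × (Tne H → G)) × (G × (Tne H → G)) :=
      (piFinTwoEquiv (fun _ => S H → G)).trans
        (Equiv.prodCongr (splitEquiv a k hk0 hane) (splitEquiv b l hl0 hbne))
    have hcond : ∀ d : D H G, Rhom d wH = g ↔ ((e1 d).1.1 ^ (n / k) * (e1 d).2.1 ^ (n / l) = g) := by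
      intro d
      rw [hFcw d]
      rfl
    exact (Equiv.subtypeEquiv e1 hcond).trans (shuffleEquiv _ _ _)
  -- count
  have hLft : ∀ g : G, Nat.card (Lft G wH g)
      = Nat.card (Nset G (n / k) (n / l) g) * Nat.card ((Tne H → G) × (Tne H → G)) := by
    intro g
    rw [Nat.card_congr (eD g), Nat.card_prod]
  have hLft2 : ∀ g : G, Nat.card (Lft G wH g) = Nat.card (Fib G wH g) * Nat.card (C0 H G) := by
    intro g
    rw [Nat.card_congr (liftEquiv wH g), Nat.card_prod]
  have hFib : Nat.card (Fib G wH g₁) = Nat.card (Fib G wH g₂) :=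
    Nat.card_congr (fibEquiv wH hprim g₁ g₂)
  have hEq : Nat.card (Nset G (n / k) (n / l) g₁) * Nat.card ((Tne H → G) × (Tne H → G))
      = Nat.card (Nset G (n / k) (n / l) g₂) * Nat.card ((Tne H → G) × (Tne H → G)) := by
    rw [← hLft, ← hLft, hLft2, hLft2, hFib]
  have hpos : 0 < Nat.card ((Tne H → G) × (Tne H → G)) := by
    have : Nonempty ((Tne H → G) × (Tne H → G)) := ⟨(fun _ => 1, fun _ => 1)⟩
    have hfin : Finite (Tne H) := Subtype.finite
    exact Nat.card_pos
  exact Nat.eq_of_mul_eq_mul_right hpos hEq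

end assemble


section arith

lemma exists_pow_min {Γ : Type*} [Group Γ] (K : Subgroup Γ) (m : ℕ) (hm : K.index = m)
    (hm0 : 0 < m) (x : Γ) : ∃ k, 0 < k ∧ k ≤ m ∧ ∀ j : ℕ, x ^ j ∈ K ↔ k ∣ j := by
  classical
  have hfin : Finite (Γ ⧸ K) := by
    apply Nat.finite_of_card_ne_zero
    rw [← Subgroup.index_eq_card, hm]
    omega
  have hcard : Nat.card (Γ ⧸ K) = m := by rw [← Subgroup.index_eq_card, hm]
  have hninj : ¬ Function.Injective
      (fun j : Fin (m + 1) => ((x ^ (j : ℕ) : Γ) : Γ ⧸ K)) := by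
    intro hinj
    have h1 := Nat.card_le_card_of_injective _ hinj
    rw [Nat.card_eq_fintype_card, Fintype.card_fin, hcard] at h1
    omega
  rw [Function.not_injective_iff] at hninj
  obtain ⟨j, j', heq, hne⟩ := hninj
  have hgen : ∀ (u v : ℕ), u < v → ((x ^ u : Γ) : Γ ⧸ K) = ((x ^ v : Γ) : Γ ⧸ K) →
      x ^ (v - u) ∈ K := by
    intro u v huv he
    have h2 : (x ^ u)⁻¹ * x ^ v ∈ K := QuotientGroup.eq.mp he
    have h3 : x ^ v = x ^ u * x ^ (v - u) := by
      rw [← pow_add]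
      congr 1
      omega
    rw [h3, inv_mul_cancel_left] at h2
    exact h2
  have hex : ∃ c, 0 < c ∧ x ^ c ∈ K ∧ c ≤ m := by
    rcases Nat.lt_or_ge (j : ℕ) (j' : ℕ) with hlt | hge
    · exact ⟨(j' : ℕ) - j, by omega, hgen _ _ hlt heq, by have := j'.2; omega⟩
    · have hlt : (j' : ℕ) < (j : ℕ) := by
        rcases Nat.lt_or_ge (j' : ℕ) (j : ℕ) with h | h
        · exact h
        · exfalso; exact hne (Fin.ext (by omega))
      exact ⟨(j : ℕ) - j', by omega, hgen _ _ hlt heq.symm, by have := j.2; omega⟩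
  have hex2 : ∃ c, 0 < c ∧ x ^ c ∈ K := by
    obtain ⟨c, h1, h2, _⟩ := hex
    exact ⟨c, h1, h2⟩
  set k := Nat.find hex2 with hk
  have hspec := Nat.find_spec hex2
  refine ⟨k, hspec.1, ?_, ?_⟩
  · obtain ⟨c, h1, h2, h3⟩ := hex
    exact le_trans (Nat.find_min' hex2 ⟨h1, h2⟩) h3
  · intro j0
    constructor
    · intro hj0
      have hmod : x ^ (j0 % k) ∈ K := by
        have hsplit : x ^ j0 = x ^ (k * (j0 / k)) * x ^ (j0 % k) := by
          rw [← pow_add]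
          congr 1
          exact (Nat.div_add_mod j0 k).symm
        have hpow : x ^ (k * (j0 / k)) ∈ K := by
          rw [pow_mul]
          exact pow_mem hspec.2 _
        have : x ^ (j0 % k) = (x ^ (k * (j0 / k)))⁻¹ * x ^ j0 := by
          rw [hsplit, inv_mul_cancel_left]
        rw [this]
        exact K.mul_mem (K.inv_mem hpow) hj0
      by_contra hnd
      have hpos : 0 < j0 % k := by
        rcases Nat.eq_zero_or_pos (j0 % k) with h | h
        · exact absurd (Nat.dvd_of_mod_eq_zero h) hnd
        · exact h
      have hlt : j0 % k < k := Nat.mod_lt _ hspec.1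
      exact Nat.find_min hex2 hlt ⟨hpos, hmod⟩
    · rintro ⟨t, rfl⟩
      rw [pow_mul]
      exact pow_mem hspec.2 _


lemma lcm_Icc_pos (i : ℕ) (hi : 1 ≤ i) : 0 < (Finset.Icc 1 i).lcm id := by
  rcases Nat.eq_zero_or_pos ((Finset.Icc 1 i).lcm id) with h | h
  · exfalso
    rw [Finset.lcm_eq_zero_iff] at h
    obtain ⟨x, hx, hx0⟩ := h
    simp only [Finset.mem_Icc] at hx
    simp only [id_eq] at hx0
    omega
  · exact h

lemma choose_dvd_lcm_Icc (i r : ℕ) (hi : 2 ≤ i) (hr : r ≤ i - 1) :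
    (i - 1).choose r ∣ (Finset.Icc 1 i).lcm id := by
  have hn1 : 0 < i - 1 := by omega
  have hL0 : (Finset.Icc 1 i).lcm id ≠ 0 := (lcm_Icc_pos i (by omega)).ne'
  have hC0 : (i - 1).choose r ≠ 0 := (Nat.choose_pos hr).ne'
  rw [← Nat.factorization_le_iff_dvd hC0 hL0]
  intro pp
  by_cases hp : pp.Prime
  · set v := ((i - 1).choose r).factorization pp with hv
    have hple : pp ^ v ≤ i - 1 := Nat.pow_factorization_choose_le hn1
    have hppos : 0 < pp ^ v := Nat.pow_pos hp.pos
    have hdvd : pp ^ v ∣ (Finset.Icc 1 i).lcm id := by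
      have hmem : pp ^ v ∈ Finset.Icc 1 i := Finset.mem_Icc.mpr ⟨hppos, by omega⟩
      simpa using Finset.dvd_lcm (f := id) hmem
    exact (Nat.Prime.pow_dvd_iff_le_factorization hp hL0).mp hdvd
  · rw [Nat.factorization_eq_zero_of_not_prime _ hp]
    exact Nat.zero_le _

lemma two_pow_le_mul_lcm (i : ℕ) (hi : 2 ≤ i) :
    2 ^ (i - 1) ≤ i * (Finset.Icc 1 i).lcm id := by
  have h1 : ∑ r ∈ Finset.range ((i - 1) + 1), (i - 1).choose r = 2 ^ (i - 1) :=
    Nat.sum_range_choose (i - 1)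
  have h2 : (i - 1) + 1 = i := by omega
  rw [h2] at h1
  rw [← h1]
  have h3 : ∀ r ∈ Finset.range i, (i - 1).choose r ≤ (Finset.Icc 1 i).lcm id := by
    intro r hr
    rw [Finset.mem_range] at hr
    exact Nat.le_of_dvd (lcm_Icc_pos i (by omega)) (choose_dvd_lcm_Icc i r hi (by omega))
  calc ∑ r ∈ Finset.range i, (i - 1).choose r
      ≤ ∑ _r ∈ Finset.range i, (Finset.Icc 1 i).lcm id := Finset.sum_le_sum h3
    _ = i * (Finset.Icc 1 i).lcm id := by
        rw [Finset.sum_const, Finset.card_range, smul_eq_mul]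

lemma large_ineq (i : ℕ) (hi : 15 ≤ i) : i * ((2 * i - 1) * (2 * i - 1)) < 2 ^ (i - 1) := by
  induction i, hi using Nat.le_induction with
  | base => norm_num
  | succ n hn ih =>
    have e1 : 2 * (n + 1) - 1 = (2 * n - 1) + 2 := by omega
    have e2 : (n + 1) - 1 = (n - 1) + 1 := by omega
    rw [e1, e2, pow_succ]
    obtain ⟨B, hB⟩ : ∃ B, 2 * n - 1 = B := ⟨_, rfl⟩
    have hB2 : B + 1 = 2 * n := by omega
    rw [hB] at ih ⊢
    have hstep : (n + 1) * ((B + 2) * (B + 2)) ≤ 2 * (n * (B * B)) := by nlinarith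
    calc (n + 1) * ((B + 2) * (B + 2)) ≤ 2 * (n * (B * B)) := hstep
      _ < 2 ^ (n - 1) * 2 := by omega

lemma coprime_finset_lcm (P : ℕ) (s : Finset ℕ) (f : ℕ → ℕ)
    (h : ∀ x ∈ s, Nat.Coprime P (f x)) : Nat.Coprime P (s.lcm f) := by
  classical
  induction s using Finset.induction with
  | empty => simpa [Finset.lcm_empty] using Nat.coprime_one_right P
  | insert x s0 hx ih =>
    rw [Finset.lcm_insert]
    have hc1 : Nat.Coprime P (f x) := h x (Finset.mem_insert_self _ _)
    have hc2 : Nat.Coprime P (s0.lcm f) := ih (fun y hy => h y (Finset.mem_insert_of_mem hy))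
    exact Nat.Coprime.coprime_dvd_right (lcm_dvd (dvd_mul_right _ _) (dvd_mul_left _ _)) (hc1.mul_right hc2)

lemma prime_not_dvd_lcm_Icc (i P : ℕ) (hP : P.Prime) (hiP : i < P) :
    ¬ P ∣ (Finset.Icc 1 i).lcm id := by
  have hco : Nat.Coprime P ((Finset.Icc 1 i).lcm id) := by
    apply coprime_finset_lcm
    intro x hx
    rw [Finset.mem_Icc] at hx
    rw [Nat.Prime.coprime_iff_not_dvd hP]
    simp only [id_eq]
    intro hd
    have := Nat.le_of_dvd (by omega) hd
    omega
  rw [← Nat.Prime.coprime_iff_not_dvd hP]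
  exact hco

lemma zmod_case (p q π : ℕ) (hπ : 2 ≤ π) (hp : π ∣ p) (hq : π ∣ q)
    (hkey : Nat.card (Nset (Multiplicative (ZMod π)) p q 1)
      = Nat.card (Nset (Multiplicative (ZMod π)) p q (Multiplicative.ofAdd 1))) : False := by
  haveI : NeZero π := ⟨by omega⟩
  have hone : ∀ (u : Multiplicative (ZMod π)) (r : ℕ), π ∣ r → u ^ r = 1 := by
    intro u r hr
    have hcast : (r : ZMod π) = 0 := (ZMod.natCast_eq_zero_iff r π).mpr hr
    apply Multiplicative.toAdd.injective
    rw [toAdd_pow, toAdd_one, nsmul_eq_mul, hcast, zero_mul]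
  have h1 : Nat.card (Nset (Multiplicative (ZMod π)) p q 1) = π * π := by
    have e : Nset (Multiplicative (ZMod π)) p q 1
        ≃ (Multiplicative (ZMod π) × Multiplicative (ZMod π)) :=
      Equiv.subtypeUnivEquiv (fun uv => by rw [hone _ _ hp, hone _ _ hq, mul_one])
    rw [Nat.card_congr e, Nat.card_prod]
    have hcm : Nat.card (Multiplicative (ZMod π)) = π := by
      rw [Nat.card_congr Multiplicative.toAdd, Nat.card_zmod]
    rw [hcm]
  have h2 : Nat.card (Nset (Multiplicative (ZMod π)) p q (Multiplicative.ofAdd 1)) = 0 := by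
    have he : IsEmpty (Nset (Multiplicative (ZMod π)) p q (Multiplicative.ofAdd 1)) := by
      constructor
      rintro ⟨uv, huv⟩
      rw [hone _ _ hp, hone _ _ hq, mul_one] at huv
      have h3 : (0 : ZMod π) = (1 : ZMod π) := congrArg Multiplicative.toAdd huv
      have h4 : ((1 : ℕ) : ZMod π) = 0 := by rw [Nat.cast_one, ← h3]
      have h5 := (ZMod.natCast_eq_zero_iff 1 π).mp h4
      have := Nat.le_of_dvd one_pos h5
      omega
    exact Nat.card_of_isEmpty
  rw [h1, h2] at hkey
  have : 0 < π * π := Nat.mul_pos (by omega) (by omega)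
  omega

end arith

end NP


set_option maxHeartbeats 4000000 in
theorem not_primitive_in_small_index_subgroup (i : ℕ) (hi : 3 ≤ i)
    (n : ℕ) (hn : n = (Finset.Icc 1 i).lcm id)
    (H : Subgroup F2) (m : ℕ) (hm : H.index = m) (hm0 : 0 < m)
    (hmd : m < smallestNonDivisor n)
    (hg : a ^ n * b ^ n ∈ H) :
    ¬ Primitive (⟨a ^ n * b ^ n, hg⟩ : H) := by
  intro hprim
  obtain ⟨k, hk0, hkm, hak⟩ := NP.exists_pow_min H m hm hm0 a
  obtain ⟨l, hl0, hlm, hbl⟩ := NP.exists_pow_min H m hm hm0 b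
  have hnpos : 0 < n := by rw [hn]; exact NP.lcm_Icc_pos i (by omega)
  have hdvd_le : ∀ j, 0 < j → j ≤ m → j ∣ n := by
    intro j hj hjm
    by_contra hnd
    have h1 : j ≠ 1 := fun h => hnd (h ▸ one_dvd n)
    have h2 : 2 ≤ j := by omega
    have h3 : smallestNonDivisor n ≤ j :=
      Nat.sInf_le (show j ∈ {d : ℕ | 2 ≤ d ∧ ¬ d ∣ n} from ⟨h2, hnd⟩)
    omega
  have hkn : k ∣ n := hdvd_le k hk0 hkm
  have hln : l ∣ n := hdvd_le l hl0 hlm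
  have key : ∀ (G : Type) [Group G] [Finite G] (g₁ g₂ : G),
      Nat.card (NP.Nset G (n / k) (n / l) g₁) = Nat.card (NP.Nset G (n / k) (n / l) g₂) :=
    fun G _ _ g₁ g₂ =>
      NP.criterion (H := H) (G := G) m hm hm0 n k l hk0 hl0 hak hbl hkn hln hg hprim g₁ g₂
  have hppos : 0 < n / k := Nat.div_pos (Nat.le_of_dvd hnpos hkn) hk0
  have hqpos : 0 < n / l := Nat.div_pos (Nat.le_of_dvd hnpos hln) hl0
  by_cases hgcd : 2 ≤ Nat.gcd (n / k) (n / l)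
  · set d0 := Nat.gcd (n / k) (n / l) with hd0
    have hprime := Nat.minFac_prime (show d0 ≠ 1 by omega)
    haveI : NeZero d0.minFac := ⟨by have := hprime.two_le; omega⟩
    exact NP.zmod_case (n / k) (n / l) d0.minFac hprime.two_le
      ((Nat.minFac_dvd d0).trans (Nat.gcd_dvd_left _ _))
      ((Nat.minFac_dvd d0).trans (Nat.gcd_dvd_right _ _))
      (key _ _ _)
  · have hgpos : 0 < Nat.gcd (n / k) (n / l) := Nat.gcd_pos_of_pos_left _ hppos
    have hgcd1 : Nat.gcd (n / k) (n / l) = 1 := by omega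
    have hlcmdvd : Nat.lcm k l ∣ n := Nat.lcm_dvd hkn hln
    have hne : Nat.lcm k l * (n / Nat.lcm k l) = n := Nat.mul_div_cancel' hlcmdvd
    set e := n / Nat.lcm k l with he
    have hep : e ∣ n / k := by
      obtain ⟨c, hc⟩ := Nat.dvd_lcm_left k l
      have h4 : n = k * (c * e) := by rw [← hne, hc, mul_assoc]
      have h5 : n / k = c * e := by rw [h4, Nat.mul_div_cancel_left _ hk0]
      exact ⟨c, by rw [h5, mul_comm]⟩
    have heq : e ∣ n / l := by
      obtain ⟨c, hc⟩ := Nat.dvd_lcm_right k l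
      have h4 : n = l * (c * e) := by rw [← hne, hc, mul_assoc]
      have h5 : n / l = c * e := by rw [h4, Nat.mul_div_cancel_left _ hl0]
      exact ⟨c, by rw [h5, mul_comm]⟩
    have he1 : e = 1 := Nat.dvd_one.mp (hgcd1 ▸ Nat.dvd_gcd hep heq)
    have hlcm_n : Nat.lcm k l = n := by rw [← hne, he1, mul_one]
    have hn_le : n ≤ k * l := by
      rw [← hlcm_n]
      exact Nat.le_of_dvd (Nat.mul_pos hk0 hl0)
        (Nat.lcm_dvd (dvd_mul_right k l) (dvd_mul_left l k))
    have hn_le_m : n ≤ m * m := le_trans hn_le (Nat.mul_le_mul hkm hlm)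
    by_cases hbig : 15 ≤ i
    · obtain ⟨P, hPp, hiP, hP2i⟩ := Nat.exists_prime_lt_and_le_two_mul i (by omega)
      have hPnd : ¬ P ∣ n := by rw [hn]; exact NP.prime_not_dvd_lcm_Icc i P hPp hiP
      have hdP : smallestNonDivisor n ≤ P := Nat.sInf_le ⟨hPp.two_le, hPnd⟩
      have hm2i : m ≤ 2 * i - 1 := by omega
      have h1 : 2 ^ (i - 1) ≤ i * n := by rw [hn]; exact NP.two_pow_le_mul_lcm i (by omega)
      have h2 : i * ((2 * i - 1) * (2 * i - 1)) < 2 ^ (i - 1) := NP.large_ineq i hbig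
      have h3 : n ≤ (2 * i - 1) * (2 * i - 1) := le_trans hn_le_m (Nat.mul_le_mul hm2i hm2i)
      have h4 : i * n ≤ i * ((2 * i - 1) * (2 * i - 1)) := Nat.mul_le_mul_left i h3
      omega
    · have hi14 : i ≤ 14 := by omega
      -- small cases
      interval_cases i
      -- i = 3
      · have hnv : n = 6 := by rw [hn]; decide
        subst hnv
        have hDm : smallestNonDivisor 6 ≤ 4 := Nat.sInf_le ⟨by norm_num, by norm_num⟩
        have hm3 : m ≤ 3 := by omega
        have hk3 : k ≤ 3 := by omega
        have hl3 : l ≤ 3 := by omega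
        interval_cases k <;> interval_cases l <;>
          first
          | exact absurd hlcm_n (by decide)
          | (exact absurd (key (DihedralGroup 3) 1 (DihedralGroup.r 1)) (by
              rw [Nat.card_eq_fintype_card, Nat.card_eq_fintype_card]
              decide))
      · have hnv : n = 12 := by rw [hn]; decide
        subst hnv
        have hDm : smallestNonDivisor 12 ≤ 5 := Nat.sInf_le ⟨by norm_num, by norm_num⟩
        have hm4 : m ≤ 4 := by omega
        have hk4 : k ≤ 4 := by omega
        have hl4 : l ≤ 4 := by omega
        interval_cases k <;> interval_cases l <;>
          first
          | exact absurd hlcm_n (by decide)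
          | (exact absurd (key (DihedralGroup 3) 1 (DihedralGroup.r 1)) (by
              rw [Nat.card_eq_fintype_card, Nat.card_eq_fintype_card]
              decide))
      · -- i = 5, n = 60
        have hnv : n = 60 := by rw [hn]; decide
        have hD : smallestNonDivisor n ≤ 7 := by
          rw [hnv]; exact Nat.sInf_le ⟨by norm_num, by norm_num⟩
        have : m * m ≤ 6 * 6 := Nat.mul_le_mul (by omega) (by omega)
        omega
      · have hnv : n = 60 := by rw [hn]; decide
        have hD : smallestNonDivisor n ≤ 7 := by
          rw [hnv]; exact Nat.sInf_le ⟨by norm_num, by norm_num⟩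
        have : m * m ≤ 6 * 6 := Nat.mul_le_mul (by omega) (by omega)
        omega
      · have hnv : n = 420 := by rw [hn]; decide
        have hD : smallestNonDivisor n ≤ 8 := by
          rw [hnv]; exact Nat.sInf_le ⟨by norm_num, by norm_num⟩
        have : m * m ≤ 7 * 7 := Nat.mul_le_mul (by omega) (by omega)
        omega
      · have hnv : n = 840 := by rw [hn]; decide
        have hD : smallestNonDivisor n ≤ 9 := by
          rw [hnv]; exact Nat.sInf_le ⟨by norm_num, by norm_num⟩
        have : m * m ≤ 8 * 8 := Nat.mul_le_mul (by omega) (by omega)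
        omega
      · have hnv : n = 2520 := by rw [hn]; decide
        have hD : smallestNonDivisor n ≤ 11 := by
          rw [hnv]; exact Nat.sInf_le ⟨by norm_num, by norm_num⟩
        have : m * m ≤ 10 * 10 := Nat.mul_le_mul (by omega) (by omega)
        omega
      · have hnv : n = 2520 := by rw [hn]; decide
        have hD : smallestNonDivisor n ≤ 11 := by
          rw [hnv]; exact Nat.sInf_le ⟨by norm_num, by norm_num⟩
        have : m * m ≤ 10 * 10 := Nat.mul_le_mul (by omega) (by omega)
        omega
      · have hnv : n = 27720 := by rw [hn]; decide
        have hD : smallestNonDivisor n ≤ 13 := by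
          rw [hnv]; exact Nat.sInf_le ⟨by norm_num, by norm_num⟩
        have : m * m ≤ 12 * 12 := Nat.mul_le_mul (by omega) (by omega)
        omega
      · have hnv : n = 27720 := by rw [hn]; decide
        have hD : smallestNonDivisor n ≤ 13 := by
          rw [hnv]; exact Nat.sInf_le ⟨by norm_num, by norm_num⟩
        have : m * m ≤ 12 * 12 := Nat.mul_le_mul (by omega) (by omega)
        omega
      · have hnv : n = 360360 := by rw [hn]; decide
        have hD : smallestNonDivisor n ≤ 16 := by
          rw [hnv]; exact Nat.sInf_le ⟨by norm_num, by norm_num⟩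
        have : m * m ≤ 15 * 15 := Nat.mul_le_mul (by omega) (by omega)
        omega
      · have hnv : n = 360360 := by rw [hn]; decide
        have hD : smallestNonDivisor n ≤ 16 := by
          rw [hnv]; exact Nat.sInf_le ⟨by norm_num, by norm_num⟩
        have : m * m ≤ 15 * 15 := Nat.mul_le_mul (by omega) (by omega)
        omega
end
end

section
/- For every integer n ≥ 2, the simplicity index of a^n b^n in F(a,b) equals 2. -/
noncomputable section

namespace AuxSimp

open Monoid Subgroup

/-- Transport of simplicity along an isomorphism. -/
lemma simpleElem_congr {G G' : Type*} [Group G] [Group G'] (e : G ≃* G') {g : G}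
    (h : SimpleElem g) : SimpleElem (e g) := by
  obtain ⟨A, B, hA, hB, hgA, hbij⟩ := h
  refine ⟨A.map e.toMonoidHom, B.map e.toMonoidHom,
    by rwa [Ne, Subgroup.map_eq_bot_iff_of_injective _ e.injective],
    by rwa [Ne, Subgroup.map_eq_bot_iff_of_injective _ e.injective],
    ⟨g, hgA, rfl⟩, ?_⟩
  set eA := e.subgroupMap A with heA
  set eB := e.subgroupMap B with heB
  have hmap : ∀ c : Coprod ↥A ↥B,
      Coprod.lift (A.map e.toMonoidHom).subtype (B.map e.toMonoidHom).subtype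
        (Coprod.map eA.toMonoidHom eB.toMonoidHom c)
        = e (Coprod.lift A.subtype B.subtype c) := by
    intro c
    have : (Coprod.lift (A.map e.toMonoidHom).subtype (B.map e.toMonoidHom).subtype).comp
        (Coprod.map eA.toMonoidHom eB.toMonoidHom)
        = e.toMonoidHom.comp (Coprod.lift A.subtype B.subtype) := by
      apply Coprod.hom_ext <;> ext t <;> rfl
    exact DFunLike.congr_fun this c
  have hmbij : Function.Bijective (Coprod.map eA.toMonoidHom eB.toMonoidHom) := by
    constructor
    · intro c c' hcc'
      have := congrArg (Coprod.map eA.symm.toMonoidHom eB.symm.toMonoidHom) hcc'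
      simpa [Coprod.map_map, MulEquiv.symm_comp_self,
        Coprod.map_id_id] using this
    · intro d
      refine ⟨Coprod.map eA.symm.toMonoidHom eB.symm.toMonoidHom d, ?_⟩
      have : (Coprod.map eA.toMonoidHom eB.toMonoidHom).comp
          (Coprod.map eA.symm.toMonoidHom eB.symm.toMonoidHom) = MonoidHom.id _ := by
        apply Coprod.hom_ext <;> ext t <;> simp
      simpa using DFunLike.congr_fun this d
  constructor
  · intro d d' hdd'
    obtain ⟨c, rfl⟩ := hmbij.surjective d
    obtain ⟨c', rfl⟩ := hmbij.surjective d'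
    rw [hmap, hmap] at hdd'
    exact congrArg _ (hbij.injective (e.injective hdd'))
  · intro t
    obtain ⟨c, hc⟩ := hbij.surjective (e.symm t)
    exact ⟨Coprod.map eA.toMonoidHom eB.toMonoidHom c, by rw [hmap, hc]; simp⟩



open Monoid Subgroup

abbrev F3 := FreeGroup (Fin 3)

lemma of_ne_one {α : Type*} [DecidableEq α] (i : α) : FreeGroup.of i ≠ 1 := by
  intro h
  simpa using congrArg FreeGroup.toWord h

lemma range_of_three :
    Set.range (FreeGroup.of : Fin 3 → F3) = {FreeGroup.of 0, FreeGroup.of 1, FreeGroup.of 2} := by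
  ext t
  constructor
  · rintro ⟨i, rfl⟩; fin_cases i <;> simp
  · rintro (rfl | rfl | rfl) <;> exact ⟨_, rfl⟩

lemma closure_three :
    Subgroup.closure {FreeGroup.of 0, FreeGroup.of 1, (FreeGroup.of 2 : F3)} = ⊤ := by
  rw [← range_of_three]
  exact FreeGroup.closure_range_of _

/-- model lemma, even case : anything in the subgroup generated by the first two
generators is simple in `F3`. -/
lemma model_even {w : F3}
    (hw : w ∈ Subgroup.closure {FreeGroup.of 0, FreeGroup.of 1}) : SimpleElem w := by
  set A : Subgroup F3 := Subgroup.closure {FreeGroup.of 0, FreeGroup.of 1} with hA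
  set B : Subgroup F3 := Subgroup.closure {FreeGroup.of 2} with hB
  have h0A : (FreeGroup.of 0 : F3) ∈ A := Subgroup.subset_closure (by simp)
  have h1A : (FreeGroup.of 1 : F3) ∈ A := Subgroup.subset_closure (by simp)
  have h2B : (FreeGroup.of 2 : F3) ∈ B := Subgroup.subset_closure (by simp)
  set ψ : F3 →* Coprod ↥A ↥B :=
    FreeGroup.lift ![Coprod.inl ⟨FreeGroup.of 0, h0A⟩, Coprod.inl ⟨FreeGroup.of 1, h1A⟩,
      Coprod.inr ⟨FreeGroup.of 2, h2B⟩] with hψ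
  have keyA : ∀ t (ht : t ∈ A), ψ t = Coprod.inl ⟨t, ht⟩ := by
    intro t ht
    induction ht using Subgroup.closure_induction with
    | mem t ht =>
      rcases ht with rfl | rfl
      · show ψ (FreeGroup.of 0) = _; rw [hψ, FreeGroup.lift_apply_of]; rfl
      · show ψ (FreeGroup.of 1) = _; rw [hψ, FreeGroup.lift_apply_of]; rfl
    | one => rw [map_one]; exact (map_one _).symm
    | mul s t hs ht ihs iht =>
      rw [map_mul, ihs, iht, ← map_mul]; rfl
    | inv s hs ihs =>
      rw [map_inv, ihs, ← map_inv]; rfl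
  have keyB : ∀ t (ht : t ∈ B), ψ t = Coprod.inr ⟨t, ht⟩ := by
    intro t ht
    induction ht using Subgroup.closure_induction with
    | mem t ht =>
      rcases ht with rfl
      show ψ (FreeGroup.of 2) = _; rw [hψ, FreeGroup.lift_apply_of]; rfl
    | one => rw [map_one]; exact (map_one _).symm
    | mul s t hs ht ihs iht => rw [map_mul, ihs, iht, ← map_mul]; rfl
    | inv s hs ihs => rw [map_inv, ihs, ← map_inv]; rfl
  have hcomp : ψ.comp (Coprod.lift A.subtype B.subtype) = MonoidHom.id _ := by
    apply Coprod.hom_ext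
    · ext ⟨t, ht⟩
      simpa using keyA t ht
    · ext ⟨t, ht⟩
      simpa using keyB t ht
  refine ⟨A, B, ?_, ?_, hw, ?_, ?_⟩
  · intro h
    exact of_ne_one (0 : Fin 3) (by simpa [h, Subgroup.mem_bot] using h0A)
  · intro h
    exact of_ne_one (2 : Fin 3) (by simpa [h, Subgroup.mem_bot] using h2B)
  · intro c c' hcc'
    have := congrArg ψ hcc'
    simpa using (DFunLike.congr_fun hcomp c).symm.trans
      (this.trans (DFunLike.congr_fun hcomp c'))
  · intro t
    have : t ∈ (Coprod.lift A.subtype B.subtype).range := by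
      rw [Coprod.range_lift, Subgroup.subtype_range, Subgroup.subtype_range, hA, hB,
        ← Subgroup.closure_union]
      have : ({FreeGroup.of 0, FreeGroup.of 1} ∪ {FreeGroup.of 2} :
          Set F3) = {FreeGroup.of 0, FreeGroup.of 1, FreeGroup.of 2} := by
        ext s; simp only [Set.mem_union, Set.mem_insert_iff, Set.mem_singleton_iff]; tauto
      rw [this, closure_three]
      trivial
    exact this


/-- model lemma, odd case: `x^k z y^k` is simple in `F3`. -/
lemma model_odd (k : ℕ) :
    SimpleElem ((FreeGroup.of 0) ^ k * FreeGroup.of 2 * (FreeGroup.of 1) ^ k : F3) := by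
  set w : F3 := (FreeGroup.of 0) ^ k * FreeGroup.of 2 * (FreeGroup.of 1) ^ k with hwdef
  set B : Subgroup F3 := Subgroup.closure {FreeGroup.of 0, FreeGroup.of 1} with hB
  set A : Subgroup F3 := Subgroup.zpowers w with hA
  have h0B : (FreeGroup.of 0 : F3) ∈ B := Subgroup.subset_closure (by simp)
  have h1B : (FreeGroup.of 1 : F3) ∈ B := Subgroup.subset_closure (by simp)
  have hwA : w ∈ A := Subgroup.mem_zpowers w
  set vz : Monoid.Coprod ↥A ↥B :=
    ((Coprod.inr ⟨FreeGroup.of 0, h0B⟩ : Monoid.Coprod ↥A ↥B) ^ k)⁻¹ *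
      Coprod.inl ⟨w, hwA⟩ * ((Coprod.inr ⟨FreeGroup.of 1, h1B⟩ : Monoid.Coprod ↥A ↥B) ^ k)⁻¹
    with hvz
  set ψ : F3 →* Monoid.Coprod ↥A ↥B :=
    FreeGroup.lift ![Coprod.inr ⟨FreeGroup.of 0, h0B⟩, Coprod.inr ⟨FreeGroup.of 1, h1B⟩, vz]
    with hψ
  have ψ0 : ψ (FreeGroup.of 0) = Coprod.inr ⟨FreeGroup.of 0, h0B⟩ := by
    rw [hψ, FreeGroup.lift_apply_of]; rfl
  have ψ1 : ψ (FreeGroup.of 1) = Coprod.inr ⟨FreeGroup.of 1, h1B⟩ := by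
    rw [hψ, FreeGroup.lift_apply_of]; rfl
  have ψ2 : ψ (FreeGroup.of 2) = vz := by
    rw [hψ, FreeGroup.lift_apply_of]; rfl
  have keyB : ∀ t (ht : t ∈ B), ψ t = Coprod.inr ⟨t, ht⟩ := by
    intro t ht
    induction ht using Subgroup.closure_induction with
    | mem t ht =>
      rcases ht with rfl | rfl
      · exact ψ0
      · exact ψ1
    | one => rw [map_one]; exact (map_one _).symm
    | mul s t hs ht ihs iht => rw [map_mul, ihs, iht, ← map_mul]; rfl
    | inv s hs ihs => rw [map_inv, ihs, ← map_inv]; rfl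
  have hψw : ψ w = Coprod.inl ⟨w, hwA⟩ := by
    conv_lhs => rw [hwdef]
    rw [map_mul, map_mul, map_pow, map_pow, ψ0, ψ1, ψ2, hvz]
    group
  have keyA : ∀ t (ht : t ∈ A), ψ t = Coprod.inl ⟨t, ht⟩ := by
    intro t ht
    obtain ⟨m, rfl⟩ := Subgroup.mem_zpowers_iff.mp ht
    rw [map_zpow, hψw, ← map_zpow]
    exact congrArg _ (Subtype.ext (by simp))
  have hcomp : ψ.comp (Monoid.Coprod.lift A.subtype B.subtype) = MonoidHom.id _ := by
    apply Monoid.Coprod.hom_ext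
    · ext ⟨t, ht⟩
      simpa using keyA t ht
    · ext ⟨t, ht⟩
      simpa using keyB t ht
  have hwne : w ≠ 1 := by
    intro h
    rw [hwdef] at h
    have := congrArg (FreeGroup.lift ![(1 : Multiplicative ℤ), 1, Multiplicative.ofAdd 1]) h
    simp only [map_mul, map_pow, FreeGroup.lift_apply_of, map_one] at this
    simp only [Matrix.cons_val_zero, Matrix.cons_val_one, Matrix.head_cons, Matrix.cons_val_two,
      Matrix.tail_cons, one_pow, one_mul, mul_one] at this
    have h2 := congrArg Multiplicative.toAdd this
    simp at h2
  refine ⟨A, B, ?_, ?_, hwA, ?_, ?_⟩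
  · intro h
    exact hwne (by simpa [h, Subgroup.mem_bot] using hwA)
  · intro h
    exact of_ne_one (0 : Fin 3) (by simpa [h, Subgroup.mem_bot] using h0B)
  · intro c c' hcc'
    have := congrArg ψ hcc'
    simpa using (DFunLike.congr_fun hcomp c).symm.trans
      (this.trans (DFunLike.congr_fun hcomp c'))
  · intro t
    have htop : t ∈ (⊤ : Subgroup F3) := trivial
    rw [← closure_three] at htop
    have hle : Subgroup.closure {FreeGroup.of 0, FreeGroup.of 1, (FreeGroup.of 2 : F3)} ≤
        (Monoid.Coprod.lift A.subtype B.subtype).range := by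
      rw [Monoid.Coprod.range_lift, Subgroup.subtype_range, Subgroup.subtype_range]
      apply Subgroup.closure_le _ |>.mpr
      rintro s (rfl | rfl | rfl)
      · exact Subgroup.mem_sup_right h0B
      · exact Subgroup.mem_sup_right h1B
      · have : (FreeGroup.of 2 : F3) =
            ((FreeGroup.of 0 : F3) ^ k)⁻¹ * w * ((FreeGroup.of 1 : F3) ^ k)⁻¹ := by
          rw [hwdef]; group
        rw [this]
        exact Subgroup.mul_mem _
          (Subgroup.mul_mem _ (Subgroup.mem_sup_right (inv_mem (pow_mem h0B k)))
            (Subgroup.mem_sup_left hwA))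
          (Subgroup.mem_sup_right (inv_mem (pow_mem h1B k)))
    exact hle htop



/-- The mod-2 total exponent homomorphism. -/
def φ : F2 →* Multiplicative (ZMod 2) :=
  FreeGroup.lift (fun _ => Multiplicative.ofAdd 1)

/-- Its kernel, the index 2 subgroup. -/
def Hker : Subgroup F2 := φ.ker

/-- The subgroup generated by the Schreier generators `a², b², ab`. -/
def K : Subgroup F2 := Subgroup.closure {a * a, b * b, a * b}

lemma gen1 : a * a ∈ K := Subgroup.subset_closure (by simp)
lemma gen2 : b * b ∈ K := Subgroup.subset_closure (by simp)
lemma gen3 : a * b ∈ K := Subgroup.subset_closure (by simp)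

/-- `θ` sends the generators of `F3` to the Schreier generators. -/
def θ : F3 →* F2 := FreeGroup.lift ![a * a, b * b, a * b]

lemma θ0 : θ (FreeGroup.of 0) = a * a := by rw [θ, FreeGroup.lift_apply_of]; rfl
lemma θ1 : θ (FreeGroup.of 1) = b * b := by rw [θ, FreeGroup.lift_apply_of]; rfl
lemma θ2 : θ (FreeGroup.of 2) = a * b := by rw [θ, FreeGroup.lift_apply_of]; rfl

/-- swap automorphism of `F3 × F3`. -/
def s : MulAut (F3 × F3) := (MulEquiv.prodComm : F3 × F3 ≃* F3 × F3)

lemma s_apply (p : F3 × F3) : s p = (p.2, p.1) := rfl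

lemma s_sq : s * s = 1 := by
  ext p <;> rfl

/-- The semidirect product used to prove that `θ` is injective. -/
abbrev M0 := SemidirectProduct (F3 × F3) (MulAut (F3 × F3)) (MonoidHom.id _)

def va : M0 := ⟨(1, FreeGroup.of 0), s⟩
def vb : M0 := ⟨(FreeGroup.of 1 * (FreeGroup.of 2)⁻¹, FreeGroup.of 2), s⟩

def Φ : F2 →* M0 := FreeGroup.lift ![va, vb]

def Ψ : F3 →* F3 × F3 :=
  FreeGroup.lift ![(FreeGroup.of 0, FreeGroup.of 0),
    (FreeGroup.of 1, FreeGroup.of 2 * FreeGroup.of 1 * (FreeGroup.of 2)⁻¹),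
    (FreeGroup.of 2, FreeGroup.of 0 * FreeGroup.of 1 * (FreeGroup.of 2)⁻¹)]

lemma Ψ0 : Ψ (FreeGroup.of 0) = (FreeGroup.of 0, FreeGroup.of 0) := by
  rw [Ψ, FreeGroup.lift_apply_of]; rfl
lemma Ψ1 : Ψ (FreeGroup.of 1) =
    (FreeGroup.of 1, FreeGroup.of 2 * FreeGroup.of 1 * (FreeGroup.of 2)⁻¹) := by
  rw [Ψ, FreeGroup.lift_apply_of]; rfl
lemma Ψ2 : Ψ (FreeGroup.of 2) =
    (FreeGroup.of 2, FreeGroup.of 0 * FreeGroup.of 1 * (FreeGroup.of 2)⁻¹) := by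
  rw [Ψ, FreeGroup.lift_apply_of]; rfl

lemma Φa : Φ a = va := by rw [Φ, a, FreeGroup.lift_apply_of]; rfl
lemma Φb : Φ b = vb := by rw [Φ, b, FreeGroup.lift_apply_of]; rfl

lemma key1 : Φ.comp θ = SemidirectProduct.inl.comp Ψ := by
  apply FreeGroup.ext_hom
  intro i
  fin_cases i
  · show Φ (θ (FreeGroup.of 0)) = SemidirectProduct.inl (Ψ (FreeGroup.of 0))
    rw [θ0, map_mul, Φa, Ψ0]
    apply SemidirectProduct.ext
    · show va.left * (va.right (va.left)) = _
      simp only [va, s_apply, Prod.mk_mul_mk, Prod.mk.injEq, SemidirectProduct.left_inl]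
      constructor <;> group
    · exact s_sq
  · show Φ (θ (FreeGroup.of 1)) = SemidirectProduct.inl (Ψ (FreeGroup.of 1))
    rw [θ1, map_mul, Φb, Ψ1]
    apply SemidirectProduct.ext
    · show vb.left * (vb.right (vb.left)) = _
      simp only [vb, s_apply, Prod.mk_mul_mk, Prod.mk.injEq, SemidirectProduct.left_inl]
      constructor <;> group
    · exact s_sq
  · show Φ (θ (FreeGroup.of 2)) = SemidirectProduct.inl (Ψ (FreeGroup.of 2))
    rw [θ2, map_mul, Φa, Φb, Ψ2]
    apply SemidirectProduct.ext
    · show va.left * (va.right (vb.left)) = _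
      simp only [va, vb, s_apply, Prod.mk_mul_mk, Prod.mk.injEq, SemidirectProduct.left_inl]
      constructor <;> group
    · exact s_sq

lemma key2 : (MonoidHom.fst F3 F3).comp Ψ = MonoidHom.id F3 := by
  apply FreeGroup.ext_hom
  intro i
  fin_cases i
  · show (Ψ (FreeGroup.of 0)).1 = FreeGroup.of 0
    rw [Ψ0]
  · show (Ψ (FreeGroup.of 1)).1 = FreeGroup.of 1
    rw [Ψ1]
  · show (Ψ (FreeGroup.of 2)).1 = FreeGroup.of 2
    rw [Ψ2]

lemma θ_injective : Function.Injective θ := by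
  intro u v h
  have e1 : Φ (θ u) = SemidirectProduct.inl (Ψ u) := DFunLike.congr_fun key1 u
  have e2 : Φ (θ v) = SemidirectProduct.inl (Ψ v) := DFunLike.congr_fun key1 v
  have h2 : Ψ u = Ψ v := SemidirectProduct.inl_injective (by rw [← e1, ← e2, h])
  have h3 := congrArg Prod.fst h2
  rwa [show (Ψ u).1 = u from DFunLike.congr_fun key2 u,
    show (Ψ v).1 = v from DFunLike.congr_fun key2 v] at h3

lemma θ_range : θ.range = K := by
  rw [θ, FreeGroup.range_lift_eq_closure]
  congr 1
  ext t
  constructor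
  · rintro ⟨i, rfl⟩; fin_cases i <;> simp [K]
  · rintro (rfl | rfl | rfl)
    exacts [⟨0, rfl⟩, ⟨1, rfl⟩, ⟨2, rfl⟩]


lemma conj_a : ∀ t ∈ K, a * t * a⁻¹ ∈ K := by
  intro t ht
  induction ht using Subgroup.closure_induction with
  | mem t ht =>
    rcases ht with rfl | rfl | rfl
    · have : a * (a * a) * a⁻¹ = a * a := by group
      rw [this]; exact gen1
    · have : a * (b * b) * a⁻¹ = (a * b) * (b * b) * (a * b)⁻¹ := by group
      rw [this]; exact mul_mem (mul_mem gen3 gen2) (inv_mem gen3)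
    · have : a * (a * b) * a⁻¹ = (a * a) * ((b * b) * (a * b)⁻¹) := by group
      rw [this]; exact mul_mem gen1 (mul_mem gen2 (inv_mem gen3))
  | one => simpa using one_mem K
  | mul s t hs ht ihs iht =>
    have : a * (s * t) * a⁻¹ = (a * s * a⁻¹) * (a * t * a⁻¹) := by group
    rw [this]; exact mul_mem ihs iht
  | inv s hs ihs =>
    have : a * s⁻¹ * a⁻¹ = (a * s * a⁻¹)⁻¹ := by group
    rw [this]; exact inv_mem ihs

lemma ba_mem : b * a ∈ K := by
  have : b * a = (b * b) * (a * b)⁻¹ * (a * a) := by group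
  rw [this]; exact mul_mem (mul_mem gen2 (inv_mem gen3)) gen1

lemma conj_a' : ∀ t ∈ K, a⁻¹ * t * a ∈ K := by
  intro t ht
  induction ht using Subgroup.closure_induction with
  | mem t ht =>
    rcases ht with rfl | rfl | rfl
    · have : a⁻¹ * (a * a) * a = a * a := by group
      rw [this]; exact gen1
    · have : a⁻¹ * (b * b) * a = ((a * a)⁻¹ * (a * b)) * ((b * a)) := by group
      rw [this]; exact mul_mem (mul_mem (inv_mem gen1) gen3) ba_mem
    · have : a⁻¹ * (a * b) * a = b * a := by group
      rw [this]; exact ba_mem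
  | one => simpa using one_mem K
  | mul s t hs ht ihs iht =>
    have : a⁻¹ * (s * t) * a = (a⁻¹ * s * a) * (a⁻¹ * t * a) := by group
    rw [this]; exact mul_mem ihs iht
  | inv s hs ihs =>
    have : a⁻¹ * s⁻¹ * a = (a⁻¹ * s * a)⁻¹ := by group
    rw [this]; exact inv_mem ihs

lemma cover : ∀ t : F2, t ∈ K ∨ ∃ k ∈ K, t = k * a := by
  intro t
  induction t using FreeGroup.induction_on with
  | C1 => exact Or.inl (one_mem K)
  | of i =>
    fin_cases i
    · exact Or.inr ⟨1, one_mem K, by show (a : F2) = 1 * a; group⟩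
    · refine Or.inr ⟨(b * b) * (a * b)⁻¹, mul_mem gen2 (inv_mem gen3), ?_⟩
      show (b : F2) = _
      group
  | inv_of i ih =>
    fin_cases i
    · exact Or.inr ⟨(a * a)⁻¹, inv_mem gen1, by show (a : F2)⁻¹ = _; group⟩
    · exact Or.inr ⟨(a * b)⁻¹, inv_mem gen3, by show (b : F2)⁻¹ = _; group⟩
  | mul s t ihs iht =>
    rcases ihs with hs | ⟨k, hk, rfl⟩
    · rcases iht with ht | ⟨l, hl, rfl⟩
      · exact Or.inl (mul_mem hs ht)
      · exact Or.inr ⟨s * l, mul_mem hs hl, by group⟩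
    · rcases iht with ht | ⟨l, hl, rfl⟩
      · refine Or.inr ⟨k * (a * t * a⁻¹), mul_mem hk (conj_a t ht), by group⟩
      · refine Or.inl ?_
        have : (k * a) * (l * a) = k * (a * l * a⁻¹) * (a * a) := by group
        rw [this]
        exact mul_mem (mul_mem hk (conj_a l hl)) gen1

lemma φa : φ a = Multiplicative.ofAdd 1 := by rw [φ, a, FreeGroup.lift_apply_of]
lemma φb : φ b = Multiplicative.ofAdd 1 := by rw [φ, b, FreeGroup.lift_apply_of]

lemma K_le_H : K ≤ Hker := by
  rw [K, Hker]
  apply (Subgroup.closure_le _).mpr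
  rintro t (rfl | rfl | rfl) <;>
    simp [MonoidHom.mem_ker, φa, φb, ← ofAdd_add] <;> decide

lemma K_eq_H : K = Hker := by
  refine le_antisymm K_le_H ?_
  intro t ht
  rcases cover t with h | ⟨k, hk, rfl⟩
  · exact h
  · exfalso
    rw [Hker, MonoidHom.mem_ker, map_mul, φa] at ht
    have hk1 : φ k = 1 := K_le_H hk
    rw [hk1, one_mul] at ht
    exact (by decide : (Multiplicative.ofAdd (1 : ZMod 2)) ≠ 1) ht

lemma φ_surjective : Function.Surjective φ := by
  intro v
  have : v = 1 ∨ v = Multiplicative.ofAdd 1 := by revert v; decide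
  rcases this with rfl | rfl
  · exact ⟨1, map_one φ⟩
  · exact ⟨a, φa⟩

lemma H_index : Hker.index = 2 := by
  rw [Hker, Subgroup.index_ker, MonoidHom.range_eq_top.mpr φ_surjective, Subgroup.card_top,
    Nat.card_eq_fintype_card]
  rfl

lemma g_mem (n : ℕ) : a ^ n * b ^ n ∈ Hker := by
  rw [Hker, MonoidHom.mem_ker, map_mul, map_pow, map_pow, φa, φb, ← pow_add]
  have : (Multiplicative.ofAdd (1 : ZMod 2)) ^ (n + n) = Multiplicative.ofAdd ((n + n : ℕ) • (1 : ZMod 2)) := by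
    simp [← ofAdd_nsmul]
  rw [this]
  have : ((n + n : ℕ) • (1 : ZMod 2)) = 0 := by
    rw [nsmul_eq_mul, mul_one]
    push_cast
    ring_nf
    have h2 : (2 : ZMod 2) = 0 := by decide
    rw [h2, mul_zero]
  rw [this]
  rfl


end AuxSimp


namespace AuxSimp
open Monoid Subgroup

lemma θ_mem (u : F3) : θ u ∈ Hker := by
  rw [← K_eq_H, ← θ_range]; exact ⟨u, rfl⟩

def E : F3 ≃* Hker :=
  MulEquiv.ofBijective (θ.codRestrict Hker θ_mem)
    ⟨fun u v h => θ_injective (congrArg Subtype.val h),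
     fun t => by
      have : (t : F2) ∈ θ.range := by rw [θ_range, K_eq_H]; exact t.2
      obtain ⟨u, hu⟩ := this
      exact ⟨u, Subtype.ext hu⟩⟩

lemma E_coe (u : F3) : (E u : F2) = θ u := rfl

lemma upper (n : ℕ) : SimpleElem (⟨a ^ n * b ^ n, g_mem n⟩ : Hker) := by
  rcases Nat.even_or_odd n with ⟨k, hk⟩ | ⟨k, hk⟩
  · -- even case
    have hw : ((FreeGroup.of 0 : F3) ^ k * (FreeGroup.of 1) ^ k)
        ∈ Subgroup.closure {FreeGroup.of 0, FreeGroup.of 1} :=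
      mul_mem (pow_mem (Subgroup.subset_closure (by simp)) k)
        (pow_mem (Subgroup.subset_closure (by simp)) k)
    have hs := simpleElem_congr E (model_even hw)
    have : E ((FreeGroup.of 0 : F3) ^ k * (FreeGroup.of 1) ^ k)
        = ⟨a ^ n * b ^ n, g_mem n⟩ := by
      apply Subtype.ext
      rw [E_coe, map_mul, map_pow, map_pow, θ0, θ1, hk]
      have h1 : (a * a) ^ k = a ^ (k + k) := by rw [← sq, ← pow_mul, two_mul]
      have h2 : (b * b) ^ k = b ^ (k + k) := by rw [← sq, ← pow_mul, two_mul]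
      rw [h1, h2]
    rwa [this] at hs
  · -- odd case
    have hs := simpleElem_congr E (model_odd k)
    have : E ((FreeGroup.of 0 : F3) ^ k * FreeGroup.of 2 * (FreeGroup.of 1) ^ k)
        = ⟨a ^ n * b ^ n, g_mem n⟩ := by
      apply Subtype.ext
      rw [E_coe, map_mul, map_mul, map_pow, map_pow, θ0, θ1, θ2, hk]
      have h1 : (a * a) ^ k = a ^ (2 * k) := by rw [← sq, ← pow_mul]
      have h2 : (b * b) ^ k = b ^ (2 * k) := by rw [← sq, ← pow_mul]
      rw [h1, h2]
      show _ = a ^ (2 * k + 1) * b ^ (2 * k + 1)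
      rw [pow_succ, pow_succ']
      group
    rwa [this] at hs

end AuxSimp

namespace AuxSimp
open Monoid Subgroup

lemma fg_empty_eq_one {γ : Type} [IsEmpty γ] (w : FreeGroup γ) : w = 1 := by
  induction w using FreeGroup.induction_on with
  | C1 => rfl
  | of i => exact (IsEmpty.false i).elim
  | inv_of i ih => exact (IsEmpty.false i).elim
  | mul s t ihs iht => rw [ihs, iht, one_mul]

lemma fg_subsingleton_zpow {γ : Type} [Subsingleton γ] (i₀ : γ) (w : FreeGroup γ) :
    ∃ m : ℤ, w = (FreeGroup.of i₀) ^ m := by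
  induction w using FreeGroup.induction_on with
  | C1 => exact ⟨0, by simp⟩
  | of i => exact ⟨1, by rw [zpow_one, Subsingleton.elim i₀ i]⟩
  | inv_of i ih =>
    obtain ⟨m, hm⟩ := ih
    exact ⟨-m, by rw [hm, ← zpow_neg]⟩
  | mul s t ihs iht =>
    obtain ⟨m, hm⟩ := ihs
    obtain ⟨l, hl⟩ := iht
    exact ⟨m + l, by rw [hm, hl, zpow_add]⟩

lemma eq_bot_of_basis_empty {G : Type} [Group G] {A : Subgroup G} {ι : Type}
    [IsEmpty ι] (bA : FreeGroupBasis ι ↥A) : A = ⊥ := by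
  rw [Subgroup.eq_bot_iff_forall]
  intro t ht
  have h1 : bA.repr ⟨t, ht⟩ = 1 := fg_empty_eq_one _
  have : (⟨t, ht⟩ : ↥A) = 1 := by
    apply bA.repr.injective
    rw [h1, map_one]
  exact congrArg Subtype.val this

/-- A free factor in a two–generator free group is cyclic. -/
lemma cyclic_of_factor {A B : Subgroup F2} (hA : A ≠ ⊥) (hB : B ≠ ⊥)
    (hbij : Function.Bijective (Coprod.lift A.subtype B.subtype)) :
    ∃ u : F2, ∀ t, t ∈ A ↔ ∃ m : ℤ, t = u ^ m := by
  classical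
  obtain ⟨ιA, ⟨bA⟩⟩ := (subgroupIsFreeOfIsFree A).nonempty_basis
  obtain ⟨ιB, ⟨bB⟩⟩ := (subgroupIsFreeOfIsFree B).nonempty_basis
  -- both index types are nonempty
  have hneA : Nonempty ιA := by
    by_contra h
    rw [not_nonempty_iff] at h
    exact hA (eq_bot_of_basis_empty bA)
  have hneB : Nonempty ιB := by
    by_contra h
    rw [not_nonempty_iff] at h
    exact hB (eq_bot_of_basis_empty bB)
  -- hom counting
  have me : Coprod ↥A ↥B ≃* F2 := MulEquiv.ofBijective _ hbij
  have e0 : (F2 →* ℤˣ) ≃ (Coprod ↥A ↥B →* ℤˣ) :=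
    { toFun := fun f => f.comp me.toMonoidHom
      invFun := fun g => g.comp me.symm.toMonoidHom
      left_inv := fun f => MonoidHom.ext fun t => by simp
      right_inv := fun g => MonoidHom.ext fun t => by simp }
  have e : (Fin 2 → ℤˣ) ≃ ((ιA → ℤˣ) × (ιB → ℤˣ)) :=
    (FreeGroup.lift.trans (e0.trans Coprod.liftEquiv.symm)).trans
      (Equiv.prodCongr bA.lift.symm bB.lift.symm)
  have hcard : Nat.card (ιA → ℤˣ) * Nat.card (ιB → ℤˣ) = 4 := by
    rw [← Nat.card_prod, ← Nat.card_congr e, Nat.card_eq_fintype_card]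
    decide
  have hfinA : Finite (ιA → ℤˣ) := by
    have hne : Nat.card (ιA → ℤˣ) ≠ 0 := by
      intro h; rw [h, zero_mul] at hcard; simp at hcard
    exact (Nat.card_ne_zero.mp hne).2
  have hfinB : Finite (ιB → ℤˣ) := by
    have hne : Nat.card (ιB → ℤˣ) ≠ 0 := by
      intro h; rw [h, mul_zero] at hcard; simp at hcard
    exact (Nat.card_ne_zero.mp hne).2
  -- ιA is a subsingleton
  have hsub : Subsingleton ιA := by
    by_contra hns
    have hnt : Nontrivial ιA := not_subsingleton_iff_nontrivial.mp hns
    obtain ⟨i, j, hij⟩ := hnt.exists_pair_ne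
    have hinj : Function.Injective
        (fun v : ℤˣ × ℤˣ => (fun t : ιA => if t = i then v.1 else v.2)) := by
      intro v w h
      have h1 := congrFun h i
      have h2 := congrFun h j
      simp only [if_pos rfl] at h1
      simp only [if_neg (Ne.symm hij)] at h2
      exact Prod.ext h1 h2
    have h4 : 4 ≤ Nat.card (ιA → ℤˣ) := by
      have := Nat.card_le_card_of_injective _ hinj
      rwa [Nat.card_prod, Nat.card_eq_fintype_card, show Fintype.card ℤˣ = 2 by decide]
        at this
    have h2 : 2 ≤ Nat.card (ιB → ℤˣ) := by
      have hinj2 : Function.Injective (fun v : ℤˣ => (fun _ : ιB => v)) := by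
        intro v w h
        exact congrFun h (Classical.choice hneB)
      have := Nat.card_le_card_of_injective _ hinj2
      rwa [Nat.card_eq_fintype_card, show Fintype.card ℤˣ = 2 by decide] at this
    have := Nat.mul_le_mul h4 h2
    rw [hcard] at this
    omega
  obtain ⟨i₀⟩ := hneA
  refine ⟨↑(bA i₀), fun t => ⟨fun ht => ?_, fun ⟨m, hm⟩ => hm ▸ zpow_mem (bA i₀).2 m⟩⟩
  obtain ⟨m, hm⟩ := fg_subsingleton_zpow i₀ (bA.repr ⟨t, ht⟩)
  refine ⟨m, ?_⟩
  have : (⟨t, ht⟩ : ↥A) = (bA i₀) ^ m := by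
    apply bA.repr.injective
    rw [hm, map_zpow, bA.repr_apply_coe]
  calc t = ((⟨t, ht⟩ : ↥A) : F2) := rfl
    _ = ((bA i₀ ^ m : ↥A) : F2) := by rw [this]
    _ = (↑(bA i₀)) ^ m := by rw [SubgroupClass.coe_zpow]

end AuxSimp

namespace AuxSimp
open Monoid Subgroup

def εa : F2 →* Multiplicative ℤ := FreeGroup.lift ![Multiplicative.ofAdd 1, 1]
def εb : F2 →* Multiplicative ℤ := FreeGroup.lift ![1, Multiplicative.ofAdd 1]

lemma εa_a : εa a = Multiplicative.ofAdd 1 := by rw [εa, a, FreeGroup.lift_apply_of]; rfl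
lemma εa_b : εa b = 1 := by rw [εa, b, FreeGroup.lift_apply_of]; rfl
lemma εb_a : εb a = 1 := by rw [εb, a, FreeGroup.lift_apply_of]; rfl
lemma εb_b : εb b = Multiplicative.ofAdd 1 := by rw [εb, b, FreeGroup.lift_apply_of]; rfl

lemma εa_g (n : ℕ) : Multiplicative.toAdd (εa (a ^ n * b ^ n)) = (n : ℤ) := by
  rw [map_mul, map_pow, map_pow, εa_a, εa_b, one_pow, mul_one, toAdd_pow, toAdd_ofAdd]
  simp

lemma εb_g (n : ℕ) : Multiplicative.toAdd (εb (a ^ n * b ^ n)) = (n : ℤ) := by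
  rw [map_mul, map_pow, map_pow, εb_a, εb_b, one_pow, one_mul, toAdd_pow, toAdd_ofAdd]
  simp

lemma coords {u v : F2} (htop : Subgroup.closure {u, v} = ⊤) (t : F2) :
    ∃ i j : ℤ,
      Multiplicative.toAdd (εa t) = i * Multiplicative.toAdd (εa u) + j * Multiplicative.toAdd (εa v) ∧
      Multiplicative.toAdd (εb t) = i * Multiplicative.toAdd (εb u) + j * Multiplicative.toAdd (εb v) := by
  have ht : t ∈ Subgroup.closure {u, v} := by rw [htop]; trivial
  induction ht using Subgroup.closure_induction with
  | mem t ht =>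
    rcases ht with rfl | rfl
    · exact ⟨1, 0, by ring, by ring⟩
    · exact ⟨0, 1, by ring, by ring⟩
  | one => exact ⟨0, 0, by simp, by simp⟩
  | mul s t hs ht ihs iht =>
    obtain ⟨i, j, h1, h2⟩ := ihs
    obtain ⟨p, q, h3, h4⟩ := iht
    exact ⟨i + p, j + q, by rw [map_mul, toAdd_mul, h1, h3]; ring,
      by rw [map_mul, toAdd_mul, h2, h4]; ring⟩
  | inv s hs ihs =>
    obtain ⟨i, j, h1, h2⟩ := ihs
    exact ⟨-i, -j, by rw [map_inv, toAdd_inv, h1]; ring,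
      by rw [map_inv, toAdd_inv, h2]; ring⟩

open Complex

/-- The affine permutation `z ↦ α z + β` of `ℂ`, for `α ≠ 0`. -/
def affp (α β : ℂ) (hα : α ≠ 0) : Equiv.Perm ℂ where
  toFun z := α * z + β
  invFun z := α⁻¹ * (z - β)
  left_inv z := by field_simp; ring
  right_inv z := by field_simp; ring

lemma affp_apply (α β : ℂ) (hα : α ≠ 0) (z : ℂ) : affp α β hα z = α * z + β := rfl

lemma aff_pow (f : Equiv.Perm ℂ) (α β : ℂ) (hf : ∀ z, f z = α * z + β) (m : ℕ) :
    ∀ z, (f ^ m) z = α ^ m * z + (∑ i ∈ Finset.range m, α ^ i) * β := by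
  induction m with
  | zero => intro z; simp
  | succ m ih =>
    intro z
    rw [pow_succ', Equiv.Perm.mul_apply, hf, ih, geom_sum_succ]
    ring

lemma affine_contra (n : ℕ) (hn : 2 ≤ n) (u : F2)
    (hu1 : Multiplicative.toAdd (εa u) = 1) (hu2 : Multiplicative.toAdd (εb u) = 1) :
    a ^ n * b ^ n ≠ u ^ n := by
  intro heq
  have hn0 : (n : ℂ) ≠ 0 := Nat.cast_ne_zero.mpr (by omega)
  set ζ : ℂ := Complex.exp (Real.pi * I / n) with hζ
  have hζ0 : ζ ≠ 0 := Complex.exp_ne_zero _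
  have hζn : ζ ^ n = -1 := by
    rw [hζ, ← Complex.exp_nat_mul]
    have : (n : ℂ) * (Real.pi * I / n) = Real.pi * I := by field_simp
    rw [this, Complex.exp_pi_mul_I]
  have hζ1 : ζ ≠ 1 := by
    intro h
    rw [h, one_pow] at hζn
    norm_num at hζn
  have hζ2 : ζ ^ 2 ≠ 1 := by
    intro h
    have hexp : Complex.exp (Real.pi * I / n + Real.pi * I / n) = 1 := by
      rw [Complex.exp_add, ← hζ, ← pow_two]; exact h
    obtain ⟨k, hk⟩ := Complex.exp_eq_one_iff.mp hexp
    have hpi : (2 : ℂ) * Real.pi * I ≠ 0 := by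
      simp [Real.pi_ne_zero, Complex.I_ne_zero]
    have h1 : Real.pi * I / n + Real.pi * I / n = (k : ℂ) * (2 * Real.pi * I) := hk
    have h1' : (2 : ℂ) * Real.pi * I = (k : ℂ) * (2 * Real.pi * I) * n := by
      have := congrArg (fun z : ℂ => z * (n : ℂ)) h1
      rw [add_mul, div_mul_cancel₀ _ hn0] at this
      linear_combination this
    have h2 : ((2 : ℂ) * Real.pi * I) * 1 = ((2 : ℂ) * Real.pi * I) * ((k : ℂ) * n) := by
      linear_combination h1'
    have h2' : (1 : ℂ) = (k : ℂ) * (n : ℂ) := mul_left_cancel₀ hpi h2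
    have h3 : (1 : ℤ) = k * (n : ℤ) := by exact_mod_cast h2'
    have : (n : ℤ) ≤ 1 := Int.le_of_dvd one_pos ⟨k, by linarith [h3]⟩
    omega
  -- the representation by affine maps
  set Φc : F2 →* Equiv.Perm ℂ := FreeGroup.lift ![affp ζ 0 hζ0, affp ζ 1 hζ0] with hΦc
  have Φa : Φc a = affp ζ 0 hζ0 := by rw [hΦc, a, FreeGroup.lift_apply_of]; rfl
  have Φb : Φc b = affp ζ 1 hζ0 := by rw [hΦc, b, FreeGroup.lift_apply_of]; rfl
  have hform : ∀ t : F2, ∃ β : ℂ, ∀ z : ℂ,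
      Φc t z = ζ ^ (Multiplicative.toAdd (εa t) + Multiplicative.toAdd (εb t)) * z + β := by
    intro t
    induction t using FreeGroup.induction_on with
    | C1 =>
      refine ⟨0, fun z => ?_⟩
      simp [map_one, toAdd_one]
    | of i =>
      fin_cases i
      · refine ⟨0, fun z => ?_⟩
        show Φc a z = ζ ^ (Multiplicative.toAdd (εa a) + Multiplicative.toAdd (εb a)) * z + 0
        rw [Φa, affp_apply, εa_a, εb_a]
        simp
      · refine ⟨1, fun z => ?_⟩
        show Φc b z = ζ ^ (Multiplicative.toAdd (εa b) + Multiplicative.toAdd (εb b)) * z + 1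
        rw [Φb, affp_apply, εa_b, εb_b]
        simp
    | inv_of i ih =>
      show ∃ β : ℂ, ∀ z : ℂ, Φc ((FreeGroup.of i)⁻¹) z
        = ζ ^ (Multiplicative.toAdd (εa ((FreeGroup.of i)⁻¹)) +
            Multiplicative.toAdd (εb ((FreeGroup.of i)⁻¹))) * z + β
      obtain ⟨β, hβ0⟩ := ih
      have hβ : ∀ z : ℂ, Φc (FreeGroup.of i) z
          = ζ ^ (Multiplicative.toAdd (εa (FreeGroup.of i)) +
              Multiplicative.toAdd (εb (FreeGroup.of i))) * z + β := hβ0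
      set d : ℤ := Multiplicative.toAdd (εa (FreeGroup.of i)) +
        Multiplicative.toAdd (εb (FreeGroup.of i)) with hd
      refine ⟨-(ζ ^ (-d) * β), fun z => ?_⟩
      have hexp : Multiplicative.toAdd (εa (FreeGroup.of i)⁻¹) +
          Multiplicative.toAdd (εb (FreeGroup.of i)⁻¹) = -d := by
        simp only [map_inv, toAdd_inv]
        rw [hd]; ring
      rw [hexp]
      apply (Φc (FreeGroup.of i)).injective
      rw [map_inv]
      rw [show ∀ (f : Equiv.Perm ℂ) x, f (f⁻¹ x) = x from fun f x => f.apply_symm_apply x, hβ]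
      have hdd : ζ ^ d * ζ ^ (-d) = 1 := by
        rw [← zpow_add₀ hζ0, add_neg_cancel, zpow_zero]
      linear_combination (β - z) * hdd
    | mul s t ihs iht =>
      obtain ⟨βs, hs⟩ := ihs
      obtain ⟨βt, ht⟩ := iht
      refine ⟨ζ ^ (Multiplicative.toAdd (εa s) + Multiplicative.toAdd (εb s)) * βt + βs,
        fun z => ?_⟩
      have hsplit : ζ ^ (Multiplicative.toAdd (εa (s * t)) + Multiplicative.toAdd (εb (s * t)))
          = ζ ^ (Multiplicative.toAdd (εa s) + Multiplicative.toAdd (εb s)) *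
            ζ ^ (Multiplicative.toAdd (εa t) + Multiplicative.toAdd (εb t)) := by
        rw [← zpow_add₀ hζ0]
        congr 1
        simp only [map_mul, toAdd_mul]
        ring
      rw [map_mul, Equiv.Perm.mul_apply, ht, hs, hsplit]
      ring
  -- evaluate both sides at 0
  have ha' : ∀ z, Φc a z = ζ * z + 0 := fun z => by rw [Φa, affp_apply]
  have hb' : ∀ z, Φc b z = ζ * z + 1 := fun z => by rw [Φb, affp_apply]
  have hgval : Φc (a ^ n * b ^ n) 0 = -(∑ i ∈ Finset.range n, ζ ^ i) := by
    rw [map_mul, map_pow, map_pow, Equiv.Perm.mul_apply,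
      aff_pow _ ζ 1 hb' n 0, aff_pow _ ζ 0 ha' n _, hζn]
    ring
  have huval : Φc (u ^ n) 0 = 0 := by
    obtain ⟨β, hβu⟩ := hform u
    rw [hu1, hu2] at hβu
    have hz2 : ζ ^ ((1 : ℤ) + 1) = ζ ^ (2 : ℕ) := by
      rw [show ((1:ℤ) + 1) = ((2:ℕ) : ℤ) by norm_num, zpow_natCast]
    have hT : ∑ i ∈ Finset.range n, (ζ ^ (2 : ℕ)) ^ i = 0 := by
      rw [geom_sum_eq hζ2, ← pow_mul, mul_comm 2 n, pow_mul, hζn]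
      norm_num
    rw [map_pow, aff_pow _ (ζ ^ (2 : ℕ)) β (fun z => by rw [hβu z, hz2]) n 0, hT]
    ring
  have hS0 : ∑ i ∈ Finset.range n, ζ ^ i = 0 := by
    have h := hgval.symm.trans ((congrArg (fun t => Φc t 0) heq).trans huval)
    linear_combination -h
  have hSne : ∑ i ∈ Finset.range n, ζ ^ i ≠ 0 := by
    rw [geom_sum_eq hζ1, hζn]
    exact div_ne_zero (by norm_num) (sub_ne_zero.mpr hζ1)
  exact hSne hS0


lemma not_simple (n : ℕ) (hn : 2 ≤ n) : ¬ SimpleElem (a ^ n * b ^ n) := by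
  rintro ⟨A, B, hA, hB, hgA, hbij⟩
  obtain ⟨u, hu⟩ := cyclic_of_factor hA hB hbij
  -- the swapped lift is bijective as well
  have hswap : Function.Bijective (Coprod.swap ↥B ↥A : Coprod ↥B ↥A →* Coprod ↥A ↥B) := by
    refine Function.bijective_iff_has_inverse.mpr ⟨Coprod.swap ↥A ↥B, ?_, ?_⟩
    · exact fun x => DFunLike.congr_fun (Coprod.swap_comp_swap _ _) x
    · exact fun x => DFunLike.congr_fun (Coprod.swap_comp_swap _ _) x
  have hbij' : Function.Bijective (Coprod.lift B.subtype A.subtype) := by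
    have : Coprod.lift B.subtype A.subtype =
        (Coprod.lift A.subtype B.subtype).comp (Coprod.swap ↥B ↥A) := by
      rw [Coprod.lift_comp_swap]
    rw [this]
    exact hbij.comp hswap
  obtain ⟨v, hv⟩ := cyclic_of_factor hB hA hbij'
  -- u and v generate
  have htop : Subgroup.closure {u, v} = ⊤ := by
    have hrange : A ⊔ B = ⊤ := by
      have := MonoidHom.range_eq_top.mpr hbij.surjective
      rwa [Coprod.range_lift, Subgroup.subtype_range, Subgroup.subtype_range] at this
    rw [eq_top_iff, ← hrange]
    apply sup_le
    · intro t ht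
      obtain ⟨m, rfl⟩ := (hu t).mp ht
      exact zpow_mem (Subgroup.subset_closure (by simp)) m
    · intro t ht
      obtain ⟨m, rfl⟩ := (hv t).mp ht
      exact zpow_mem (Subgroup.subset_closure (by simp)) m
  set u1 := Multiplicative.toAdd (εa u) with hu1
  set u2 := Multiplicative.toAdd (εb u) with hu2
  set v1 := Multiplicative.toAdd (εa v) with hv1
  set v2 := Multiplicative.toAdd (εb v) with hv2
  obtain ⟨i, j, eqa1, eqa2⟩ := coords htop a
  obtain ⟨p, q, eqb1, eqb2⟩ := coords htop b
  rw [εa_a, toAdd_ofAdd] at eqa1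
  rw [εb_a] at eqa2; rw [toAdd_one] at eqa2
  rw [εa_b] at eqb1; rw [toAdd_one] at eqb1
  rw [εb_b, toAdd_ofAdd] at eqb2
  -- g = u ^ m
  obtain ⟨m, hm⟩ := (hu _).mp hgA
  have hna : (n : ℤ) = m * u1 := by
    rw [← εa_g n, hm, map_zpow, toAdd_zpow, hu1]; simp [zsmul_eq_mul]
  have hnb : (n : ℤ) = m * u2 := by
    rw [← εb_g n, hm, map_zpow, toAdd_zpow, hu2]; simp [zsmul_eq_mul]
  have hm0 : m ≠ 0 := by
    intro h
    rw [h, zero_mul] at hna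
    omega
  have hu12 : u1 = u2 := mul_left_cancel₀ hm0 (hna.symm.trans hnb)
  have key : (i * q - j * p) * (u1 * v2 - u2 * v1) = 1 := by
    calc (i * q - j * p) * (u1 * v2 - u2 * v1)
        = (i * u1 + j * v1) * (p * u2 + q * v2)
          - (i * u2 + j * v2) * (p * u1 + q * v1) := by ring
      _ = 1 * 1 - 0 * 0 := by rw [← eqa1, ← eqa2, ← eqb1, ← eqb2]
      _ = 1 := by ring
  have key2 : u1 * ((v2 - v1) * (i * q - j * p)) = 1 := by
    linear_combination key - (i * q - j * p) * v1 * hu12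
  have hu1pm : u1 = 1 ∨ u1 = -1 := Int.isUnit_iff.mp (IsUnit.of_mul_eq_one _ key2)
  rcases hu1pm with h1 | h1
  · -- u1 = 1, m = n, g = u ^ n
    have hmn : m = (n : ℤ) := by rw [hna, h1, mul_one]
    have hgun : a ^ n * b ^ n = u ^ n := by
      rw [hm, hmn, zpow_natCast]
    exact affine_contra n hn u (by rw [← hu1, h1]) (by rw [← hu2, ← hu12, h1]) hgun
  · -- u1 = -1, m = -n, g = (u⁻¹) ^ n
    have hmn : m = -(n : ℤ) := by rw [hna, h1]; ring
    have hgun : a ^ n * b ^ n = (u⁻¹) ^ n := by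
      rw [hm, hmn, inv_pow, ← zpow_natCast u, ← zpow_neg]
    refine affine_contra n hn u⁻¹ ?_ ?_ hgun
    · rw [map_inv, toAdd_inv, ← hu1, h1]; ring
    · rw [map_inv, toAdd_inv, ← hu2, ← hu12, h1]; ring

end AuxSimp

theorem dSimp_anbn (n : ℕ) (hn : 2 ≤ n) : dSimp (a ^ n * b ^ n) = 2 := by
  rw [dSimp]
  have mem2 : 2 ∈ {k : ℕ | 0 < k ∧ ∃ H : Subgroup F2, H.index = k ∧
      ∃ hg : a ^ n * b ^ n ∈ H, SimpleElem (⟨a ^ n * b ^ n, hg⟩ : H)} :=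
    ⟨by norm_num, AuxSimp.Hker, AuxSimp.H_index, AuxSimp.g_mem n, AuxSimp.upper n⟩
  have not1 : 1 ∉ {k : ℕ | 0 < k ∧ ∃ H : Subgroup F2, H.index = k ∧
      ∃ hg : a ^ n * b ^ n ∈ H, SimpleElem (⟨a ^ n * b ^ n, hg⟩ : H)} := by
    rintro ⟨-, H, hidx, hg, hsimp⟩
    have hH : H = ⊤ := Subgroup.index_eq_one.mp hidx
    subst hH
    have := AuxSimp.simpleElem_congr Subgroup.topEquiv hsimp
    exact AuxSimp.not_simple n hn this
  apply le_antisymm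
  · exact Nat.sInf_le mem2
  · apply le_csInf ⟨2, mem2⟩
    intro m hm
    rcases Nat.lt_or_ge m 2 with h | h
    · interval_cases m
      · exact absurd hm.1 (by norm_num)
      · exact absurd hm not1
    · exact h
end
end

section
/- Let n, t ≥ 1 and let d, d' ≥ 2 be integers with d ∤ n, d' ∤ t, d ≤ n, and d' ≤ t. Then d_simp(a^n b^t; F₂) ≤ d_prim(a^n b^t; F₂) ≤ d + d' − 2. -/
set_option maxHeartbeats 1000000


noncomputable section

namespace Aux
open Monoid

/-- The 2x2 integer matrix representation sending a, b to unipotent matrices. -/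
def MA : Matrix.SpecialLinearGroup (Fin 2) ℤ :=
  ⟨!![1, 2; 0, 1], by simp [Matrix.det_fin_two_of]⟩

def MB : Matrix.SpecialLinearGroup (Fin 2) ℤ :=
  ⟨!![1, 0; 2, 1], by simp [Matrix.det_fin_two_of]⟩

def rep : F2 →* Matrix.SpecialLinearGroup (Fin 2) ℤ :=
  FreeGroup.lift (fun i => if i = 0 then MA else MB)

lemma rep_a : rep a = MA := by simp [rep, a, FreeGroup.lift_apply_of]

lemma rep_b : rep b = MB := by simp [rep, b, FreeGroup.lift_apply_of]

lemma MA_pow (s : ℕ) : ((MA ^ s : Matrix.SpecialLinearGroup (Fin 2) ℤ) : Matrix (Fin 2) (Fin 2) ℤ)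
    = !![1, 2*(s:ℤ); 0, 1] := by
  induction s with
  | zero => simp [Matrix.one_fin_two]
  | succ k ih =>
      rw [pow_succ, Matrix.SpecialLinearGroup.coe_mul, ih]
      show _ * (MA : Matrix (Fin 2) (Fin 2) ℤ) = _
      rw [MA]
      simp [Matrix.mul_fin_two]
      ring

lemma MB_pow (s : ℕ) : ((MB ^ s : Matrix.SpecialLinearGroup (Fin 2) ℤ) : Matrix (Fin 2) (Fin 2) ℤ)
    = !![1, 0; 2*(s:ℤ), 1] := by
  induction s with
  | zero => simp [Matrix.one_fin_two]
  | succ k ih =>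
      rw [pow_succ, Matrix.SpecialLinearGroup.coe_mul, ih]
      show _ * (MB : Matrix (Fin 2) (Fin 2) ℤ) = _
      rw [MB]
      simp [Matrix.mul_fin_two]
      ring

lemma pow_noncomm {s u : ℕ} (hs : 0 < s) (hu : 0 < u) : a ^ s * b ^ u ≠ b ^ u * a ^ s := by
  intro h
  have h2 := congrArg rep h
  rw [map_mul, map_mul, map_pow, map_pow, rep_a, rep_b] at h2
  have h3 := congrArg (fun M : Matrix.SpecialLinearGroup (Fin 2) ℤ =>
    (M : Matrix (Fin 2) (Fin 2) ℤ) 0 0) h2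
  simp only [Matrix.SpecialLinearGroup.coe_mul, MA_pow, MB_pow] at h3
  rw [Matrix.mul_fin_two, Matrix.mul_fin_two] at h3
  norm_num at h3
  have : (0:ℤ) < (s:ℤ) * (u:ℤ) := by positivity
  omega

/-- A free group on a subsingleton type is commutative. -/
lemma freeGroup_subsingleton_comm {ι : Type*} [Subsingleton ι] (x y : FreeGroup ι) :
    Commute x y := by
  induction x using FreeGroup.induction_on with
  | C1 => exact Commute.one_left y
  | of i =>
      induction y using FreeGroup.induction_on with
      | C1 => exact Commute.one_right _
      | of j => rw [Subsingleton.elim i j]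
      | inv_of j hj => exact hj.inv_right
      | mul y z hy hz => exact hy.mul_right hz
  | inv_of i hi => exact hi.inv_left
  | mul x z hx hz => exact hx.mul_left hz


lemma simple_of_basis {G : Type*} [Group G] {ι : Type*} (bas : FreeGroupBasis ι G)
    (i₀ j₀ : ι) (hne : j₀ ≠ i₀) : SimpleElem (bas i₀) := by
  classical
  set e := bas.repr with he
  have hbas : ∀ i, bas i = e.symm (FreeGroup.of i) := fun i => rfl
  have hrep : ∀ i, e (bas i) = FreeGroup.of i := fun i => bas.repr_apply_coe i
  set A : Subgroup G := Subgroup.map e.symm.toMonoidHom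
    (Subgroup.closure {FreeGroup.of i₀}) with hA
  set B : Subgroup G := Subgroup.map e.symm.toMonoidHom
    (Subgroup.closure (FreeGroup.of '' {i | i ≠ i₀})) with hB
  have memA : bas i₀ ∈ A :=
    ⟨FreeGroup.of i₀, Subgroup.subset_closure rfl, rfl⟩
  have memB : ∀ i, i ≠ i₀ → bas i ∈ B := fun i hi =>
    ⟨FreeGroup.of i, Subgroup.subset_closure ⟨i, hi, rfl⟩, rfl⟩
  set L := Coprod.lift A.subtype B.subtype with hL
  set χ : G →* Coprod A B :=
    (FreeGroup.lift (fun i => if h : i = i₀ then Coprod.inl (⟨bas i₀, memA⟩ : A)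
      else Coprod.inr (⟨bas i, memB i h⟩ : B))).comp e.toMonoidHom with hχ
  have hχ_bas : ∀ i, χ (bas i) = if h : i = i₀ then Coprod.inl (⟨bas i₀, memA⟩ : A)
      else Coprod.inr (⟨bas i, memB i h⟩ : B) := by
    intro i
    simp only [hχ, MonoidHom.comp_apply, MulEquiv.coe_toMonoidHom, hrep i, FreeGroup.lift_apply_of]
  have hLχ_bas : ∀ i, L (χ (bas i)) = bas i := by
    intro i
    rw [hχ_bas i]
    by_cases h : i = i₀
    · subst h; rw [dif_pos rfl, hL, Coprod.lift_apply_inl, Subgroup.coe_subtype]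
    · rw [dif_neg h, hL, Coprod.lift_apply_inr, Subgroup.coe_subtype]
  -- L ∘ χ = id
  have comp1 : ∀ g : G, L (χ g) = g := by
    have : (L.comp χ).comp e.symm.toMonoidHom = e.symm.toMonoidHom := by
      apply FreeGroup.ext_hom
      intro i
      simp only [MonoidHom.comp_apply, MulEquiv.coe_toMonoidHom]
      exact hLχ_bas i
    intro g
    have := DFunLike.congr_fun this (e g)
    simpa using this
  -- χ ∘ L = id
  have hχA : ∀ x : A, χ (x : G) = Coprod.inl x := by
    have claim : ∀ y ∈ Subgroup.closure {FreeGroup.of i₀}, ∃ hm : e.symm.toMonoidHom y ∈ A,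
        χ (e.symm.toMonoidHom y) = Coprod.inl ⟨e.symm.toMonoidHom y, hm⟩ := by
      intro y hy
      induction hy using Subgroup.closure_induction with
      | mem z hz =>
          rcases hz with rfl
          refine ⟨memA, ?_⟩
          have h1 : χ (e.symm.toMonoidHom (FreeGroup.of i₀)) = χ (bas i₀) := rfl
          rw [h1, hχ_bas i₀, dif_pos rfl]
          exact congrArg _ (Subtype.ext rfl)
      | one =>
          refine ⟨(map_one e.symm.toMonoidHom).symm ▸ one_mem A, ?_⟩
          have h1 : ∀ hm : e.symm.toMonoidHom (1 : FreeGroup ι) ∈ A,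
              (⟨e.symm.toMonoidHom 1, hm⟩ : A) = 1 := fun hm => Subtype.ext (by simp)
          simp only [h1, map_one]
          exact (map_one _).symm.trans (congrArg _ (Subtype.ext rfl))
      | mul y z hy hz ihy ihz =>
          obtain ⟨hmy, ihy⟩ := ihy
          obtain ⟨hmz, ihz⟩ := ihz
          refine ⟨(map_mul e.symm.toMonoidHom y z).symm ▸ mul_mem hmy hmz, ?_⟩
          have h1 : ∀ hm : e.symm.toMonoidHom (y * z) ∈ A,
              (⟨e.symm.toMonoidHom (y*z), hm⟩ : A)
              = ⟨e.symm.toMonoidHom y, hmy⟩ * ⟨e.symm.toMonoidHom z, hmz⟩ :=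
            fun hm => Subtype.ext (by simp)
          simp only [h1, map_mul, ihy, ihz]
          exact (map_mul _ _ _).symm.trans (congrArg _ (Subtype.ext rfl))
      | inv y hy ihy =>
          obtain ⟨hmy, ihy⟩ := ihy
          refine ⟨(map_inv e.symm.toMonoidHom y).symm ▸ inv_mem hmy, ?_⟩
          have h1 : ∀ hm : e.symm.toMonoidHom y⁻¹ ∈ A,
              (⟨e.symm.toMonoidHom y⁻¹, hm⟩ : A) = (⟨e.symm.toMonoidHom y, hmy⟩ : A)⁻¹ :=
            fun hm => Subtype.ext (by simp)
          simp only [h1, map_inv, ihy]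
          exact (map_inv _ _).symm.trans (congrArg _ (Subtype.ext rfl))
    rintro ⟨x, y, hy, rfl⟩
    obtain ⟨hm, hh⟩ := claim y hy
    rw [hh]
  have hχB : ∀ x : B, χ (x : G) = Coprod.inr x := by
    have claim : ∀ y ∈ Subgroup.closure (FreeGroup.of '' {i | i ≠ i₀}),
        ∃ hm : e.symm.toMonoidHom y ∈ B,
        χ (e.symm.toMonoidHom y) = Coprod.inr ⟨e.symm.toMonoidHom y, hm⟩ := by
      intro y hy
      induction hy using Subgroup.closure_induction with
      | mem z hz =>
          obtain ⟨i, hi, rfl⟩ := hz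
          refine ⟨memB i hi, ?_⟩
          have h1 : χ (e.symm.toMonoidHom (FreeGroup.of i)) = χ (bas i) := rfl
          rw [h1, hχ_bas i, dif_neg hi]
          exact congrArg _ (Subtype.ext rfl)
      | one =>
          refine ⟨(map_one e.symm.toMonoidHom).symm ▸ one_mem B, ?_⟩
          have h1 : ∀ hm : e.symm.toMonoidHom (1 : FreeGroup ι) ∈ B,
              (⟨e.symm.toMonoidHom 1, hm⟩ : B) = 1 := fun hm => Subtype.ext (by simp)
          simp only [h1, map_one]
          exact (map_one _).symm.trans (congrArg _ (Subtype.ext rfl))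
      | mul y z hy hz ihy ihz =>
          obtain ⟨hmy, ihy⟩ := ihy
          obtain ⟨hmz, ihz⟩ := ihz
          refine ⟨(map_mul e.symm.toMonoidHom y z).symm ▸ mul_mem hmy hmz, ?_⟩
          have h1 : ∀ hm : e.symm.toMonoidHom (y * z) ∈ B,
              (⟨e.symm.toMonoidHom (y*z), hm⟩ : B)
              = ⟨e.symm.toMonoidHom y, hmy⟩ * ⟨e.symm.toMonoidHom z, hmz⟩ :=
            fun hm => Subtype.ext (by simp)
          simp only [h1, map_mul, ihy, ihz]
          exact (map_mul _ _ _).symm.trans (congrArg _ (Subtype.ext rfl))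
      | inv y hy ihy =>
          obtain ⟨hmy, ihy⟩ := ihy
          refine ⟨(map_inv e.symm.toMonoidHom y).symm ▸ inv_mem hmy, ?_⟩
          have h1 : ∀ hm : e.symm.toMonoidHom y⁻¹ ∈ B,
              (⟨e.symm.toMonoidHom y⁻¹, hm⟩ : B) = (⟨e.symm.toMonoidHom y, hmy⟩ : B)⁻¹ :=
            fun hm => Subtype.ext (by simp)
          simp only [h1, map_inv, ihy]
          exact (map_inv _ _).symm.trans (congrArg _ (Subtype.ext rfl))
    rintro ⟨x, y, hy, rfl⟩
    obtain ⟨hm, hh⟩ := claim y hy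
    rw [hh]
  have comp2 : ∀ x : Coprod A B, χ (L x) = x := by
    have : χ.comp L = MonoidHom.id _ := by
      apply Coprod.hom_ext
      · ext x
        simp only [MonoidHom.comp_apply, MonoidHom.id_apply]
        rw [hL, Coprod.lift_apply_inl]
        exact hχA x
      · ext x
        simp only [MonoidHom.comp_apply, MonoidHom.id_apply]
        rw [hL, Coprod.lift_apply_inr]
        exact hχB x
    intro x
    exact DFunLike.congr_fun this x
  refine ⟨A, B, ?_, ?_, memA, ?_⟩
  · intro hbot
    rw [hbot, Subgroup.mem_bot] at memA
    have := hrep i₀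
    rw [memA, map_one] at this
    exact FreeGroup.of_ne_one i₀ this.symm
  · intro hbot
    have := memB j₀ hne
    rw [hbot, Subgroup.mem_bot] at this
    have h2 := hrep j₀
    rw [this, map_one] at h2
    exact FreeGroup.of_ne_one j₀ h2.symm
  · exact ⟨fun x y h => by rw [← comp2 x, ← comp2 y, h], fun g => ⟨χ g, comp1 g⟩⟩


lemma exists_second (H : Subgroup F2) (hidx : H.index ≠ 0) {ι : Type*}
    (bas : FreeGroupBasis ι H) (i : ι) : ∃ j : ι, j ≠ i := by
  by_contra hcon
  push_neg at hcon
  have hsub : Subsingleton ι := ⟨fun x y => (hcon x).trans (hcon y).symm⟩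
  have hcomm : ∀ x y : H, x * y = y * x := by
    intro x y
    have h2 := freeGroup_subsingleton_comm (ι := ι) (bas.repr x) (bas.repr y)
    apply bas.repr.injective
    rw [map_mul, map_mul]
    exact h2
  obtain ⟨s, hs, _, hsa⟩ := Subgroup.exists_pow_mem_of_index_ne_zero hidx a
  obtain ⟨u, hu, _, hub⟩ := Subgroup.exists_pow_mem_of_index_ne_zero hidx b
  have h3 := hcomm ⟨a^s, hsa⟩ ⟨b^u, hub⟩
  have h4 : a^s * b^u = b^u * a^s := congrArg Subtype.val h3
  exact pow_noncomm hs hu h4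
end Aux

namespace Constr

variable (DD K tt rdel : ℕ)

abbrev V := (Fin (DD+2)) ⊕ (Fin K)

def v0 : V DD K := Sum.inl ⟨0, by omega⟩

def zR : V DD K := Sum.inl ⟨(rdel+1) % (DD+2), Nat.mod_lt _ (by omega)⟩

def pmap (i : ℕ) : V DD K :=
  if h1 : 1 ≤ i ∧ i ≤ tt ∧ i - 1 < K then Sum.inr ⟨i-1, h1.2.2⟩
  else if i = tt + 1 then zR DD K rdel
  else if h3 : tt+1 < i ∧ i ≤ K+1 ∧ i - 2 < K then Sum.inr ⟨i-2, h3.2.2⟩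
  else v0 DD K

def σa : Equiv.Perm (V DD K) :=
  Equiv.sumCongr (Equiv.addRight (1 : Fin (DD+2))) (Equiv.refl _)

def pmapF : Fin (K+2) → V DD K := fun i => pmap DD K tt rdel i.val

def σb : Equiv.Perm (V DD K) := by
  classical
  exact if h : Function.Injective (pmapF DD K tt rdel) then
    (finRotate (K+2)).extendDomain (Equiv.ofInjective _ h) else Equiv.refl _

abbrev GenT := (Fin 3) ⊕ ((Fin K) ⊕ {j : Fin (DD+2) // (j:ℕ) ≠ 0 ∧ (j:ℕ) ≠ rdel + 1})

def gX : GenT DD K rdel := Sum.inl 0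
def gY : GenT DD K rdel := Sum.inl 1
def gZ : GenT DD K rdel := Sum.inl 2
def gA (i : Fin K) : GenT DD K rdel := Sum.inr (Sum.inl i)
def gB (j : {j : Fin (DD+2) // (j:ℕ) ≠ 0 ∧ (j:ℕ) ≠ rdel + 1}) : GenT DD K rdel :=
  Sum.inr (Sum.inr j)

def ca : V DD K → FreeGroup (GenT DD K rdel)
  | Sum.inl j => if (j:ℕ) = DD+1 then FreeGroup.of (gX DD K rdel) else 1
  | Sum.inr i => FreeGroup.of (gA DD K rdel i)

def cb : V DD K → FreeGroup (GenT DD K rdel)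
  | Sum.inl j =>
      if h0 : (j:ℕ) = 0 then (if tt = 0 then FreeGroup.of (gY DD K rdel) else 1)
      else if hr : (j:ℕ) = rdel+1 then
        (if tt+1 = K+1 then FreeGroup.of (gZ DD K rdel) else 1)
      else FreeGroup.of (gB DD K rdel ⟨j, h0, hr⟩)
  | Sum.inr i =>
      if (i:ℕ)+2 = tt+1 then FreeGroup.of (gY DD K rdel)
      else if (i:ℕ)+1 = K then FreeGroup.of (gZ DD K rdel) else 1

def skewPerm {V' G : Type*} [Group G] (σ : Equiv.Perm V') (c : V' → G) :
    Equiv.Perm (V' × G) where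
  toFun x := (σ x.1, c x.1 * x.2)
  invFun x := (σ.symm x.1, (c (σ.symm x.1))⁻¹ * x.2)
  left_inv := by intro x; simp
  right_inv := by intro x; simp

def Θ : F2 →* Equiv.Perm (V DD K × FreeGroup (GenT DD K rdel)) :=
  FreeGroup.lift (fun i => if i = 0 then skewPerm (σa DD K) (ca DD K rdel)
    else skewPerm (σb DD K tt rdel) (cb DD K tt rdel))

def coc (g : F2) (v : V DD K) : FreeGroup (GenT DD K rdel) := (Θ DD K tt rdel g (v, 1)).2

def perS (g : F2) (v : V DD K) : V DD K := (Θ DD K tt rdel g (v, 1)).1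

def sfun : V DD K → F2
  | Sum.inl j => (a^(j:ℕ))⁻¹
  | Sum.inr i => if (i:ℕ)+2 ≤ tt+1 then (b^((i:ℕ)+1))⁻¹
      else (a^(rdel+1))⁻¹ * (b^((i:ℕ)+2-(tt+1)))⁻¹

def famele : GenT DD K rdel → F2 :=
  fun g => match g with
  | Sum.inl i =>
      if i = 0 then a^(DD+2)
      else if i = 1 then (a^(rdel+1))⁻¹ * b^(tt+1)
      else b^(K+1-tt) * a^(rdel+1)
  | Sum.inr (Sum.inl i) =>
      sfun DD K tt rdel (Sum.inr i) * (a * (sfun DD K tt rdel (Sum.inr i))⁻¹)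
  | Sum.inr (Sum.inr j) => (a^((j.1:ℕ)))⁻¹ * (b * a^((j.1:ℕ)))

def φc : FreeGroup (GenT DD K rdel) →* F2 := FreeGroup.lift (famele DD K tt rdel)

/-! ### Evaluation lemmas -/

lemma Θ_a : Θ DD K tt rdel a = skewPerm (σa DD K) (ca DD K rdel) := by
  simp [Θ, a, FreeGroup.lift_apply_of]

lemma Θ_b : Θ DD K tt rdel b = skewPerm (σb DD K tt rdel) (cb DD K tt rdel) := by
  simp [Θ, b, FreeGroup.lift_apply_of]

lemma Θ_eval (g : F2) (v : V DD K) (w : FreeGroup (GenT DD K rdel)) :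
    Θ DD K tt rdel g (v, w) = (perS DD K tt rdel g v, coc DD K tt rdel g v * w) := by
  have key : ∀ (σ : Equiv.Perm (V DD K)) (c : V DD K → FreeGroup (GenT DD K rdel)) v w,
      skewPerm σ c (v, w) = ((skewPerm σ c (v,1)).1, (skewPerm σ c (v,1)).2 * w) := by
    intro σ c v w; simp [skewPerm]
  have key2 : ∀ (σ : Equiv.Perm (V DD K)) (c : V DD K → FreeGroup (GenT DD K rdel)) v w,
      (skewPerm σ c)⁻¹ (v, w) = (((skewPerm σ c)⁻¹ (v,1)).1, ((skewPerm σ c)⁻¹ (v,1)).2 * w) := by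
    intro σ c v w
    simp only [Equiv.Perm.inv_def, skewPerm, Equiv.coe_fn_symm_mk, mul_one]
  induction g using FreeGroup.induction_on generalizing v w with
  | C1 => simp only [map_one, Equiv.Perm.coe_one, id_eq, perS, coc, one_mul]
  | of x =>
      have h1 : Θ DD K tt rdel (FreeGroup.of x) = if x = 0 then skewPerm (σa DD K) (ca DD K rdel)
          else skewPerm (σb DD K tt rdel) (cb DD K tt rdel) := FreeGroup.lift_apply_of
      simp only [perS, coc, h1]
      by_cases hx : x = 0
      · rw [if_pos hx]; exact key _ _ v w
      · rw [if_neg hx]; exact key _ _ v w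
  | inv_of x _ =>
      have h1 : Θ DD K tt rdel (FreeGroup.of x) = if x = 0 then skewPerm (σa DD K) (ca DD K rdel)
          else skewPerm (σb DD K tt rdel) (cb DD K tt rdel) := FreeGroup.lift_apply_of
      simp only [perS, coc, map_inv, h1]
      by_cases hx : x = 0
      · rw [if_pos hx]; exact key2 _ _ v w
      · rw [if_neg hx]; exact key2 _ _ v w
  | mul x y ihx ihy =>
      simp only [perS, coc, map_mul, Equiv.Perm.mul_apply]
      rw [ihy v w, ihx, ihy v 1, ihx, mul_assoc]
      simp

lemma perS_one (v : V DD K) : perS DD K tt rdel 1 v = v := by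
  simp only [perS, map_one, Equiv.Perm.coe_one, id_eq]

lemma coc_one (v : V DD K) : coc DD K tt rdel 1 v = 1 := by
  simp only [coc, map_one, Equiv.Perm.coe_one, id_eq]

lemma perS_mul (g h : F2) (v : V DD K) :
    perS DD K tt rdel (g*h) v = perS DD K tt rdel g (perS DD K tt rdel h v) := by
  have := Θ_eval DD K tt rdel (g*h) v 1
  rw [map_mul, Equiv.Perm.mul_apply, Θ_eval DD K tt rdel h v 1,
    Θ_eval DD K tt rdel g _ _] at this
  have h2 := congrArg Prod.fst this
  simpa [perS] using h2.symm

lemma coc_mul (g h : F2) (v : V DD K) :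
    coc DD K tt rdel (g*h) v
      = coc DD K tt rdel g (perS DD K tt rdel h v) * coc DD K tt rdel h v := by
  have := Θ_eval DD K tt rdel (g*h) v 1
  rw [map_mul, Equiv.Perm.mul_apply, Θ_eval DD K tt rdel h v 1,
    Θ_eval DD K tt rdel g _ _] at this
  have h2 := congrArg Prod.snd this
  simpa [coc] using h2.symm

lemma perS_inv_eq {g : F2} {v w : V DD K} (h : perS DD K tt rdel g v = w) :
    perS DD K tt rdel g⁻¹ w = v := by
  rw [← h, ← perS_mul, inv_mul_cancel, perS_one]

lemma coc_inv_eq {g : F2} {v w : V DD K} (h : perS DD K tt rdel g v = w) :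
    coc DD K tt rdel g⁻¹ w = (coc DD K tt rdel g v)⁻¹ := by
  have h1 := coc_mul DD K tt rdel g g⁻¹ w
  rw [mul_inv_cancel, coc_one, perS_inv_eq DD K tt rdel h] at h1
  exact (mul_eq_one_iff_inv_eq.mp h1.symm).symm

lemma perS_a (v : V DD K) : perS DD K tt rdel a v = σa DD K v := by
  simp [perS, Θ_a, skewPerm]

lemma coc_a (v : V DD K) : coc DD K tt rdel a v = ca DD K rdel v := by
  simp [coc, Θ_a, skewPerm]

lemma perS_b (v : V DD K) : perS DD K tt rdel b v = σb DD K tt rdel v := by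
  simp [perS, Θ_b, skewPerm]

lemma coc_b (v : V DD K) : coc DD K tt rdel b v = cb DD K tt rdel v := by
  simp [coc, Θ_b, skewPerm]


/-! ### permutation evaluations -/

lemma σa_inl (j : Fin (DD+2)) : σa DD K (Sum.inl j) = Sum.inl (j + 1) := by
  simp [σa]

lemma σa_inl_lt {j : ℕ} (h : j + 1 < DD + 2) (hj : j < DD+2) :
    σa DD K (Sum.inl ⟨j, hj⟩) = Sum.inl ⟨j+1, h⟩ := by
  rw [σa_inl]
  congr 1
  rw [Fin.add_def]
  congr 1
  simp [Fin.val_one]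
  omega

lemma σa_inl_top : σa DD K (Sum.inl ⟨DD+1, by omega⟩) = v0 DD K := by
  rw [σa_inl]
  unfold v0
  congr 1
  rw [Fin.add_def]
  congr 1
  simp [Fin.val_one]

lemma σa_inr (i : Fin K) : σa DD K (Sum.inr i) = Sum.inr i := by simp [σa]

lemma pmap_zero : pmap DD K tt rdel 0 = v0 DD K := by
  unfold pmap
  rw [dif_neg (by omega), if_neg (by omega), dif_neg (by omega)]

lemma pmap_t' (hrdel : rdel ≤ DD) :
    pmap DD K tt rdel (tt+1) = Sum.inl ⟨rdel+1, by omega⟩ := by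
  unfold pmap
  rw [dif_neg (by omega), if_pos rfl]
  unfold zR
  congr 1
  apply Fin.ext
  simp
  omega

lemma pmap_first {i : ℕ} (h1 : 1 ≤ i) (h2 : i ≤ tt) (hk : i - 1 < K) :
    pmap DD K tt rdel i = Sum.inr ⟨i-1, hk⟩ := by
  unfold pmap
  rw [dif_pos ⟨h1, h2, hk⟩]

lemma pmap_second {i : ℕ} (h1 : tt+1 < i) (h2 : i ≤ K+1) (hk : i - 2 < K) :
    pmap DD K tt rdel i = Sum.inr ⟨i-2, hk⟩ := by
  unfold pmap
  rw [dif_neg (by omega), if_neg (by omega), dif_pos ⟨h1, h2, hk⟩]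

def winv : V DD K → ℕ := fun v => match v with
  | Sum.inl j => if (j:ℕ) = 0 then 0 else tt+1
  | Sum.inr i => if (i:ℕ)+1 ≤ tt then (i:ℕ)+1 else (i:ℕ)+2

lemma winv_pmap (htt : tt ≤ K) (hrdel : rdel ≤ DD) {i : ℕ} (hi : i ≤ K+1) :
    winv DD K tt (pmap DD K tt rdel i) = i := by
  rcases Nat.eq_zero_or_pos i with rfl | hpos
  · rw [pmap_zero]; simp [winv, v0]
  by_cases c1 : i ≤ tt
  · rw [pmap_first DD K tt rdel hpos c1 (by omega)]
    simp only [winv]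
    rw [if_pos (by omega)]
    omega
  by_cases c2 : i = tt+1
  · subst c2
    rw [pmap_t' DD K tt rdel hrdel]
    simp only [winv]
    rw [if_neg (by simp)]
  · rw [pmap_second DD K tt rdel (by omega) hi (by omega)]
    simp only [winv]
    rw [if_neg (by simp; omega)]
    omega

lemma pinj (htt : tt ≤ K) (hrdel : rdel ≤ DD) :
    Function.Injective (pmapF DD K tt rdel) := by
  intro x y hxy
  apply Fin.ext
  have h1 := winv_pmap DD K tt rdel htt hrdel (i := x.val) (by omega)
  have h2 := winv_pmap DD K tt rdel htt hrdel (i := y.val) (by omega)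
  rw [← h1, ← h2]
  unfold pmapF at hxy
  rw [hxy]

lemma σb_pm (htt : tt ≤ K) (hrdel : rdel ≤ DD) {i : ℕ} (hi : i < K+2) :
    σb DD K tt rdel (pmap DD K tt rdel i) = pmap DD K tt rdel ((i+1) % (K+2)) := by
  classical
  unfold σb
  rw [dif_pos (pinj DD K tt rdel htt hrdel)]
  have h1 : pmap DD K tt rdel i = pmapF DD K tt rdel ⟨i, hi⟩ := rfl
  rw [h1]
  have h2 : ((finRotate (K+2)).extendDomain
        (Equiv.ofInjective _ (pinj DD K tt rdel htt hrdel))) (pmapF DD K tt rdel ⟨i, hi⟩)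
      = pmapF DD K tt rdel (finRotate (K+2) ⟨i, hi⟩) :=
    Equiv.Perm.extendDomain_apply_image (finRotate (K+2))
      (Equiv.ofInjective _ (pinj DD K tt rdel htt hrdel)) ⟨i, hi⟩
  rw [h2]
  unfold pmapF
  congr 1
  rw [finRotate_succ_apply, Fin.add_def]
  simp [Fin.val_one]

lemma σb_fix (htt : tt ≤ K) (hrdel : rdel ≤ DD) (j : Fin (DD+2))
    (h0 : (j:ℕ) ≠ 0) (h1 : (j:ℕ) ≠ rdel+1) :
    σb DD K tt rdel (Sum.inl j) = Sum.inl j := by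
  classical
  unfold σb
  rw [dif_pos (pinj DD K tt rdel htt hrdel)]
  apply Equiv.Perm.extendDomain_apply_not_subtype
  rintro ⟨x, hx⟩
  have hlt := x.isLt
  unfold pmapF at hx
  by_cases c1 : 1 ≤ (x:ℕ) ∧ (x:ℕ) ≤ tt
  · rw [pmap_first DD K tt rdel c1.1 c1.2 (by omega)] at hx
    simp at hx
  · by_cases c2 : (x:ℕ) = tt+1
    · rw [c2, pmap_t' DD K tt rdel hrdel] at hx
      rw [Sum.inl.injEq] at hx
      exact h1 (by rw [← hx])
    · by_cases c3 : (x:ℕ) = 0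
      · rw [c3, pmap_zero] at hx
        unfold v0 at hx
        rw [Sum.inl.injEq] at hx
        exact h0 (by rw [← hx])
      · rw [pmap_second DD K tt rdel (by omega) (by omega) (by omega)] at hx
        simp at hx


/-! ### walk lemmas -/

lemma inl_congr {x y : ℕ} (hx : x < DD+2) (hy : y < DD+2) (h : x = y) :
    (Sum.inl ⟨x,hx⟩ : V DD K) = Sum.inl ⟨y,hy⟩ := by subst h; rfl

lemma inr_congr {x y : ℕ} (hx : x < K) (hy : y < K) (h : x = y) :
    (Sum.inr ⟨x,hx⟩ : V DD K) = Sum.inr ⟨y,hy⟩ := by subst h; rfl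

lemma la1 (k : ℕ) : ∀ (j : ℕ) (hj : j < DD+2) (hjk : j + k < DD+2),
    perS DD K tt rdel (a^k) (Sum.inl ⟨j, hj⟩) = Sum.inl ⟨j+k, hjk⟩ ∧
    coc DD K tt rdel (a^k) (Sum.inl ⟨j, hj⟩) = 1 := by
  induction k with
  | zero =>
      intro j hj hjk
      rw [pow_zero]
      exact ⟨by rw [perS_one]; exact inl_congr DD K _ _ (by omega), by rw [coc_one]⟩
  | succ k ih =>
      intro j hj hjk
      obtain ⟨ih1, ih2⟩ := ih j hj (by omega)
      rw [pow_succ', perS_mul, coc_mul, ih1, ih2, perS_a, coc_a]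
      constructor
      · rw [σa_inl_lt DD K (h := by omega)]
        exact inl_congr DD K _ _ (by omega)
      · simp only [ca]
        rw [if_neg (show ¬(j + k = DD+1) by omega), one_mul]

lemma la2 (j : ℕ) (hj : j < DD+2) :
    perS DD K tt rdel (a^(DD+2-j)) (Sum.inl ⟨j, hj⟩) = v0 DD K ∧
    coc DD K tt rdel (a^(DD+2-j)) (Sum.inl ⟨j, hj⟩) = FreeGroup.of (gX DD K rdel) := by
  have hm : DD+2-j = (DD+1-j)+1 := by omega
  obtain ⟨h1, h2⟩ := la1 DD K tt rdel (DD+1-j) j hj (by omega)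
  have htop : (Sum.inl ⟨j + (DD+1-j), by omega⟩ : V DD K) = Sum.inl ⟨DD+1, by omega⟩ :=
    inl_congr DD K _ _ (by omega)
  rw [hm, pow_succ', perS_mul, coc_mul, h1, h2, perS_a, coc_a, htop]
  constructor
  · exact σa_inl_top DD K
  · simp only [ca]
    rw [if_pos trivial, mul_one]

lemma la_loop (m : ℕ) : perS DD K tt rdel (a^(m*(DD+2))) (v0 DD K) = v0 DD K := by
  induction m with
  | zero => rw [Nat.zero_mul, pow_zero, perS_one]
  | succ m ih =>
      have h1 : (m+1)*(DD+2) = m*(DD+2) + (DD+2) := by ring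
      rw [h1, pow_add, perS_mul]
      have h2 := (la2 DD K tt rdel 0 (by omega)).1
      have h3 : DD + 2 - 0 = DD + 2 := by omega
      rw [h3] at h2
      rw [show v0 DD K = Sum.inl ⟨0, by omega⟩ from rfl, h2]
      exact ih

lemma cbpos (htt : tt ≤ K) (hrdel : rdel ≤ DD) (p : ℕ) (hp : p ≤ K+1) :
    cb DD K tt rdel (pmap DD K tt rdel p)
      = if p+1 = tt+1 then FreeGroup.of (gY DD K rdel)
        else if p+1 = K+2 then FreeGroup.of (gZ DD K rdel) else 1 := by
  rcases Nat.eq_zero_or_pos p with rfl | hpos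
  · rw [pmap_zero, show v0 DD K = Sum.inl ⟨0, by omega⟩ from rfl]
    simp only [cb]
    rw [dif_pos trivial]
    by_cases h : tt = 0
    · rw [if_pos h, if_pos (show 0+1 = tt+1 by omega)]
    · rw [if_neg h, if_neg (show ¬(0+1 = tt+1) by omega),
        if_neg (show ¬(0+1 = K+2) by omega)]
  by_cases c1 : p ≤ tt
  · rw [pmap_first DD K tt rdel hpos c1 (by omega)]
    simp only [cb]
    by_cases c2 : p + 1 = tt + 1
    · rw [if_pos (show p-1+2 = tt+1 by omega), if_pos c2]
    · rw [if_neg (show ¬(p-1+2 = tt+1) by omega),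
        if_neg (show ¬(p-1+1 = K) by omega), if_neg c2,
        if_neg (show ¬(p+1 = K+2) by omega)]
  by_cases c2 : p = tt+1
  · subst c2
    rw [pmap_t' DD K tt rdel hrdel]
    simp only [cb]
    rw [dif_neg (show ¬(rdel+1 = 0) by omega), dif_pos trivial]
    by_cases c3 : tt+1 = K+1
    · rw [if_pos c3, if_neg (show ¬(tt+1+1 = tt+1) by omega),
        if_pos (show tt+1+1 = K+2 by omega)]
    · rw [if_neg c3, if_neg (show ¬(tt+1+1 = tt+1) by omega),
        if_neg (show ¬(tt+1+1 = K+2) by omega)]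
  · rw [pmap_second DD K tt rdel (by omega) hp (by omega)]
    simp only [cb]
    by_cases c3 : p = K+1
    · rw [if_neg (show ¬(p-2+2 = tt+1) by omega), if_pos (show p-2+1 = K by omega),
        if_neg (show ¬(p+1 = tt+1) by omega), if_pos (show p+1 = K+2 by omega)]
    · rw [if_neg (show ¬(p-2+2 = tt+1) by omega), if_neg (show ¬(p-2+1 = K) by omega),
        if_neg (show ¬(p+1 = tt+1) by omega), if_neg (show ¬(p+1 = K+2) by omega)]

lemma lb1 (htt : tt ≤ K) (hrdel : rdel ≤ DD) (k : ℕ) : ∀ (i : ℕ) (hik : i + k ≤ K+1),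
    perS DD K tt rdel (b^k) (pmap DD K tt rdel i) = pmap DD K tt rdel (i+k) ∧
    coc DD K tt rdel (b^k) (pmap DD K tt rdel i)
      = if i < tt+1 ∧ tt+1 ≤ i+k then FreeGroup.of (gY DD K rdel) else 1 := by
  induction k with
  | zero =>
      intro i hik
      rw [pow_zero, perS_one, coc_one]
      exact ⟨rfl, by rw [if_neg (by omega)]⟩
  | succ k ih =>
      intro i hik
      obtain ⟨ih1, ih2⟩ := ih i (by omega)
      rw [pow_succ', perS_mul, coc_mul, ih1, ih2, perS_b, coc_b,
        σb_pm DD K tt rdel htt hrdel (hi := by omega),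
        cbpos DD K tt rdel htt hrdel (i+k) (by omega)]
      constructor
      · rw [Nat.mod_eq_of_lt (by omega), show i+k+1 = i+(k+1) by omega]
      · by_cases c1 : i + k + 1 = tt + 1
        · rw [if_pos c1, if_neg (show ¬(i < tt+1 ∧ tt+1 ≤ i+k) by omega),
            if_pos (show i < tt+1 ∧ tt+1 ≤ i+(k+1) by omega), mul_one]
        · rw [if_neg c1, if_neg (show ¬(i+k+1 = K+2) by omega)]
          by_cases c2 : i < tt+1 ∧ tt+1 ≤ i+k
          · rw [if_pos c2, if_pos (show i < tt+1 ∧ tt+1 ≤ i+(k+1) by omega), one_mul]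
          · rw [if_neg c2, if_neg (show ¬(i < tt+1 ∧ tt+1 ≤ i+(k+1)) by omega), one_mul]

lemma lbZ (htt : tt ≤ K) (hrdel : rdel ≤ DD) :
    perS DD K tt rdel (b^(K+1-tt)) (pmap DD K tt rdel (tt+1)) = v0 DD K ∧
    coc DD K tt rdel (b^(K+1-tt)) (pmap DD K tt rdel (tt+1))
      = FreeGroup.of (gZ DD K rdel) := by
  have hm : K+1-tt = (K-tt)+1 := by omega
  obtain ⟨h1, h2⟩ := lb1 DD K tt rdel htt hrdel (K-tt) (tt+1) (by omega)
  rw [show tt+1+(K-tt) = K+1 by omega] at h1 h2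
  rw [if_neg (show ¬(tt+1 < tt+1 ∧ tt+1 ≤ K+1) by omega)] at h2
  have h3 := cbpos DD K tt rdel htt hrdel (K+1) (by omega)
  rw [if_neg (show ¬(K+1+1 = tt+1) by omega), if_pos (show K+1+1 = K+2 from rfl)] at h3
  have h4 := σb_pm DD K tt rdel htt hrdel (i := K+1) (by omega)
  rw [show (K+1+1) % (K+2) = 0 from Nat.mod_self (K+2), pmap_zero] at h4
  constructor
  · rw [hm, pow_succ', perS_mul, h1, perS_b, h4]
  · rw [hm, pow_succ', coc_mul, h1, h2, coc_b, h3, mul_one]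

lemma lb_loop (htt : tt ≤ K) (hrdel : rdel ≤ DD) (m : ℕ) :
    perS DD K tt rdel (b^(m*(K+2))) (pmap DD K tt rdel (tt+1))
      = pmap DD K tt rdel (tt+1) := by
  induction m with
  | zero => rw [Nat.zero_mul, pow_zero, perS_one]
  | succ m ih =>
      have h1 : (m+1)*(K+2) = m*(K+2) + ((tt+1) + (K+1-tt)) := by
        rw [Nat.succ_mul]
        omega
      have h2 := (lb1 DD K tt rdel htt hrdel (tt+1) 0 (by omega)).1
      rw [show (0+(tt+1)) = tt+1 by omega, pmap_zero DD K tt rdel] at h2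
      rw [h1, pow_add, pow_add, perS_mul, perS_mul, (lbZ DD K tt rdel htt hrdel).1, h2, ih]


/-! ### transversal identity -/

lemma sfun_v0 : sfun DD K tt rdel (v0 DD K) = 1 := by
  show sfun DD K tt rdel (Sum.inl ⟨0, _⟩) = 1
  simp [sfun]

lemma φc_of (x : GenT DD K rdel) :
    φc DD K tt rdel (FreeGroup.of x) = famele DD K tt rdel x := FreeGroup.lift_apply_of

lemma famele_gX : famele DD K tt rdel (gX DD K rdel) = a^(DD+2) := by
  simp [famele, gX]

lemma famele_gY : famele DD K tt rdel (gY DD K rdel) = (a^(rdel+1))⁻¹ * b^(tt+1) := by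
  simp [famele, gY]

lemma famele_gZ : famele DD K tt rdel (gZ DD K rdel) = b^(K+1-tt) * a^(rdel+1) := by
  simp [famele, gZ]

lemma famele_gA (i : Fin K) : famele DD K tt rdel (gA DD K rdel i)
    = sfun DD K tt rdel (Sum.inr i) * (a * (sfun DD K tt rdel (Sum.inr i))⁻¹) := by
  simp [famele, gA]

lemma famele_gB (j) : famele DD K tt rdel (gB DD K rdel j)
    = (a^((j.1:ℕ)))⁻¹ * (b * a^((j.1:ℕ))) := by
  simp [famele, gB]

lemma Pa (v : V DD K) : φc DD K tt rdel (ca DD K rdel v)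
    = sfun DD K tt rdel (σa DD K v) * a * (sfun DD K tt rdel v)⁻¹ := by
  rcases v with ⟨jv, hjv⟩ | i
  · by_cases h : jv = DD+1
    · subst h
      simp only [ca]
      rw [if_pos trivial, φc_of, famele_gX, σa_inl_top, sfun_v0]
      show a^(DD+2) = 1 * a * ((a^(DD+1))⁻¹)⁻¹
      rw [show DD+2 = DD+1+1 by omega]
      group
    · simp only [ca]
      rw [if_neg (show ¬((jv:ℕ) = DD+1) from h), map_one,
        σa_inl_lt DD K (h := by omega)]
      show (1:F2) = (a^(jv+1))⁻¹ * a * ((a^jv)⁻¹)⁻¹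
      group
  · simp only [ca]
    rw [φc_of, famele_gA, σa_inr]
    rw [mul_assoc]

lemma Pb (htt : tt ≤ K) (hrdel : rdel ≤ DD) (v : V DD K) :
    φc DD K tt rdel (cb DD K tt rdel v)
    = sfun DD K tt rdel (σb DD K tt rdel v) * b * (sfun DD K tt rdel v)⁻¹ := by
  rcases v with ⟨jv, hjv⟩ | ⟨iv, hiv⟩
  · by_cases h0 : jv = 0
    · subst h0
      have hv : (Sum.inl ⟨0, hjv⟩ : V DD K) = pmap DD K tt rdel 0 :=
        (pmap_zero DD K tt rdel).symm
      rw [hv, σb_pm DD K tt rdel htt hrdel (hi := by omega),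
        Nat.mod_eq_of_lt (by omega)]
      rw [← hv]
      simp only [cb]
      rw [dif_pos trivial]
      have hs0 : sfun DD K tt rdel (Sum.inl ⟨0, hjv⟩) = (a^(0:ℕ))⁻¹ := rfl
      by_cases ht0 : tt = 0
      · rw [if_pos ht0, φc_of, famele_gY, show (0+1 : ℕ) = tt+1 by omega,
          pmap_t' DD K tt rdel hrdel, hs0]
        show (a^(rdel+1))⁻¹ * b^(tt+1) = (a^(rdel+1))⁻¹ * b * ((a^(0:ℕ))⁻¹)⁻¹
        rw [ht0]
        group
      · rw [if_neg ht0, map_one,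
          pmap_first DD K tt rdel (by omega) (by omega) (by omega), hs0]
        have hs1 : sfun DD K tt rdel (Sum.inr ⟨0+1-1, by omega⟩) = (b^((0+1-1:ℕ)+1))⁻¹ := by
          simp only [sfun]
          rw [if_pos (show (0+1-1:ℕ)+2 ≤ tt+1 by omega)]
        rw [hs1]
        show (1:F2) = (b^((0+1-1:ℕ)+1))⁻¹ * b * ((a^(0:ℕ))⁻¹)⁻¹
        rw [show (0+1-1:ℕ)+1 = 1 by omega]
        group
    · by_cases hR : jv = rdel+1
      · subst hR
        have hv : (Sum.inl ⟨rdel+1, hjv⟩ : V DD K) = pmap DD K tt rdel (tt+1) := by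
          rw [pmap_t' DD K tt rdel hrdel]
        rw [hv, σb_pm DD K tt rdel htt hrdel (hi := by omega), ← hv]
        simp only [cb]
        rw [dif_neg (show ¬((rdel:ℕ)+1 = 0) by omega), dif_pos trivial]
        have hsR : sfun DD K tt rdel (Sum.inl ⟨rdel+1, hjv⟩) = (a^(rdel+1))⁻¹ := rfl
        by_cases hK : tt = K
        · rw [if_pos (by omega), φc_of, famele_gZ,
            show (tt+1+1) % (K+2) = 0 by rw [show tt+1+1 = K+2 by omega]; exact Nat.mod_self (K+2),
            pmap_zero, sfun_v0, hsR]
          show b^(K+1-tt) * a^(rdel+1) = 1 * b * ((a^(rdel+1))⁻¹)⁻¹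
          rw [show K+1-tt = 1 by omega]
          group
        · rw [if_neg (by omega),
            Nat.mod_eq_of_lt (by omega),
            pmap_second DD K tt rdel (by omega) (by omega) (by omega), hsR, map_one]
          have hs1 : sfun DD K tt rdel (Sum.inr ⟨tt+1+1-2, by omega⟩)
              = (a^(rdel+1))⁻¹ * (b^(tt+1+1-2+2-(tt+1)))⁻¹ := by
            simp only [sfun]
            rw [if_neg (by omega)]
          rw [hs1, show tt+1+1-2+2-(tt+1) = 1 by omega]
          show (1:F2) = (a^(rdel+1))⁻¹ * (b^(1:ℕ))⁻¹ * b * ((a^(rdel+1))⁻¹)⁻¹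
          group
      · rw [σb_fix DD K tt rdel htt hrdel _ h0 hR]
        simp only [cb]
        rw [dif_neg h0, dif_neg hR, φc_of, famele_gB]
        show (a^(jv:ℕ))⁻¹ * (b * a^(jv:ℕ))
          = (a^(jv:ℕ))⁻¹ * b * ((a^(jv:ℕ))⁻¹)⁻¹
        group
  · by_cases c1 : iv+2 ≤ tt+1
    · have hv : (Sum.inr ⟨iv, hiv⟩ : V DD K) = pmap DD K tt rdel (iv+1) := by
        rw [pmap_first DD K tt rdel (by omega) (by omega) (by omega)]
        exact inr_congr DD K _ _ (by omega)
      have hsv : sfun DD K tt rdel (Sum.inr ⟨iv, hiv⟩) = (b^(iv+1))⁻¹ := by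
        simp only [sfun]
        rw [if_pos c1]
      rw [hv, σb_pm DD K tt rdel htt hrdel (hi := by omega),
        Nat.mod_eq_of_lt (by omega), ← hv]
      simp only [cb]
      by_cases c2 : iv+2 = tt+1
      · rw [if_pos (show (iv:ℕ)+2 = tt+1 from c2), φc_of, famele_gY,
          show iv+1+1 = tt+1 by omega, pmap_t' DD K tt rdel hrdel, hsv]
        show (a^(rdel+1))⁻¹ * b^(tt+1) = (a^(rdel+1))⁻¹ * b * ((b^(iv+1))⁻¹)⁻¹
        rw [show tt+1 = iv+1+1 by omega]
        group
      · rw [if_neg (show ¬((iv:ℕ)+2 = tt+1) from c2),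
          if_neg (show ¬((iv:ℕ)+1 = K) by omega), map_one,
          pmap_first DD K tt rdel (by omega) (by omega) (by omega), hsv]
        have hs1 : sfun DD K tt rdel (Sum.inr ⟨iv+1+1-1, by omega⟩)
            = (b^(iv+1+1-1+1))⁻¹ := by
          simp only [sfun]
          rw [if_pos (by omega)]
        rw [hs1, show iv+1+1-1+1 = iv+1+1 by omega]
        show (1:F2) = (b^(iv+1+1))⁻¹ * b * ((b^(iv+1))⁻¹)⁻¹
        group
    · have hv : (Sum.inr ⟨iv, hiv⟩ : V DD K) = pmap DD K tt rdel (iv+2) := by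
        rw [pmap_second DD K tt rdel (by omega) (by omega) (by omega)]
        exact inr_congr DD K _ _ (by omega)
      have hsv : sfun DD K tt rdel (Sum.inr ⟨iv, hiv⟩)
          = (a^(rdel+1))⁻¹ * (b^(iv+2-(tt+1)))⁻¹ := by
        simp only [sfun]
        rw [if_neg c1]
      rw [hv, σb_pm DD K tt rdel htt hrdel (hi := by omega), ← hv]
      simp only [cb]
      rw [if_neg (show ¬((iv:ℕ)+2 = tt+1) by omega)]
      by_cases c2 : iv+1 = K
      · rw [if_pos (show (iv:ℕ)+1 = K from c2), φc_of, famele_gZ,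
          show (iv+2+1) % (K+2) = 0 by rw [show iv+2+1 = K+2 by omega]; exact Nat.mod_self (K+2),
          pmap_zero, sfun_v0, hsv]
        show b^(K+1-tt) * a^(rdel+1)
          = 1 * b * ((a^(rdel+1))⁻¹ * (b^(iv+2-(tt+1)))⁻¹)⁻¹
        rw [show K+1-tt = (iv+2-(tt+1))+1 by omega]
        generalize iv+2-(tt+1) = m
        group
      · rw [if_neg (show ¬((iv:ℕ)+1 = K) from c2), map_one,
          Nat.mod_eq_of_lt (by omega),
          pmap_second DD K tt rdel (by omega) (by omega) (by omega), hsv]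
        have hs1 : sfun DD K tt rdel (Sum.inr ⟨iv+2+1-2, by omega⟩)
            = (a^(rdel+1))⁻¹ * (b^(iv+2+1-2+2-(tt+1)))⁻¹ := by
          simp only [sfun]
          rw [if_neg (by omega)]
        rw [hs1, show iv+2+1-2+2-(tt+1) = (iv+2-(tt+1))+1 by omega]
        show (1:F2) = (a^(rdel+1))⁻¹ * (b^((iv+2-(tt+1))+1))⁻¹ * b
            * ((a^(rdel+1))⁻¹ * (b^(iv+2-(tt+1)))⁻¹)⁻¹
        generalize iv+2-(tt+1) = m
        group


lemma Pid (htt : tt ≤ K) (hrdel : rdel ≤ DD) (g : F2) : ∀ v : V DD K,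
    φc DD K tt rdel (coc DD K tt rdel g v)
      = sfun DD K tt rdel (perS DD K tt rdel g v) * g * (sfun DD K tt rdel v)⁻¹ := by
  induction g using FreeGroup.induction_on with
  | C1 =>
      intro v
      rw [coc_one, perS_one, map_one]
      group
  | of x =>
      intro v
      match x with
      | (0 : Fin 2) =>
          rw [show (FreeGroup.of (0 : Fin 2) : F2) = a from rfl, coc_a, perS_a]
          exact Pa DD K tt rdel v
      | (1 : Fin 2) =>
          rw [show (FreeGroup.of (1 : Fin 2) : F2) = b from rfl, coc_b, perS_b]
          exact Pb DD K tt rdel htt hrdel v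
  | inv_of x ih =>
      intro v
      have hw : perS DD K tt rdel (FreeGroup.of x) (perS DD K tt rdel (FreeGroup.of x)⁻¹ v) = v := by
        rw [← perS_mul, mul_inv_cancel, perS_one]
      rw [coc_inv_eq DD K tt rdel hw, map_inv, ih, hw]
      group
  | mul x y ihx ihy =>
      intro v
      rw [coc_mul, perS_mul, map_mul, ihx, ihy]
      group

lemma genH (htt : tt ≤ K) (hrdel : rdel ≤ DD) (x : GenT DD K rdel) :
    perS DD K tt rdel (famele DD K tt rdel x) (v0 DD K) = v0 DD K ∧
    coc DD K tt rdel (famele DD K tt rdel x) (v0 DD K) = FreeGroup.of x := by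
  have hv00 : (v0 DD K) = Sum.inl ⟨0, by omega⟩ := rfl
  rcases x with i3 | (i | j)
  · match i3 with
    | (0 : Fin 3) =>
      rw [show (Sum.inl (0 : Fin 3) : GenT DD K rdel) = gX DD K rdel from rfl, famele_gX]
      obtain ⟨h1, h2⟩ := la2 DD K tt rdel 0 (by omega)
      rw [show DD+2-0 = DD+2 by omega] at h1 h2
      exact ⟨h1, h2⟩
    | (1 : Fin 3) =>
      rw [show (Sum.inl (1 : Fin 3) : GenT DD K rdel) = gY DD K rdel from rfl, famele_gY]
      obtain ⟨hb1, hb2⟩ := lb1 DD K tt rdel htt hrdel (tt+1) 0 (by omega)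
      rw [pmap_zero, show 0+(tt+1) = tt+1 by omega] at hb1 hb2
      rw [pmap_t' DD K tt rdel hrdel] at hb1
      rw [if_pos (by omega)] at hb2
      obtain ⟨ha1, ha2⟩ := la1 DD K tt rdel (rdel+1) 0 (by omega) (by omega)
      rw [← hv00] at ha1 ha2
      rw [show (Sum.inl ⟨0+(rdel+1), by omega⟩ : V DD K) = Sum.inl ⟨rdel+1, by omega⟩
        from inl_congr DD K _ _ (by omega)] at ha1
      constructor
      · rw [perS_mul, hb1, perS_inv_eq DD K tt rdel ha1]
      · rw [coc_mul, hb1, hb2, coc_inv_eq DD K tt rdel ha1, ha2, inv_one, one_mul]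
    | (2 : Fin 3) =>
      rw [show (Sum.inl (2 : Fin 3) : GenT DD K rdel) = gZ DD K rdel from rfl, famele_gZ]
      obtain ⟨ha1, ha2⟩ := la1 DD K tt rdel (rdel+1) 0 (by omega) (by omega)
      rw [← hv00] at ha1 ha2
      rw [show (Sum.inl ⟨0+(rdel+1), by omega⟩ : V DD K) = Sum.inl ⟨rdel+1, by omega⟩
        from inl_congr DD K _ _ (by omega)] at ha1
      have hpt : pmap DD K tt rdel (tt+1) = Sum.inl ⟨rdel+1, by omega⟩ :=
        pmap_t' DD K tt rdel hrdel
      obtain ⟨hz1, hz2⟩ := lbZ DD K tt rdel htt hrdel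
      rw [hpt] at hz1 hz2
      constructor
      · rw [perS_mul, ha1, hz1]
      · rw [coc_mul, ha1, hz2, ha2, mul_one]
  · -- gA i
    rcases i with ⟨iv, hiv⟩
    have key : perS DD K tt rdel (sfun DD K tt rdel (Sum.inr ⟨iv, hiv⟩))⁻¹ (v0 DD K)
          = Sum.inr ⟨iv, hiv⟩ ∧
        coc DD K tt rdel (sfun DD K tt rdel (Sum.inr ⟨iv, hiv⟩))⁻¹ (v0 DD K) = 1 := by
      by_cases c1 : iv+2 ≤ tt+1
      · have hsv : sfun DD K tt rdel (Sum.inr ⟨iv, hiv⟩) = (b^(iv+1))⁻¹ := by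
          simp only [sfun]
          rw [if_pos c1]
        rw [hsv, inv_inv]
        obtain ⟨h1, h2⟩ := lb1 DD K tt rdel htt hrdel (iv+1) 0 (by omega)
        rw [pmap_zero, show 0+(iv+1) = iv+1 by omega] at h1 h2
        rw [pmap_first DD K tt rdel (by omega) (by omega) (by omega)] at h1
        rw [if_neg (by omega)] at h2
        rw [show (Sum.inr ⟨iv+1-1, by omega⟩ : V DD K) = Sum.inr ⟨iv, hiv⟩
          from inr_congr DD K _ _ (by omega)] at h1
        exact ⟨h1, h2⟩
      · have hsv : sfun DD K tt rdel (Sum.inr ⟨iv, hiv⟩)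
            = (a^(rdel+1))⁻¹ * (b^(iv+2-(tt+1)))⁻¹ := by
          simp only [sfun]
          rw [if_neg c1]
        rw [hsv, mul_inv_rev, inv_inv, inv_inv]
        obtain ⟨ha1, ha2⟩ := la1 DD K tt rdel (rdel+1) 0 (by omega) (by omega)
        rw [← hv00] at ha1 ha2
        rw [show (Sum.inl ⟨0+(rdel+1), by omega⟩ : V DD K) = Sum.inl ⟨rdel+1, by omega⟩
          from inl_congr DD K _ _ (by omega)] at ha1
        have hpt : pmap DD K tt rdel (tt+1) = Sum.inl ⟨rdel+1, by omega⟩ :=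
          pmap_t' DD K tt rdel hrdel
        obtain ⟨h1, h2⟩ := lb1 DD K tt rdel htt hrdel (iv+2-(tt+1)) (tt+1) (by omega)
        rw [hpt] at h1 h2
        rw [show tt+1+(iv+2-(tt+1)) = iv+2 by omega] at h1
        rw [pmap_second DD K tt rdel (by omega) (by omega) (by omega)] at h1
        rw [if_neg (by omega)] at h2
        rw [show (Sum.inr ⟨iv+2-2, by omega⟩ : V DD K) = Sum.inr ⟨iv, hiv⟩
          from inr_congr DD K _ _ (by omega)] at h1
        constructor
        · rw [perS_mul, ha1, h1]
        · rw [coc_mul, ha1, h2, ha2, mul_one]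
    obtain ⟨k1, k2⟩ := key
    have k3 : perS DD K tt rdel (sfun DD K tt rdel (Sum.inr ⟨iv, hiv⟩))
        (Sum.inr ⟨iv, hiv⟩) = v0 DD K := by
      have := perS_inv_eq DD K tt rdel k1
      rwa [inv_inv] at this
    have k4 : coc DD K tt rdel (sfun DD K tt rdel (Sum.inr ⟨iv, hiv⟩))
        (Sum.inr ⟨iv, hiv⟩) = 1 := by
      have := coc_inv_eq DD K tt rdel k1
      rwa [inv_inv, k2, inv_one] at this
    rw [show (Sum.inr (Sum.inl ⟨iv, hiv⟩) : GenT DD K rdel) = gA DD K rdel ⟨iv, hiv⟩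
      from rfl, famele_gA]
    have hmid : perS DD K tt rdel (a * (sfun DD K tt rdel (Sum.inr ⟨iv, hiv⟩))⁻¹) (v0 DD K)
        = Sum.inr ⟨iv, hiv⟩ := by
      rw [perS_mul, k1, perS_a, σa_inr]
    constructor
    · rw [perS_mul, hmid, k3]
    · rw [coc_mul, hmid, k4, one_mul, coc_mul, k1, coc_a, k2, mul_one]
      show ca DD K rdel (Sum.inr ⟨iv, hiv⟩) = _
      simp [ca]
  · -- gB j
    have hjlt : ((j.1 : Fin (DD+2)) : ℕ) < DD+2 := j.1.isLt
    obtain ⟨ha1, ha2⟩ := la1 DD K tt rdel ((j.1 : Fin (DD+2)) : ℕ) 0 (by omega) (by omega)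
    rw [← hv00] at ha1 ha2
    have hj1 : (Sum.inl ⟨0+((j.1 : Fin (DD+2)) : ℕ), by omega⟩ : V DD K) = Sum.inl j.1 := by
      congr 1
      exact Fin.ext (show (0:ℕ) + ((j.1 : Fin (DD+2)) : ℕ) = ((j.1 : Fin (DD+2)) : ℕ) by omega)
    rw [hj1] at ha1
    have hfix : σb DD K tt rdel (Sum.inl j.1) = Sum.inl j.1 :=
      σb_fix DD K tt rdel htt hrdel _ j.2.1 j.2.2
    have hcb : cb DD K tt rdel (Sum.inl j.1) = FreeGroup.of (gB DD K rdel j) := by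
      simp only [cb]
      rw [dif_neg j.2.1, dif_neg j.2.2]
    rw [show (Sum.inr (Sum.inr j) : GenT DD K rdel) = gB DD K rdel j from rfl, famele_gB]
    constructor
    · rw [perS_mul, perS_mul, ha1, perS_b, hfix, perS_inv_eq DD K tt rdel ha1]
    · rw [coc_mul, perS_mul, ha1, perS_b, hfix, coc_inv_eq DD K tt rdel ha1, ha2, inv_one,
        one_mul, coc_mul, ha1, coc_b, hcb, ha2, mul_one]


/-! ### automorphisms -/

section Autos
variable (q q' : ℕ)

def f1 : GenT DD K rdel → FreeGroup (GenT DD K rdel) := fun g =>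
  if g = gY DD K rdel then (FreeGroup.of (gZ DD K rdel))^q' * FreeGroup.of (gY DD K rdel)
  else FreeGroup.of g

def f1i : GenT DD K rdel → FreeGroup (GenT DD K rdel) := fun g =>
  if g = gY DD K rdel then ((FreeGroup.of (gZ DD K rdel))^q')⁻¹ * FreeGroup.of (gY DD K rdel)
  else FreeGroup.of g

def f2 : GenT DD K rdel → FreeGroup (GenT DD K rdel) := fun g =>
  if g = gZ DD K rdel then FreeGroup.of (gY DD K rdel) * FreeGroup.of (gZ DD K rdel)
  else FreeGroup.of g

def f2i : GenT DD K rdel → FreeGroup (GenT DD K rdel) := fun g =>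
  if g = gZ DD K rdel then (FreeGroup.of (gY DD K rdel))⁻¹ * FreeGroup.of (gZ DD K rdel)
  else FreeGroup.of g

def f3 : GenT DD K rdel → FreeGroup (GenT DD K rdel) := fun g =>
  if g = gY DD K rdel then (FreeGroup.of (gX DD K rdel))^(q+1) * FreeGroup.of (gY DD K rdel)
  else if g = gZ DD K rdel then
    FreeGroup.of (gZ DD K rdel) * ((FreeGroup.of (gX DD K rdel))^(q+1))⁻¹
  else FreeGroup.of g

def f3i : GenT DD K rdel → FreeGroup (GenT DD K rdel) := fun g =>
  if g = gY DD K rdel then ((FreeGroup.of (gX DD K rdel))^(q+1))⁻¹ * FreeGroup.of (gY DD K rdel)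
  else if g = gZ DD K rdel then
    FreeGroup.of (gZ DD K rdel) * (FreeGroup.of (gX DD K rdel))^(q+1)
  else FreeGroup.of g

lemma gXY : gX DD K rdel ≠ gY DD K rdel := by
  intro h; exact absurd (Sum.inl.inj h) (by decide)
lemma gZY : gZ DD K rdel ≠ gY DD K rdel := by
  intro h; exact absurd (Sum.inl.inj h) (by decide)
lemma gXZ : gX DD K rdel ≠ gZ DD K rdel := by
  intro h; exact absurd (Sum.inl.inj h) (by decide)
lemma gYZ : gY DD K rdel ≠ gZ DD K rdel := by
  intro h; exact absurd (Sum.inl.inj h) (by decide)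

def θ1 : FreeGroup (GenT DD K rdel) ≃* FreeGroup (GenT DD K rdel) := by
  refine MonoidHom.toMulEquiv (FreeGroup.lift (f1 DD K rdel q'))
    (FreeGroup.lift (f1i DD K rdel q')) ?_ ?_ <;>
  · apply FreeGroup.ext_hom
    intro g
    by_cases h : g = gY DD K rdel
    · subst h
      simp only [MonoidHom.comp_apply, MonoidHom.id_apply, FreeGroup.lift_apply_of, f1, f1i,
        if_true, reduceIte, map_mul, map_inv, map_pow, if_neg (gZY DD K rdel)]
      group
    · simp only [MonoidHom.comp_apply, MonoidHom.id_apply, FreeGroup.lift_apply_of, f1, f1i,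
        if_neg h]

def θ2 : FreeGroup (GenT DD K rdel) ≃* FreeGroup (GenT DD K rdel) := by
  refine MonoidHom.toMulEquiv (FreeGroup.lift (f2 DD K rdel))
    (FreeGroup.lift (f2i DD K rdel)) ?_ ?_ <;>
  · apply FreeGroup.ext_hom
    intro g
    by_cases h : g = gZ DD K rdel
    · subst h
      simp only [MonoidHom.comp_apply, MonoidHom.id_apply, FreeGroup.lift_apply_of, f2, f2i,
        if_true, reduceIte, map_mul, map_inv, if_neg (gYZ DD K rdel)]
      group
    · simp only [MonoidHom.comp_apply, MonoidHom.id_apply, FreeGroup.lift_apply_of, f2, f2i,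
        if_neg h]

def θ3 : FreeGroup (GenT DD K rdel) ≃* FreeGroup (GenT DD K rdel) := by
  refine MonoidHom.toMulEquiv (FreeGroup.lift (f3 DD K rdel q))
    (FreeGroup.lift (f3i DD K rdel q)) ?_ ?_ <;>
  · apply FreeGroup.ext_hom
    intro g
    by_cases h : g = gY DD K rdel
    · subst h
      simp only [MonoidHom.comp_apply, MonoidHom.id_apply, FreeGroup.lift_apply_of, f3, f3i,
        if_true, reduceIte, map_mul, map_inv, map_pow, if_neg (gXY DD K rdel),
        if_neg (gXZ DD K rdel)]
      group
    · by_cases h2 : g = gZ DD K rdel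
      · subst h2
        simp only [MonoidHom.comp_apply, MonoidHom.id_apply, FreeGroup.lift_apply_of, f3, f3i,
          if_true, reduceIte, map_mul, map_inv, map_pow, if_neg (gXY DD K rdel),
          if_neg (gXZ DD K rdel), if_neg (gZY DD K rdel)]
        group
      · simp only [MonoidHom.comp_apply, MonoidHom.id_apply, FreeGroup.lift_apply_of, f3, f3i,
          if_neg h, if_neg h2]

def Φauto : FreeGroup (GenT DD K rdel) ≃* FreeGroup (GenT DD K rdel) :=
  (θ1 DD K rdel q').trans ((θ2 DD K rdel).trans (θ3 DD K rdel q))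

lemma Φ_gY : Φauto DD K rdel q q' (FreeGroup.of (gY DD K rdel))
    = (((FreeGroup.of (gX DD K rdel))^(q+1) * FreeGroup.of (gY DD K rdel))
        * (FreeGroup.of (gZ DD K rdel) * ((FreeGroup.of (gX DD K rdel))^(q+1))⁻¹))^q'
      * ((FreeGroup.of (gX DD K rdel))^(q+1) * FreeGroup.of (gY DD K rdel)) := by
  have h1 : θ1 DD K rdel q' (FreeGroup.of (gY DD K rdel))
      = (FreeGroup.of (gZ DD K rdel))^q' * FreeGroup.of (gY DD K rdel) := by
    show FreeGroup.lift (f1 DD K rdel q') (FreeGroup.of (gY DD K rdel)) = _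
    rw [FreeGroup.lift_apply_of, f1, if_pos rfl]
  have h2Y : θ2 DD K rdel (FreeGroup.of (gY DD K rdel)) = FreeGroup.of (gY DD K rdel) := by
    show FreeGroup.lift (f2 DD K rdel) (FreeGroup.of (gY DD K rdel)) = _
    rw [FreeGroup.lift_apply_of, f2, if_neg (gYZ DD K rdel)]
  have h2Z : θ2 DD K rdel (FreeGroup.of (gZ DD K rdel))
      = FreeGroup.of (gY DD K rdel) * FreeGroup.of (gZ DD K rdel) := by
    show FreeGroup.lift (f2 DD K rdel) (FreeGroup.of (gZ DD K rdel)) = _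
    rw [FreeGroup.lift_apply_of, f2, if_pos rfl]
  have h3Y : θ3 DD K rdel q (FreeGroup.of (gY DD K rdel))
      = (FreeGroup.of (gX DD K rdel))^(q+1) * FreeGroup.of (gY DD K rdel) := by
    show FreeGroup.lift (f3 DD K rdel q) (FreeGroup.of (gY DD K rdel)) = _
    rw [FreeGroup.lift_apply_of, f3, if_pos rfl]
  have h3Z : θ3 DD K rdel q (FreeGroup.of (gZ DD K rdel))
      = FreeGroup.of (gZ DD K rdel) * ((FreeGroup.of (gX DD K rdel))^(q+1))⁻¹ := by
    show FreeGroup.lift (f3 DD K rdel q) (FreeGroup.of (gZ DD K rdel)) = _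
    rw [FreeGroup.lift_apply_of, f3, if_neg (gYZ DD K rdel).symm, if_pos rfl]
  show θ3 DD K rdel q (θ2 DD K rdel (θ1 DD K rdel q' (FreeGroup.of (gY DD K rdel)))) = _
  rw [h1, map_mul, map_pow, h2Y, h2Z, map_mul, map_pow, map_mul, h3Y, h3Z]

end Autos

/-! ### the word evaluation -/

lemma conjp (x y : F2) (m : ℕ) : (x * y * x⁻¹)^m = x * y^m * x⁻¹ := by
  induction m with
  | zero => group
  | succ m ih => rw [pow_succ, pow_succ, ih]; group

lemma word_eval (htt : tt ≤ K) (hrdel : rdel ≤ DD) (q q' : ℕ) :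
    φc DD K tt rdel
      ((((FreeGroup.of (gX DD K rdel))^(q+1) * FreeGroup.of (gY DD K rdel))
        * (FreeGroup.of (gZ DD K rdel) * ((FreeGroup.of (gX DD K rdel))^(q+1))⁻¹))^q'
      * ((FreeGroup.of (gX DD K rdel))^(q+1) * FreeGroup.of (gY DD K rdel)))
    = a ^ (q*(DD+2) + (DD+1-rdel)) * b ^ (q'*(K+2) + (tt+1)) := by
  have hr : rdel + 1 + (DD+1-rdel) = DD+2 := by omega
  set r := DD+1-rdel with hrdef
  set n1 := q*(DD+2) + r with hn1
  have hA : ((a^(DD+2))^(q+1)) = a^(n1 + (rdel+1)) := by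
    rw [← pow_mul]
    congr 1
    rw [hn1, ← hr]
    ring
  simp only [map_mul, map_pow, map_inv, φc_of, famele_gX, famele_gY, famele_gZ, hA]
  have hw1 : a^(n1+(rdel+1)) * ((a^(rdel+1))⁻¹ * b^(tt+1)) = a^n1 * b^(tt+1) := by
    rw [pow_add]
    group
  have hw2 : (b^(K+1-tt) * a^(rdel+1)) * (a^(n1+(rdel+1)))⁻¹ = b^(K+1-tt) * (a^n1)⁻¹ := by
    rw [pow_add]
    group
  rw [hw1, hw2]
  have hw3 : (a^n1 * b^(tt+1)) * (b^(K+1-tt) * (a^n1)⁻¹)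
      = a^n1 * b^(K+2) * (a^n1)⁻¹ := by
    rw [show (K+2) = (tt+1)+(K+1-tt) by omega, pow_add]
    group
  rw [hw3, conjp]
  rw [show (b^(K+2))^q' = b^(q'*(K+2)) by rw [← pow_mul, Nat.mul_comm], pow_add]
  group

/-! ### main construction -/

lemma construction (q q' : ℕ) (htt : tt ≤ K) (hrdel : rdel ≤ DD) :
    ∃ H : Subgroup F2, H.index = DD + 2 + K ∧
      ∃ hg : a ^ (q*(DD+2) + (DD+1-rdel)) * b ^ (q'*(K+2) + (tt+1)) ∈ H,
        Primitive (⟨_, hg⟩ : H) := by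
  classical
  letI act : MulAction F2 (V DD K) :=
    { smul := fun g v => perS DD K tt rdel g v,
      one_smul := fun v => perS_one DD K tt rdel v,
      mul_smul := fun g h v => perS_mul DD K tt rdel g h v }
  have hsmul : ∀ (g : F2) (v : V DD K), g • v = perS DD K tt rdel g v := fun _ _ => rfl
  refine ⟨MulAction.stabilizer F2 (v0 DD K), ?_, ?_, ?_⟩
  · -- index
    have horb : MulAction.orbit F2 (v0 DD K) = Set.univ := by
      rw [Set.eq_univ_iff_forall]
      intro v
      rcases v with ⟨jv, hjv⟩ | ⟨iv, hiv⟩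
      · refine MulAction.mem_orbit_iff.mpr ⟨a^jv, ?_⟩
        rw [hsmul]
        have := (la1 DD K tt rdel jv 0 (by omega) (by omega)).1
        rw [show (Sum.inl ⟨0, by omega⟩ : V DD K) = v0 DD K from rfl] at this
        rw [this]
        exact inl_congr DD K _ _ (by omega)
      · by_cases c1 : iv + 2 ≤ tt+1
        · refine MulAction.mem_orbit_iff.mpr ⟨b^(iv+1), ?_⟩
          rw [hsmul]
          have := (lb1 DD K tt rdel htt hrdel (iv+1) 0 (by omega)).1
          rw [pmap_zero, show 0+(iv+1) = iv+1 by omega,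
            pmap_first DD K tt rdel (by omega) (by omega) (by omega)] at this
          rw [this]
          exact inr_congr DD K _ _ (by omega)
        · refine MulAction.mem_orbit_iff.mpr ⟨b^(iv+2), ?_⟩
          rw [hsmul]
          have := (lb1 DD K tt rdel htt hrdel (iv+2) 0 (by omega)).1
          rw [pmap_zero, show 0+(iv+2) = iv+2 by omega,
            pmap_second DD K tt rdel (by omega) (by omega) (by omega)] at this
          rw [this]
          exact inr_congr DD K _ _ (by omega)
    rw [MulAction.index_stabilizer, horb, Set.ncard_univ, Nat.card_eq_fintype_card,
      Fintype.card_sum, Fintype.card_fin, Fintype.card_fin]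
  · -- membership
    rw [MulAction.mem_stabilizer_iff, hsmul]
    have hb : perS DD K tt rdel (b^(q'*(K+2)+(tt+1))) (v0 DD K)
        = pmap DD K tt rdel (tt+1) := by
      rw [pow_add, perS_mul]
      have h1 := (lb1 DD K tt rdel htt hrdel (tt+1) 0 (by omega)).1
      rw [pmap_zero, show 0+(tt+1) = tt+1 by omega] at h1
      rw [h1, lb_loop DD K tt rdel htt hrdel q']
    have ha : perS DD K tt rdel (a^(q*(DD+2)+(DD+1-rdel))) (pmap DD K tt rdel (tt+1))
        = v0 DD K := by
      rw [pow_add, perS_mul, pmap_t' DD K tt rdel hrdel]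
      have h2 := (la2 DD K tt rdel (rdel+1) (by omega)).1
      rw [show DD+2-(rdel+1) = DD+1-rdel by omega] at h2
      rw [h2, la_loop DD K tt rdel q]
    rw [perS_mul, hb, ha]
  · -- primitivity
    set famH : GenT DD K rdel → MulAction.stabilizer F2 (v0 DD K) := fun x =>
      ⟨famele DD K tt rdel x,
        MulAction.mem_stabilizer_iff.mpr ((genH DD K tt rdel htt hrdel x).1)⟩ with hfamH
    set φH := FreeGroup.lift famH with hφH
    have hco : (MulAction.stabilizer F2 (v0 DD K)).subtype.comp φH = φc DD K tt rdel := by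
      apply FreeGroup.ext_hom
      intro x
      rw [MonoidHom.comp_apply, hφH, FreeGroup.lift_apply_of, φc_of]
      rfl
    have hcoe : ∀ w, ((φH w : MulAction.stabilizer F2 (v0 DD K)) : F2)
        = φc DD K tt rdel w := fun w => DFunLike.congr_fun hco w
    have key : ∀ w : FreeGroup (GenT DD K rdel),
        perS DD K tt rdel (φc DD K tt rdel w) (v0 DD K) = v0 DD K ∧
        coc DD K tt rdel (φc DD K tt rdel w) (v0 DD K) = w := by
      intro w
      induction w using FreeGroup.induction_on with
      | C1 => rw [map_one, perS_one, coc_one]; exact ⟨rfl, rfl⟩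
      | of x =>
          rw [show (FreeGroup.of x : FreeGroup (GenT DD K rdel)) = FreeGroup.of x from rfl, φc_of]
          exact genH DD K tt rdel htt hrdel x
      | inv_of x ih =>
          obtain ⟨ih1, ih2⟩ := genH DD K tt rdel htt hrdel x
          rw [show (FreeGroup.of x : FreeGroup (GenT DD K rdel)) = FreeGroup.of x from rfl] at *
          rw [map_inv, φc_of]
          exact ⟨perS_inv_eq DD K tt rdel ih1,
            by rw [coc_inv_eq DD K tt rdel ih1, ih2]⟩
      | mul x y ihx ihy =>
          rw [map_mul, perS_mul, coc_mul, ihy.1, ihx.1, ihx.2, ihy.2]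
          exact ⟨rfl, rfl⟩
    have rightInv : ∀ h : MulAction.stabilizer F2 (v0 DD K),
        φH (coc DD K tt rdel (h : F2) (v0 DD K)) = h := by
      intro h
      apply Subtype.ext
      have h2' : perS DD K tt rdel ((h : F2)) (v0 DD K) = v0 DD K := h.2
      rw [hcoe, Pid DD K tt rdel htt hrdel (h : F2) (v0 DD K),
        h2', sfun_v0, inv_one, mul_one, one_mul]
    set E : FreeGroup (GenT DD K rdel) ≃* MulAction.stabilizer F2 (v0 DD K) :=
      { toFun := φH,
        invFun := fun h => coc DD K tt rdel (h : F2) (v0 DD K),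
        left_inv := fun w => by
          show coc DD K tt rdel ((φH w : F2)) (v0 DD K) = w
          rw [hcoe w]; exact (key w).2,
        right_inv := rightInv,
        map_mul' := fun x y => map_mul φH x y } with hE
    refine ⟨GenT DD K rdel,
      FreeGroupBasis.ofRepr ((Φauto DD K rdel q q').trans E).symm, gY DD K rdel, ?_⟩
    apply Subtype.ext
    show (((((Φauto DD K rdel q q').trans E).symm).symm (FreeGroup.of (gY DD K rdel))
      : MulAction.stabilizer F2 (v0 DD K)) : F2) = _
    rw [MulEquiv.symm_symm]
    show ((E ((Φauto DD K rdel q q') (FreeGroup.of (gY DD K rdel)))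
      : MulAction.stabilizer F2 (v0 DD K)) : F2) = _
    rw [Φ_gY]
    have : ∀ w, ((E w : MulAction.stabilizer F2 (v0 DD K)) : F2) = φc DD K tt rdel w :=
      fun w => hcoe w
    rw [this, word_eval DD K tt rdel htt hrdel q q']

end Constr

theorem dPrim_anbt_le (n t d d' : ℕ) (hn : 1 ≤ n) (ht : 1 ≤ t)
    (hd : 2 ≤ d) (hd' : 2 ≤ d') (hdn : ¬ d ∣ n) (hd't : ¬ d' ∣ t)
    (hdle : d ≤ n) (hd'le : d' ≤ t) :
    dSimp (a ^ n * b ^ t) ≤ dPrim (a ^ n * b ^ t) ∧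
      dPrim (a ^ n * b ^ t) ≤ d + d' - 2 := by
  classical
  have hd0 : 0 < d := by omega
  have hd'0 : 0 < d' := by omega
  have hmd : n % d ≠ 0 := fun h => hdn (Nat.dvd_of_mod_eq_zero h)
  have hmd' : t % d' ≠ 0 := fun h => hd't (Nat.dvd_of_mod_eq_zero h)
  have hmdlt : n % d < d := Nat.mod_lt _ hd0
  have hmd'lt : t % d' < d' := Nat.mod_lt _ hd'0
  obtain ⟨H, hidx, hg, hprim⟩ := Constr.construction (d-2) (d'-2) (t % d' - 1)
    (d - n % d - 1) (n / d) (t / d') (by omega) (by omega)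
  have hdiv : n = n / d * d + n % d := by
    rw [Nat.mul_comm]; exact (Nat.div_add_mod n d).symm
  have hdiv' : t = t / d' * d' + t % d' := by
    rw [Nat.mul_comm]; exact (Nat.div_add_mod t d').symm
  have e1 : n / d * ((d-2)+2) + ((d-2)+1-(d - n % d - 1)) = n := by
    rw [show (d-2)+2 = d by omega]
    omega
  have e2 : t / d' * ((d'-2)+2) + ((t % d' - 1)+1) = t := by
    rw [show (d'-2)+2 = d' by omega]
    omega
  have hg' : a ^ n * b ^ t ∈ H := by rw [← e1, ← e2]; exact hg
  have hsub : (⟨a ^ (n / d * ((d-2)+2) + ((d-2)+1-(d - n % d - 1)))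
      * b ^ (t / d' * ((d'-2)+2) + ((t % d' - 1)+1)), hg⟩ : H) = ⟨a ^ n * b ^ t, hg'⟩ :=
    Subtype.ext (by
      show a ^ (n / d * ((d-2)+2) + ((d-2)+1-(d - n % d - 1)))
          * b ^ (t / d' * ((d'-2)+2) + ((t % d' - 1)+1)) = a ^ n * b ^ t
      rw [e1, e2])
  rw [hsub] at hprim
  have hmem : (d + d' - 2) ∈ {k : ℕ | 0 < k ∧ ∃ H : Subgroup F2, H.index = k ∧
      ∃ hh : a ^ n * b ^ t ∈ H, Primitive (⟨a ^ n * b ^ t, hh⟩ : H)} :=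
    ⟨by omega, H, by rw [hidx]; omega, hg', hprim⟩
  constructor
  · have hne : {k : ℕ | 0 < k ∧ ∃ H : Subgroup F2, H.index = k ∧
        ∃ hh : a ^ n * b ^ t ∈ H, Primitive (⟨a ^ n * b ^ t, hh⟩ : H)}.Nonempty :=
      ⟨_, hmem⟩
    have hk := Nat.sInf_mem hne
    obtain ⟨hpos, H1, hidx1, hg1, hprim1⟩ := hk
    obtain ⟨ι, bas, i, hbi⟩ := hprim1
    obtain ⟨j, hj⟩ := Aux.exists_second H1 (by rw [hidx1]; omega) bas i
    have hs := Aux.simple_of_basis bas i j hj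
    rw [hbi] at hs
    exact Nat.sInf_le ⟨hpos, H1, hidx1, hg1, hs⟩
  · exact Nat.sInf_le hmem
end
end
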